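/- arXiv:0805.3888 — 7 statements merged into one kernel-verified Lean document; each statement's English description precedes it below -/
import Mathlib

section
/- For every z ∈ ℂ with z ≠ 0, G is twice real-Fréchet differentiable at z, and there exists a constant C₁ > 0 (depending only on C₀, α₁, α₂) such that the operator norm of the second derivative satisfies ‖D²G(z)‖ ≤ C₁(|z|^{α₁} + |z|^{α₂}) for all z ∈ ℂ, z ≠ 0. -/
namespace GEqvAux


lemma hasFDerivAt_norm_complex {z : ℂ} (hz : z ≠ 0) :
    HasFDerivAt (fun w : ℂ => ‖w‖) ((‖z‖⁻¹ : ℝ) • innerSL ℝ z) z := by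
  have hz' : (0:ℝ) < ‖z‖ := norm_pos_iff.mpr hz
  have h1 : HasFDerivAt (fun w : ℂ => ‖w‖ ^ 2) (2 • (innerSL ℝ z)) z := by
    simpa using (hasFDerivAt_id z).norm_sq
  have h2 := (Real.hasDerivAt_sqrt (by positivity : ‖z‖^2 ≠ 0)).comp_hasFDerivAt z h1
  have hfun : (fun w : ℂ => Real.sqrt (‖w‖^2)) = fun w : ℂ => ‖w‖ :=
    funext fun w => Real.sqrt_sq (norm_nonneg w)
  rw [Function.comp_def, hfun] at h2
  refine h2.congr_fderiv (Eq.symm ?_)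
  rw [Real.sqrt_sq hz'.le]
  ext w
  simp only [ContinuousLinearMap.smul_apply, smul_eq_mul, two_smul,
    ContinuousLinearMap.add_apply]
  field_simp
  ring

noncomputable def Amap (g : ℝ → ℝ) (z : ℂ) : ℂ →L[ℝ] ℂ :=
  (g ‖z‖ / ‖z‖) • ContinuousLinearMap.id ℝ ℂ +
    (deriv g ‖z‖ / ‖z‖^2 - g ‖z‖ / ‖z‖^3) • ((innerSL ℝ z).smulRight z)

lemma keyA {g : ℝ → ℝ} (hgd : Differentiable ℝ g) {z : ℂ} (hz : z ≠ 0) :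
    HasFDerivAt (fun w : ℂ => (g ‖w‖ / ‖w‖) • w) (Amap g z) z := by
  have hr : (0:ℝ) < ‖z‖ := norm_pos_iff.mpr hz
  have hN := hasFDerivAt_norm_complex hz
  have ha : HasDerivAt (fun r : ℝ => g r / r)
      ((deriv g ‖z‖ * ‖z‖ - g ‖z‖ * 1) / ‖z‖ ^ 2) ‖z‖ :=
    (hgd ‖z‖).hasDerivAt.div (hasDerivAt_id _) hr.ne'
  have hs : HasFDerivAt (fun w : ℂ => g ‖w‖ / ‖w‖)
      (((deriv g ‖z‖ * ‖z‖ - g ‖z‖ * 1) / ‖z‖ ^ 2) • ((‖z‖⁻¹ : ℝ) • innerSL ℝ z)) z :=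
    ha.comp_hasFDerivAt z hN
  have hF := hs.smul (hasFDerivAt_id z)
  refine hF.congr_fderiv (Eq.symm ?_)
  ext w
  simp only [Amap, ContinuousLinearMap.add_apply, ContinuousLinearMap.smul_apply,
    ContinuousLinearMap.id_apply, ContinuousLinearMap.smulRight_apply,
    ContinuousLinearMap.coe_smul', Pi.smul_apply, smul_eq_mul]
  rw [id_eq]
  have hb : deriv g ‖z‖ / ‖z‖^2 - g ‖z‖ / ‖z‖^3
      = (deriv g ‖z‖ * ‖z‖ - g ‖z‖ * 1) / ‖z‖^2 * ‖z‖⁻¹ := by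
    have hne : ‖z‖ ≠ 0 := hr.ne'
    field_simp [hne]
  rw [hb, smul_smul, mul_assoc]

set_option maxHeartbeats 2000000 in
set_option synthInstance.maxHeartbeats 400000 in
lemma keyB {g : ℝ → ℝ} (hgd : Differentiable ℝ g) (hg'd : Differentiable ℝ (deriv g))
    {z : ℂ} (hz : z ≠ 0) :
    ∃ B : ℂ →L[ℝ] ℂ →L[ℝ] ℂ, HasFDerivAt (Amap g) B z ∧
      ‖B‖ ≤ |deriv (deriv g) ‖z‖| + 6 * (|deriv g ‖z‖| / ‖z‖) + 6 * (|g ‖z‖| / ‖z‖^2) := by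
  have hr : (0:ℝ) < ‖z‖ := norm_pos_iff.mpr hz
  set r : ℝ := ‖z‖ with hrdef
  set N : ℂ →L[ℝ] ℝ := (r⁻¹ : ℝ) • innerSL ℝ z with hNdef
  have hN : HasFDerivAt (fun w : ℂ => ‖w‖) N z := hasFDerivAt_norm_complex hz
  have hNnorm : ‖N‖ = 1 := by
    rw [hNdef]
    rw [norm_smul (r⁻¹) ((innerSL ℝ) z), innerSL_apply_norm, Real.norm_eq_abs,
      abs_of_pos (inv_pos.mpr hr), inv_mul_cancel₀ hr.ne']
  -- piece 1
  have ha : HasDerivAt (fun s : ℝ => g s / s)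
      ((deriv g r * r - g r * 1) / r ^ 2) r :=
    (hgd r).hasDerivAt.div (hasDerivAt_id _) hr.ne'
  have hs1 : HasFDerivAt (fun w : ℂ => g ‖w‖ / ‖w‖)
      (((deriv g r * r - g r * 1) / r ^ 2) • N) z := by
      have := ha.comp_hasFDerivAt z hN
      exact this
  have h1 := hs1.smul (hasFDerivAt_const (ContinuousLinearMap.id ℝ ℂ) z)
  -- piece 2 scalar
  have hb1 : HasDerivAt (fun s : ℝ => deriv g s / s ^ 2)
      ((deriv (deriv g) r * r ^ 2 - deriv g r * (↑2 * r ^ 1)) / (r ^ 2) ^ 2) r :=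
    (hg'd r).hasDerivAt.div (hasDerivAt_pow 2 r) (pow_ne_zero _ hr.ne')
  have hb2 : HasDerivAt (fun s : ℝ => g s / s ^ 3)
      ((deriv g r * r ^ 3 - g r * (↑3 * r ^ 2)) / (r ^ 3) ^ 2) r :=
    (hgd r).hasDerivAt.div (hasDerivAt_pow 3 r) (pow_ne_zero _ hr.ne')
  have hb := hb1.sub hb2
  have hs2 : HasFDerivAt (fun w : ℂ => deriv g ‖w‖ / ‖w‖ ^ 2 - g ‖w‖ / ‖w‖ ^ 3)
      (((deriv (deriv g) r * r ^ 2 - deriv g r * (↑2 * r ^ 1)) / (r ^ 2) ^ 2 -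
        (deriv g r * r ^ 3 - g r * (↑3 * r ^ 2)) / (r ^ 3) ^ 2) • N) z :=
    by have := hb.comp_hasFDerivAt z hN; exact this
  -- T
  have hP : HasFDerivAt (fun w : ℂ => ((innerSL ℝ w : ℂ →L[ℝ] ℝ), w))
      ((innerSL ℝ (E := ℂ)).prod (ContinuousLinearMap.id ℝ ℂ)) z :=
    ((innerSL ℝ (E := ℂ)).prod (ContinuousLinearMap.id ℝ ℂ)).hasFDerivAt
  have hT0 := HasFDerivAt.comp (f := fun w : ℂ => ((innerSL ℝ w : ℂ →L[ℝ] ℝ), w)) z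
      ((isBoundedBilinearMap_smulRight (𝕜 := ℝ) (E := ℂ) (F := ℂ)).hasFDerivAt
        (innerSL ℝ z, z)) hP
  have hT : HasFDerivAt (fun w : ℂ => (innerSL ℝ w).smulRight w)
      (((isBoundedBilinearMap_smulRight (𝕜 := ℝ) (E := ℂ) (F := ℂ)).deriv
          (innerSL ℝ z, z)).comp
        ((innerSL ℝ (E := ℂ)).prod (ContinuousLinearMap.id ℝ ℂ))) z := hT0
  have h2 := hs2.smul hT
  have hAd := h1.add h2
  refine ⟨_, hAd, ?_⟩
  set G0 : ℝ := |g r| with hG0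
  set G1 : ℝ := |deriv g r| with hG1
  set G2 : ℝ := |deriv (deriv g) r| with hG2
  set c₁ : ℝ := (deriv g r * r - g r * 1) / r ^ 2 with hc₁
  set bb : ℝ := deriv g ‖z‖ / ‖z‖ ^ 2 - g ‖z‖ / ‖z‖ ^ 3 with hbb
  set c₂ : ℝ := (deriv (deriv g) r * r ^ 2 - deriv g r * (↑2 * r ^ 1)) / (r ^ 2) ^ 2 -
      (deriv g r * r ^ 3 - g r * (↑3 * r ^ 2)) / (r ^ 3) ^ 2 with hc₂
  have habs : ∀ x y : ℝ, |x - y| ≤ |x| + |y| := fun x y => by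
    rw [sub_eq_add_neg]
    exact (abs_add_le _ _).trans (by rw [abs_neg])
  have e1 : |c₁| ≤ G1 / r + G0 / r ^ 2 := by
    have h : |deriv g r * r - g r * 1| ≤ G1 * r + G0 := by
      refine (habs _ _).trans ?_
      rw [abs_mul, abs_mul, abs_one, mul_one, abs_of_pos hr]
    calc |c₁| = |deriv g r * r - g r * 1| / r ^ 2 := by
          rw [hc₁, abs_div, abs_of_pos (pow_pos hr 2)]
      _ ≤ (G1 * r + G0) / r ^ 2 := by gcongr
      _ = G1 / r + G0 / r ^ 2 := by field_simp [hr.ne']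
  have e2 : |bb| ≤ G1 / r ^ 2 + G0 / r ^ 3 := by
    refine (habs _ _).trans ?_
    rw [abs_div, abs_div, abs_of_pos (pow_pos hr 2), abs_of_pos (pow_pos hr 3)]
  have e3 : |c₂| ≤ G2 / r ^ 2 + 3 * G1 / r ^ 3 + 3 * G0 / r ^ 4 := by
    have hA : |(deriv (deriv g) r * r ^ 2 - deriv g r * (↑2 * r ^ 1)) / (r ^ 2) ^ 2|
        ≤ G2 / r ^ 2 + 2 * G1 / r ^ 3 := by
      have h : |deriv (deriv g) r * r ^ 2 - deriv g r * (↑2 * r ^ 1)|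
          ≤ G2 * r ^ 2 + G1 * (2 * r ^ 1) := by
        refine (habs _ _).trans ?_
        rw [abs_mul, abs_mul, abs_of_pos (pow_pos hr 2),
          abs_of_pos (by positivity : (0:ℝ) < 2 * r ^ 1)]
      calc |(deriv (deriv g) r * r ^ 2 - deriv g r * (↑2 * r ^ 1)) / (r ^ 2) ^ 2|
          = |deriv (deriv g) r * r ^ 2 - deriv g r * (↑2 * r ^ 1)| / (r ^ 2) ^ 2 := by
            rw [abs_div, abs_of_pos (pow_pos (pow_pos hr 2) 2)]
        _ ≤ (G2 * r ^ 2 + G1 * (2 * r ^ 1)) / (r ^ 2) ^ 2 := by gcongr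
        _ = G2 / r ^ 2 + 2 * G1 / r ^ 3 := by field_simp [hr.ne']
    have hB : |(deriv g r * r ^ 3 - g r * (↑3 * r ^ 2)) / (r ^ 3) ^ 2|
        ≤ G1 / r ^ 3 + 3 * G0 / r ^ 4 := by
      have h : |deriv g r * r ^ 3 - g r * (↑3 * r ^ 2)|
          ≤ G1 * r ^ 3 + G0 * (3 * r ^ 2) := by
        refine (habs _ _).trans ?_
        rw [abs_mul, abs_mul, abs_of_pos (pow_pos hr 3),
          abs_of_pos (mul_pos (by norm_num : (0:ℝ) < 3) (pow_pos hr 2))]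
      calc |(deriv g r * r ^ 3 - g r * (↑3 * r ^ 2)) / (r ^ 3) ^ 2|
          = |deriv g r * r ^ 3 - g r * (↑3 * r ^ 2)| / (r ^ 3) ^ 2 := by
            rw [abs_div, abs_of_pos (pow_pos (pow_pos hr 3) 2)]
        _ ≤ (G1 * r ^ 3 + G0 * (3 * r ^ 2)) / (r ^ 3) ^ 2 := by gcongr
        _ = G1 / r ^ 3 + 3 * G0 / r ^ 4 := by field_simp [hr.ne']
    calc |c₂| ≤ |(deriv (deriv g) r * r ^ 2 - deriv g r * (↑2 * r ^ 1)) / (r ^ 2) ^ 2|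
          + |(deriv g r * r ^ 3 - g r * (↑3 * r ^ 2)) / (r ^ 3) ^ 2| := habs _ _
      _ ≤ (G2 / r ^ 2 + 2 * G1 / r ^ 3) + (G1 / r ^ 3 + 3 * G0 / r ^ 4) := add_le_add hA hB
      _ = G2 / r ^ 2 + 3 * G1 / r ^ 3 + 3 * G0 / r ^ 4 := by field_simp [hr.ne']; ring
  -- operator norm facts
  have hsmulN : ∀ c : ℝ, ‖c • N‖ = |c| := fun c => by
    rw [norm_smul c N, hNnorm, mul_one, Real.norm_eq_abs]
  have hTz : ‖(innerSL ℝ z).smulRight z‖ = r * r := by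
    rw [ContinuousLinearMap.norm_smulRight_apply, innerSL_apply_norm]
  set TD := ((isBoundedBilinearMap_smulRight (𝕜 := ℝ) (E := ℂ) (F := ℂ)).deriv
      (innerSL ℝ z, z)).comp ((innerSL ℝ (E := ℂ)).prod (ContinuousLinearMap.id ℝ ℂ)) with hTDdef
  have hTD : ‖TD‖ ≤ 2 * r := by
    refine ContinuousLinearMap.opNorm_le_bound _ (mul_nonneg (by norm_num) hr.le) fun w => ?_
    rw [hTDdef, ContinuousLinearMap.comp_apply]
    simp only [ContinuousLinearMap.prod_apply, ContinuousLinearMap.coe_id, id_eq,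
      IsBoundedBilinearMap.deriv_apply]
    calc ‖((innerSL ℝ) z).smulRight w + ((innerSL ℝ) w).smulRight z‖
        ≤ ‖((innerSL ℝ) z).smulRight w‖ + ‖((innerSL ℝ) w).smulRight z‖ := norm_add_le _ _
      _ = r * ‖w‖ + ‖w‖ * r := by
          rw [ContinuousLinearMap.norm_smulRight_apply, ContinuousLinearMap.norm_smulRight_apply,
            innerSL_apply_norm, innerSL_apply_norm]
      _ = 2 * r * ‖w‖ := by ring
  have p1 : ‖(g ‖z‖ / ‖z‖) • (0 : ℂ →L[ℝ] ℂ →L[ℝ] ℂ)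
      + (c₁ • N).smulRight (ContinuousLinearMap.id ℝ ℂ)‖ ≤ |c₁| := by
    have h0 : (g ‖z‖ / ‖z‖) • (0 : ℂ →L[ℝ] ℂ →L[ℝ] ℂ)
        + (c₁ • N).smulRight (ContinuousLinearMap.id ℝ ℂ)
        = (c₁ • N).smulRight (ContinuousLinearMap.id ℝ ℂ) := by ext w; simp
    rw [h0, ContinuousLinearMap.norm_smulRight_apply, hsmulN]
    calc |c₁| * ‖ContinuousLinearMap.id ℝ ℂ‖ ≤ |c₁| * 1 :=
          mul_le_mul_of_nonneg_left ContinuousLinearMap.norm_id_le (abs_nonneg _)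
      _ = |c₁| := mul_one _
  have p2 : ‖bb • TD + (c₂ • N).smulRight ((innerSL ℝ z).smulRight z)‖
      ≤ |bb| * (2 * r) + |c₂| * (r * r) := by
    refine (norm_add_le _ _).trans (add_le_add ?_ ?_)
    · rw [norm_smul bb TD, Real.norm_eq_abs]
      gcongr
    · rw [ContinuousLinearMap.norm_smulRight_apply, hsmulN, hTz]
  calc ‖((g ‖z‖ / ‖z‖) • (0 : ℂ →L[ℝ] ℂ →L[ℝ] ℂ)
          + (c₁ • N).smulRight (ContinuousLinearMap.id ℝ ℂ))
        + (bb • TD + (c₂ • N).smulRight ((innerSL ℝ z).smulRight z))‖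
      ≤ |c₁| + (|bb| * (2 * r) + |c₂| * (r * r)) :=
        (norm_add_le _ _).trans (add_le_add p1 p2)
    _ ≤ (G1 / r + G0 / r ^ 2) + ((G1 / r ^ 2 + G0 / r ^ 3) * (2 * r)
          + (G2 / r ^ 2 + 3 * G1 / r ^ 3 + 3 * G0 / r ^ 4) * (r * r)) := by
        gcongr <;>
          first
          | exact abs_nonneg _
          | exact mul_nonneg (by norm_num) hr.le
          | exact mul_nonneg hr.le hr.le
          | positivity
    _ = G2 + 6 * (G1 / r) + 6 * (G0 / r ^ 2) := by field_simp [hr.ne']; ring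

end GEqvAux



/-- The gauge-equivariant extension `G` of `g` is twice real-Fréchet
differentiable at every `z ≠ 0`, and there is `C₁ > 0` with
`‖D²G(z)‖ ≤ C₁(|z|^α₁ + |z|^α₂)` for all `z ≠ 0`. -/
theorem stmt_1 (α₁ α₂ C₀ : ℝ) (hα₁ : 1/2 < α₁) (hα : α₁ ≤ α₂) (hC₀ : 0 < C₀)
    (g : ℝ → ℝ) (hg : ContDiff ℝ 2 g) (hodd : ∀ s : ℝ, g (-s) = -g s)
    (hg0 : g 0 = 0) (hg'0 : deriv g 0 = 0)
    (hg'' : ∀ s : ℝ, |deriv (deriv g) s| ≤ C₀ * (|s| ^ α₁ + |s| ^ α₂))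
    (G : ℂ → ℂ) (hG0 : G 0 = 0)
    (hGdef : ∀ z : ℂ, z ≠ 0 → G z = (z / (‖z‖ : ℂ)) * (g (‖z‖) : ℂ)) :
    (∀ z : ℂ, z ≠ 0 → DifferentiableAt ℝ G z ∧ DifferentiableAt ℝ (fderiv ℝ G) z) ∧
    ∃ C₁ > 0, ∀ z : ℂ, z ≠ 0 →
      ‖fderiv ℝ (fderiv ℝ G) z‖ ≤ C₁ * (‖z‖ ^ α₁ + ‖z‖ ^ α₂) := by
  have hgd : Differentiable ℝ g := hg.differentiable (by norm_num)
  have hg'd : Differentiable ℝ (deriv g) := by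
    have h : ContDiff ℝ ((1 : ℕ) + 1) g := by exact_mod_cast hg
    rw [contDiff_succ_iff_deriv] at h
    exact h.2.2.differentiable (by norm_num)
  have hα₂ : (0:ℝ) < α₂ := by linarith
  -- first order bound from MVT
  have key1 : ∀ r : ℝ, 0 < r → |deriv g r| ≤ C₀ * (r ^ α₁ + r ^ α₂) * r := by
    intro r hr
    have hbound : ∀ x ∈ Set.Icc (0:ℝ) r, ‖deriv (deriv g) x‖ ≤ C₀ * (r ^ α₁ + r ^ α₂) := by
      intro x hx
      rw [Real.norm_eq_abs]
      refine (hg'' x).trans ?_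
      have h1 : |x| ^ α₁ ≤ r ^ α₁ := by
        rw [abs_of_nonneg hx.1]; exact Real.rpow_le_rpow hx.1 hx.2 (by linarith)
      have h2 : |x| ^ α₂ ≤ r ^ α₂ := by
        rw [abs_of_nonneg hx.1]; exact Real.rpow_le_rpow hx.1 hx.2 hα₂.le
      exact mul_le_mul_of_nonneg_left (by linarith) hC₀.le
    have hmvt := (convex_Icc (0:ℝ) r).norm_image_sub_le_of_norm_hasDerivWithin_le
      (fun x _ => (hg'd x).hasDerivAt.hasDerivWithinAt) hbound
      (Set.left_mem_Icc.mpr hr.le) (Set.right_mem_Icc.mpr hr.le)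
    rw [hg'0, sub_zero, sub_zero, Real.norm_eq_abs, Real.norm_eq_abs, abs_of_pos hr] at hmvt
    exact hmvt
  -- zeroth order bound from MVT
  have key0 : ∀ r : ℝ, 0 < r → |g r| ≤ C₀ * (r ^ α₁ + r ^ α₂) * r ^ 2 := by
    intro r hr
    have hRnn : (0:ℝ) ≤ C₀ * (r ^ α₁ + r ^ α₂) :=
      mul_nonneg hC₀.le (add_nonneg (Real.rpow_nonneg hr.le _) (Real.rpow_nonneg hr.le _))
    have hbound : ∀ x ∈ Set.Icc (0:ℝ) r, ‖deriv g x‖ ≤ C₀ * (r ^ α₁ + r ^ α₂) * r := by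
      intro x hx
      rw [Real.norm_eq_abs]
      rcases eq_or_lt_of_le hx.1 with h0 | h0
      · rw [← h0, hg'0, abs_zero]
        exact mul_nonneg hRnn hr.le
      · refine (key1 x h0).trans ?_
        have h1 : x ^ α₁ ≤ r ^ α₁ := Real.rpow_le_rpow h0.le hx.2 (by linarith)
        have h2 : x ^ α₂ ≤ r ^ α₂ := Real.rpow_le_rpow h0.le hx.2 hα₂.le
        exact mul_le_mul (mul_le_mul_of_nonneg_left (by linarith) hC₀.le) hx.2 h0.le hRnn
    have hmvt := (convex_Icc (0:ℝ) r).norm_image_sub_le_of_norm_hasDerivWithin_le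
      (fun x _ => (hgd x).hasDerivAt.hasDerivWithinAt) hbound
      (Set.left_mem_Icc.mpr hr.le) (Set.right_mem_Icc.mpr hr.le)
    rw [hg0, sub_zero, sub_zero, Real.norm_eq_abs, Real.norm_eq_abs, abs_of_pos hr] at hmvt
    calc |g r| ≤ C₀ * (r ^ α₁ + r ^ α₂) * r * r := hmvt
      _ = C₀ * (r ^ α₁ + r ^ α₂) * r ^ 2 := by ring
  -- first derivative of G
  have hGA : ∀ z : ℂ, z ≠ 0 → HasFDerivAt G (GEqvAux.Amap g z) z := by
    intro z hz
    refine (GEqvAux.keyA hgd hz).congr_of_eventuallyEq ?_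
    filter_upwards [eventually_ne_nhds hz] with w hw
    rw [hGdef w hw, Complex.real_smul, Complex.ofReal_div]
    ring
  -- second derivative of G
  have hGB : ∀ z : ℂ, z ≠ 0 → ∃ B : ℂ →L[ℝ] ℂ →L[ℝ] ℂ,
      HasFDerivAt (fderiv ℝ G) B z ∧
      ‖B‖ ≤ |deriv (deriv g) ‖z‖| + 6 * (|deriv g ‖z‖| / ‖z‖) + 6 * (|g ‖z‖| / ‖z‖ ^ 2) := by
    intro z hz
    obtain ⟨B, hB, hBn⟩ := GEqvAux.keyB hgd hg'd hz
    refine ⟨B, hB.congr_of_eventuallyEq ?_, hBn⟩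
    filter_upwards [eventually_ne_nhds hz] with w hw
    exact (hGA w hw).fderiv
  refine ⟨fun z hz => ⟨(hGA z hz).differentiableAt,
      ((hGB z hz).choose_spec.1).differentiableAt⟩,
    13 * C₀, mul_pos (by norm_num) hC₀, fun z hz => ?_⟩
  obtain ⟨B, hB, hBn⟩ := hGB z hz
  rw [hB.fderiv]
  have hr : (0:ℝ) < ‖z‖ := norm_pos_iff.mpr hz
  have e2 := hg'' ‖z‖
  rw [abs_of_pos hr] at e2
  have e1 : |deriv g ‖z‖| / ‖z‖ ≤ C₀ * (‖z‖ ^ α₁ + ‖z‖ ^ α₂) := by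
    rw [div_le_iff₀ hr]; exact key1 _ hr
  have e0 : |g ‖z‖| / ‖z‖ ^ 2 ≤ C₀ * (‖z‖ ^ α₁ + ‖z‖ ^ α₂) := by
    rw [div_le_iff₀ (pow_pos hr 2)]; exact key0 _ hr
  refine hBn.trans ?_
  nlinarith [e0, e1, e2]
end

section
/- There exists a constant C > 0 (depending only on C₀, α₁, α₂) such that for every a ∈ ℂ with a ≠ 0 and every w ∈ ℂ, the real Fréchet derivative of G satisfies |DG(a)[w]| ≤ C(|a|^{1+α₁} + |a|^{1+α₂})·|w|. -/
open Real Set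

lemma mvt_bound {f f' : ℝ → ℝ} (hf : ∀ x, HasDerivAt f (f' x) x) (hf0 : f 0 = 0)
    {r M : ℝ} (hr : 0 ≤ r) (hM : ∀ x, |x| ≤ r → |f' x| ≤ M) :
    ∀ s, |s| ≤ r → |f s| ≤ M * r := by
  intro s hs
  have h0 : (0:ℝ) ∈ Icc (-r) r := by constructor <;> linarith
  have hsmem : s ∈ Icc (-r) r := abs_le.mp hs
  have key := Convex.norm_image_sub_le_of_norm_hasDerivWithin_le
    (f := f) (f' := f') (s := Icc (-r) r) (C := M)
    (fun x _ => (hf x).hasDerivWithinAt)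
    (fun x hx => hM x (abs_le.mpr hx)) (convex_Icc _ _) h0 hsmem
  simp only [hf0, sub_zero, Real.norm_eq_abs] at key
  have hM0 : 0 ≤ M := le_trans (abs_nonneg _) (hM 0 (by simpa using hr))
  calc |f s| ≤ M * |s| := key
    _ ≤ M * r := mul_le_mul_of_nonneg_left hs hM0

/-- There is `C > 0` such that for every `a ≠ 0` (where `G` is real-Fréchet
differentiable) and every `w`, `|DG(a)[w]| ≤ C(|a|^(1+α₁) + |a|^(1+α₂))·|w|`. -/
theorem stmt_4 (α₁ α₂ C₀ : ℝ) (hα₁ : 1/2 < α₁) (hα : α₁ ≤ α₂) (hC₀ : 0 < C₀)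
    (g : ℝ → ℝ) (hg : ContDiff ℝ 2 g) (hodd : ∀ s : ℝ, g (-s) = -g s)
    (hg0 : g 0 = 0) (hg'0 : deriv g 0 = 0)
    (hg'' : ∀ s : ℝ, |deriv (deriv g) s| ≤ C₀ * (|s| ^ α₁ + |s| ^ α₂))
    (G : ℂ → ℂ) (hG0 : G 0 = 0)
    (hGdef : ∀ z : ℂ, z ≠ 0 → G z = (z / ((‖z‖ : ℝ) : ℂ)) * (g ‖z‖ : ℂ)) :
    ∃ C > 0, ∀ a : ℂ, a ≠ 0 →
      DifferentiableAt ℝ G a ∧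
      ∀ w : ℂ, ‖fderiv ℝ G a w‖
        ≤ C * (‖a‖ ^ (1 + α₁) + ‖a‖ ^ (1 + α₂)) * ‖w‖ := by
  have hα₁0 : 0 < α₁ := by linarith
  have hα₂0 : 0 < α₂ := by linarith
  have hgdiff : Differentiable ℝ g := hg.differentiable (by norm_num)
  have hg1 : ContDiff ℝ 1 (deriv g) := by
    have h2 : ContDiff ℝ ((1 : ℕ) + 1) g := by exact_mod_cast hg
    exact (contDiff_succ_iff_deriv.mp h2).2.2
  have hg'diff : Differentiable ℝ (deriv g) := hg1.differentiable one_ne_zero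
  have key : ∀ r : ℝ, 0 < r →
      |deriv g r| ≤ C₀ * (r ^ α₁ + r ^ α₂) * r ∧ |g r| ≤ C₀ * (r ^ α₁ + r ^ α₂) * r * r := by
    intro r hr
    have hr0 : (0:ℝ) ≤ r := hr.le
    have hM : ∀ x, |x| ≤ r → |deriv (deriv g) x| ≤ C₀ * (r ^ α₁ + r ^ α₂) := by
      intro x hx
      refine (hg'' x).trans ?_
      have h1 : |x| ^ α₁ ≤ r ^ α₁ := Real.rpow_le_rpow (abs_nonneg x) hx hα₁0.le
      have h2 : |x| ^ α₂ ≤ r ^ α₂ := Real.rpow_le_rpow (abs_nonneg x) hx hα₂0.le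
      nlinarith
    have hb1 : ∀ s, |s| ≤ r → |deriv g s| ≤ C₀ * (r ^ α₁ + r ^ α₂) * r :=
      mvt_bound (fun x => (hg'diff x).hasDerivAt) hg'0 hr0 hM
    have hb2 : ∀ s, |s| ≤ r → |g s| ≤ C₀ * (r ^ α₁ + r ^ α₂) * r * r :=
      mvt_bound (fun x => (hgdiff x).hasDerivAt) hg0 hr0 hb1
    exact ⟨hb1 r (by rw [abs_of_nonneg hr0]), hb2 r (by rw [abs_of_nonneg hr0])⟩
  refine ⟨3 * C₀, by positivity, ?_⟩
  intro a ha
  set r : ℝ := ‖a‖ with hrdef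
  have hr : 0 < r := norm_pos_iff.mpr ha
  have hn : DifferentiableAt ℝ (fun z : ℂ => ‖z‖) a :=
    (contDiffAt_norm ℂ (n := 1) ha).differentiableAt one_ne_zero
  set N : ℂ →L[ℝ] ℝ := fderiv ℝ (fun z : ℂ => ‖z‖) a with hNdef
  have hN : HasFDerivAt (fun z : ℂ => ‖z‖) N a := hn.hasFDerivAt
  have hNle : ‖N‖ ≤ 1 := by
    have h := norm_fderiv_le_of_lipschitz ℝ (f := fun z : ℂ => ‖z‖) (x₀ := a)
      lipschitzWith_one_norm
    simpa using h
  have h1 : HasFDerivAt (fun z : ℂ => g ‖z‖) (deriv g r • N) a :=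
    HasDerivAt.comp_hasFDerivAt a ((hgdiff r).hasDerivAt) hN
  have h2 : HasFDerivAt (fun z : ℂ => (‖z‖)⁻¹) ((-(r^2)⁻¹) • N) a :=
    HasDerivAt.comp_hasFDerivAt a (hasDerivAt_inv hr.ne') hN
  have h3 : HasFDerivAt (fun z : ℂ => g ‖z‖ * (‖z‖)⁻¹)
      (g r • ((-(r^2)⁻¹) • N) + r⁻¹ • (deriv g r • N)) a := h1.mul h2
  have h4 : HasFDerivAt (fun z : ℂ => (g ‖z‖ * (‖z‖)⁻¹) • z)
      ((g r * r⁻¹) • ContinuousLinearMap.id ℝ ℂ +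
        (g r • ((-(r^2)⁻¹) • N) + r⁻¹ • (deriv g r • N)).smulRight a) a :=
    h3.smul (hasFDerivAt_id a)
  have hGeq : G = fun z : ℂ => (g ‖z‖ * (‖z‖)⁻¹) • z := by
    funext z
    by_cases hz : z = 0
    · simp [hz, hG0, hg0]
    · rw [hGdef z hz]
      have hz0 : (‖z‖ : ℝ) ≠ 0 := norm_ne_zero_iff.mpr hz
      have hz0' : ((‖z‖ : ℝ) : ℂ) ≠ 0 := by exact_mod_cast hz0
      rw [Complex.real_smul]
      push_cast
      field_simp
  have hG : HasFDerivAt G ((g r * r⁻¹) • ContinuousLinearMap.id ℝ ℂ +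
      (g r • ((-(r^2)⁻¹) • N) + r⁻¹ • (deriv g r • N)).smulRight a) a := by
    rw [hGeq]; exact h4
  refine ⟨hG.differentiableAt, ?_⟩
  intro w
  rw [hG.fderiv]
  obtain ⟨hb1, hb2⟩ := key r hr
  set B : ℝ := C₀ * (r ^ α₁ + r ^ α₂) with hBdef
  have hB0 : 0 ≤ B := by positivity
  have hNw : |N w| ≤ ‖w‖ := by
    calc |N w| = ‖N w‖ := rfl
      _ ≤ ‖N‖ * ‖w‖ := N.le_opNorm w
      _ ≤ 1 * ‖w‖ := by gcongr
      _ = ‖w‖ := one_mul _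
  have happ : ((g r * r⁻¹) • ContinuousLinearMap.id ℝ ℂ +
      (g r • ((-(r^2)⁻¹) • N) + r⁻¹ • (deriv g r • N)).smulRight a) w
      = (g r * r⁻¹) • w + ((g r * (-(r^2)⁻¹) * N w) + r⁻¹ * (deriv g r * N w)) • a := by
    simp only [ContinuousLinearMap.add_apply, ContinuousLinearMap.smul_apply,
      ContinuousLinearMap.smulRight_apply, ContinuousLinearMap.id_apply, smul_eq_mul]
    module
  rw [happ]
  have hnorm : ‖(g r * r⁻¹) • w + ((g r * (-(r^2)⁻¹) * N w) + r⁻¹ * (deriv g r * N w)) • a‖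
      ≤ |g r * r⁻¹| * ‖w‖ + (|g r| * (r^2)⁻¹ * |N w| + r⁻¹ * |deriv g r| * |N w|) * r := by
    refine (norm_add_le _ _).trans ?_
    rw [norm_smul, norm_smul, Real.norm_eq_abs, Real.norm_eq_abs, ← hrdef]
    have habs : |(g r * (-(r^2)⁻¹) * N w) + r⁻¹ * (deriv g r * N w)|
        ≤ |g r| * (r^2)⁻¹ * |N w| + r⁻¹ * |deriv g r| * |N w| := by
      calc |(g r * (-(r^2)⁻¹) * N w) + r⁻¹ * (deriv g r * N w)|
          ≤ |g r * (-(r^2)⁻¹) * N w| + |r⁻¹ * (deriv g r * N w)| := abs_add_le _ _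
        _ ≤ |g r| * (r^2)⁻¹ * |N w| + r⁻¹ * |deriv g r| * |N w| := by
            rw [abs_mul, abs_mul, abs_mul, abs_mul, abs_neg, abs_inv, abs_inv,
              abs_of_nonneg (by positivity : (0:ℝ) ≤ r^2), abs_of_nonneg hr.le]
            exact le_of_eq (by ring)
    exact add_le_add le_rfl (mul_le_mul_of_nonneg_right habs hr.le)
  refine hnorm.trans ?_
  have e1 : |g r * r⁻¹| ≤ B * r := by
    rw [abs_mul, abs_inv, abs_of_nonneg hr.le]
    calc |g r| * r⁻¹ ≤ (B * r * r) * r⁻¹ := by gcongr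
      _ = B * r := by field_simp
  have e2 : |g r| * (r^2)⁻¹ ≤ B := by
    calc |g r| * (r^2)⁻¹ ≤ (B * r * r) * (r^2)⁻¹ := by gcongr
      _ = B := by field_simp
  have e3 : r⁻¹ * |deriv g r| ≤ B := by
    calc r⁻¹ * |deriv g r| ≤ r⁻¹ * (B * r) := by gcongr
      _ = B := by field_simp
  have t1 : |g r * r⁻¹| * ‖w‖ ≤ B * r * ‖w‖ :=
    mul_le_mul_of_nonneg_right e1 (norm_nonneg w)
  have t2 : |g r| * (r^2)⁻¹ * |N w| ≤ B * ‖w‖ :=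
    mul_le_mul e2 hNw (abs_nonneg _) hB0
  have t3 : r⁻¹ * |deriv g r| * |N w| ≤ B * ‖w‖ :=
    mul_le_mul e3 hNw (abs_nonneg _) hB0
  have hfin : B * r = C₀ * (r ^ (1 + α₁) + r ^ (1 + α₂)) := by
    rw [hBdef, Real.rpow_add hr, Real.rpow_add hr, Real.rpow_one]
    ring
  calc |g r * r⁻¹| * ‖w‖ + (|g r| * (r^2)⁻¹ * |N w| + r⁻¹ * |deriv g r| * |N w|) * r
      ≤ B * r * ‖w‖ + (B * ‖w‖ + B * ‖w‖) * r := by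
        refine add_le_add t1 (mul_le_mul_of_nonneg_right (add_le_add t2 t3) hr.le)
    _ = 3 * (B * r) * ‖w‖ := by ring
    _ = 3 * C₀ * (r ^ (1 + α₁) + r ^ (1 + α₂)) * ‖w‖ := by rw [hfin]; ring
end

section
/- Define g₂(a, z) = G(a + z) − G(a) − DG(a)[z] for a, z ∈ ℂ. Then there exists a constant C > 0 (depending only on C₀, α₁, α₂) such that for all a, z ∈ ℂ: |g₂(a, z)| ≤ C(|a|^{α₁} + |a|^{α₂} + |z|^{α₁} + |z|^{α₂})·|z|². -/
open Real Set

namespace Stmt6Aux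

/-! ### The majorant function -/

noncomputable def Mb (C₀ α₁ α₂ r : ℝ) : ℝ := C₀ * (r ^ α₁ + r ^ α₂)

lemma Mb_nonneg {C₀ α₁ α₂ : ℝ} (hC₀ : 0 ≤ C₀) (r : ℝ) (hr : 0 ≤ r) :
    0 ≤ Mb C₀ α₁ α₂ r := by
  have := Real.rpow_nonneg hr α₁
  have := Real.rpow_nonneg hr α₂
  unfold Mb; positivity

lemma Mb_mono {C₀ α₁ α₂ : ℝ} (hC₀ : 0 ≤ C₀) (hα₁ : 0 ≤ α₁) (hα₂ : 0 ≤ α₂)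
    {x y : ℝ} (hx : 0 ≤ x) (hxy : x ≤ y) :
    Mb C₀ α₁ α₂ x ≤ Mb C₀ α₁ α₂ y := by
  unfold Mb
  have h1 := Real.rpow_le_rpow hx hxy hα₁
  have h2 := Real.rpow_le_rpow hx hxy hα₂
  nlinarith

lemma rpow_add_le {x y α : ℝ} (hx : 0 ≤ x) (hy : 0 ≤ y) (hα : 0 ≤ α) :
    (x + y) ^ α ≤ 2 ^ α * (x ^ α + y ^ α) := by
  have h2 : (0:ℝ) ≤ 2 ^ α := Real.rpow_nonneg (by norm_num) α
  rcases le_total x y with h | h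
  · calc (x + y) ^ α ≤ (2 * y) ^ α :=
        Real.rpow_le_rpow (by linarith) (by linarith) hα
      _ = 2 ^ α * y ^ α := Real.mul_rpow (by norm_num) hy
      _ ≤ 2 ^ α * (x ^ α + y ^ α) := by
          nlinarith [Real.rpow_nonneg hx α]
  · calc (x + y) ^ α ≤ (2 * x) ^ α :=
        Real.rpow_le_rpow (by linarith) (by linarith) hα
      _ = 2 ^ α * x ^ α := Real.mul_rpow (by norm_num) hx
      _ ≤ 2 ^ α * (x ^ α + y ^ α) := by
          nlinarith [Real.rpow_nonneg hy α]

lemma Mb_add_le {C₀ α₁ α₂ : ℝ} (hC₀ : 0 ≤ C₀) (hα₁ : 0 ≤ α₁) (hα : α₁ ≤ α₂)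
    {x y : ℝ} (hx : 0 ≤ x) (hy : 0 ≤ y) :
    Mb C₀ α₁ α₂ (x + y) ≤ 2 ^ α₂ * C₀ * (x ^ α₁ + x ^ α₂ + y ^ α₁ + y ^ α₂) := by
  have hα₂ : 0 ≤ α₂ := hα₁.trans hα
  have h1 := rpow_add_le hx hy hα₁
  have h2 := rpow_add_le hx hy hα₂
  have h3 : (2:ℝ) ^ α₁ ≤ 2 ^ α₂ := Real.rpow_le_rpow_of_exponent_le one_le_two hα
  have n1 := Real.rpow_nonneg hx α₁
  have n2 := Real.rpow_nonneg hx α₂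
  have n3 := Real.rpow_nonneg hy α₁
  have n4 := Real.rpow_nonneg hy α₂
  have h2p : (0:ℝ) ≤ 2 ^ α₂ := Real.rpow_nonneg (by norm_num) α₂
  unfold Mb
  nlinarith [mul_le_mul_of_nonneg_left h1 hC₀, mul_le_mul_of_nonneg_left h2 hC₀,
    mul_le_mul_of_nonneg_left (mul_le_mul_of_nonneg_right h3 (by linarith : 0 ≤ x ^ α₁ + y ^ α₁)) hC₀]

lemma Mb_three {C₀ α₁ α₂ : ℝ} (hC₀ : 0 ≤ C₀) (hα₁ : 0 ≤ α₁) (hα : α₁ ≤ α₂)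
    {y : ℝ} (hy : 0 ≤ y) :
    Mb C₀ α₁ α₂ (3 * y) ≤ 3 ^ α₂ * Mb C₀ α₁ α₂ y := by
  have hα₂ : 0 ≤ α₂ := hα₁.trans hα
  have h1 : (3 * y) ^ α₁ = 3 ^ α₁ * y ^ α₁ := Real.mul_rpow (by norm_num) hy
  have h2 : (3 * y) ^ α₂ = 3 ^ α₂ * y ^ α₂ := Real.mul_rpow (by norm_num) hy
  have h3 : (3:ℝ) ^ α₁ ≤ 3 ^ α₂ := Real.rpow_le_rpow_of_exponent_le (by norm_num) hα
  have n1 := Real.rpow_nonneg hy α₁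
  have n2 := Real.rpow_nonneg hy α₂
  unfold Mb
  rw [h1, h2]
  nlinarith [mul_le_mul_of_nonneg_left (mul_le_mul_of_nonneg_right h3 n1) hC₀]

/-! ### Bounds on `g` and its derivative -/

lemma deriv_g_bound {C₀ α₁ α₂ : ℝ} (hC₀ : 0 ≤ C₀) (hα₁ : 0 ≤ α₁) (hα₂ : 0 ≤ α₂)
    {g : ℝ → ℝ} (hg : ContDiff ℝ 2 g) (hg'0 : deriv g 0 = 0)
    (hg'' : ∀ s : ℝ, |deriv (deriv g) s| ≤ C₀ * (|s| ^ α₁ + |s| ^ α₂))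
    {r : ℝ} (hr : 0 ≤ r) : |deriv g r| ≤ Mb C₀ α₁ α₂ r * r := by
  have hg1 : ContDiff ℝ 1 (deriv g) := by
    have := (contDiff_succ_iff_deriv (n := 1)).mp (by exact_mod_cast hg)
    exact this.2.2
  have key := norm_image_sub_le_of_norm_deriv_le_segment'
    (f := deriv g) (f' := deriv (deriv g)) (a := 0) (b := r) (C := Mb C₀ α₁ α₂ r)
    (fun x hx => ((hg1.differentiable one_ne_zero x).hasDerivAt).hasDerivWithinAt)
    (fun x hx => by
      have := hg'' x
      have hx0 : 0 ≤ x := hx.1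
      have : |deriv (deriv g) x| ≤ Mb C₀ α₁ α₂ x := by
        rwa [abs_of_nonneg hx0] at this
      exact this.trans (Mb_mono hC₀ hα₁ hα₂ hx0 (le_of_lt hx.2)))
    r (right_mem_Icc.mpr hr)
  simpa [hg'0] using key

lemma g_bound {C₀ α₁ α₂ : ℝ} (hC₀ : 0 ≤ C₀) (hα₁ : 0 ≤ α₁) (hα₂ : 0 ≤ α₂)
    {g : ℝ → ℝ} (hg : ContDiff ℝ 2 g) (hg0 : g 0 = 0) (hg'0 : deriv g 0 = 0)
    (hg'' : ∀ s : ℝ, |deriv (deriv g) s| ≤ C₀ * (|s| ^ α₁ + |s| ^ α₂))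
    {r : ℝ} (hr : 0 ≤ r) : |g r| ≤ Mb C₀ α₁ α₂ r * r ^ 2 := by
  have key := norm_image_sub_le_of_norm_deriv_le_segment'
    (f := g) (f' := deriv g) (a := 0) (b := r) (C := Mb C₀ α₁ α₂ r * r)
    (fun x hx => ((hg.differentiable two_ne_zero x).hasDerivAt).hasDerivWithinAt)
    (fun x hx => by
      have h1 := deriv_g_bound hC₀ hα₁ hα₂ hg hg'0 hg'' hx.1
      have h2 : Mb C₀ α₁ α₂ x ≤ Mb C₀ α₁ α₂ r := Mb_mono hC₀ hα₁ hα₂ hx.1 hx.2.le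
      have hM := Mb_nonneg (α₁ := α₁) (α₂ := α₂) hC₀ x hx.1
      calc ‖deriv g x‖ ≤ Mb C₀ α₁ α₂ x * x := h1
        _ ≤ Mb C₀ α₁ α₂ r * r := by nlinarith [hx.1, hx.2.le])
    r (right_mem_Icc.mpr hr)
  have : |g r - g 0| ≤ Mb C₀ α₁ α₂ r * r * (r - 0) := key
  rw [hg0, sub_zero, sub_zero] at this
  calc |g r| ≤ Mb C₀ α₁ α₂ r * r * r := this
    _ = Mb C₀ α₁ α₂ r * r ^ 2 := by ring

/-! ### The profile function and its derivatives -/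

noncomputable def φ (g : ℝ → ℝ) (s : ℝ) : ℝ := g (Real.sqrt s) / Real.sqrt s

noncomputable def φd (g : ℝ → ℝ) (s : ℝ) : ℝ :=
  (deriv g (Real.sqrt s) * Real.sqrt s - g (Real.sqrt s)) / (2 * Real.sqrt s ^ 3)

noncomputable def φdd (g : ℝ → ℝ) (s : ℝ) : ℝ :=
  (deriv (deriv g) (Real.sqrt s) / (2 * Real.sqrt s ^ 2)
    - 3 * (deriv g (Real.sqrt s) * Real.sqrt s - g (Real.sqrt s)) / (2 * Real.sqrt s ^ 4))
    / (2 * Real.sqrt s)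

lemma hasDerivAt_φ {g : ℝ → ℝ} (hg : ContDiff ℝ 2 g) {s : ℝ} (hs : 0 < s) :
    HasDerivAt (φ g) (φd g s) s := by
  set r := Real.sqrt s with hrdef
  have hr : 0 < r := Real.sqrt_pos.mpr hs
  have hsr : r ^ 2 = s := Real.sq_sqrt hs.le
  have hsq : HasDerivAt Real.sqrt (1 / (2 * r)) s := Real.hasDerivAt_sqrt hs.ne'
  have hgd : HasDerivAt g (deriv g r) r :=
    ((hg.differentiable two_ne_zero) r).hasDerivAt
  have hnum : HasDerivAt (fun t => g (Real.sqrt t)) (deriv g r * (1 / (2 * r))) s :=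
    hgd.comp s hsq
  have h := hnum.div hsq hr.ne'
  refine h.congr_deriv ?_
  symm
  rw [φd, ← hsr]
  rw [show Real.sqrt (r ^ 2) = r from Real.sqrt_sq hr.le]
  field_simp

lemma hasDerivAt_φd {g : ℝ → ℝ} (hg : ContDiff ℝ 2 g) {s : ℝ} (hs : 0 < s) :
    HasDerivAt (φd g) (φdd g s) s := by
  set r := Real.sqrt s with hrdef
  have hr : 0 < r := Real.sqrt_pos.mpr hs
  have hsr : r ^ 2 = s := Real.sq_sqrt hs.le
  have hsq : HasDerivAt Real.sqrt (1 / (2 * r)) s := Real.hasDerivAt_sqrt hs.ne'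
  have hgd : HasDerivAt g (deriv g r) r :=
    ((hg.differentiable two_ne_zero) r).hasDerivAt
  have hg1 : ContDiff ℝ 1 (deriv g) :=
    ((contDiff_succ_iff_deriv (n := 1)).mp (by exact_mod_cast hg)).2.2
  have hgdd : HasDerivAt (deriv g) (deriv (deriv g) r) r :=
    ((hg1.differentiable one_ne_zero) r).hasDerivAt
  have h1 : HasDerivAt (fun t => deriv g (Real.sqrt t)) (deriv (deriv g) r * (1 / (2 * r))) s :=
    hgdd.comp s hsq
  have h2 : HasDerivAt (fun t => g (Real.sqrt t)) (deriv g r * (1 / (2 * r))) s :=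
    hgd.comp s hsq
  have hnum : HasDerivAt (fun t => deriv g (Real.sqrt t) * Real.sqrt t - g (Real.sqrt t))
      ((deriv (deriv g) r * (1 / (2 * r))) * r + deriv g r * (1 / (2 * r))
        - deriv g r * (1 / (2 * r))) s := (h1.mul hsq).sub h2
  have hden : HasDerivAt (fun t => 2 * Real.sqrt t ^ 3)
      (2 * (3 * r ^ 2 * (1 / (2 * r)))) s := by
    have := (hsq.pow 3).const_mul 2
    simpa [Nat.cast_ofNat] using this
  have hden0 : 2 * r ^ 3 ≠ 0 := by positivity
  have h := hnum.div hden hden0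
  refine h.congr_deriv ?_
  symm
  rw [φdd, ← hsr]
  rw [show Real.sqrt (r ^ 2) = r from Real.sqrt_sq hr.le]
  field_simp
  ring_nf

/-! ### Bounds on the profile function -/

lemma phi_bounds {C₀ α₁ α₂ : ℝ} {g : ℝ → ℝ} {s : ℝ}
    (hM0 : 0 ≤ Mb C₀ α₁ α₂ (Real.sqrt s))
    (hgb : |g (Real.sqrt s)| ≤ Mb C₀ α₁ α₂ (Real.sqrt s) * Real.sqrt s ^ 2)
    (hgd : |deriv g (Real.sqrt s)| ≤ Mb C₀ α₁ α₂ (Real.sqrt s) * Real.sqrt s)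
    (hgdd : |deriv (deriv g) (Real.sqrt s)| ≤ Mb C₀ α₁ α₂ (Real.sqrt s))
    (hs : 0 < s) :
    |φ g s| ≤ Mb C₀ α₁ α₂ (Real.sqrt s) * Real.sqrt s ∧
    |φd g s| ≤ Mb C₀ α₁ α₂ (Real.sqrt s) / Real.sqrt s ∧
    |φdd g s| ≤ 2 * Mb C₀ α₁ α₂ (Real.sqrt s) / Real.sqrt s ^ 3 := by
  set r := Real.sqrt s with hrdef
  set M := Mb C₀ α₁ α₂ r with hMdef
  have hr : 0 < r := Real.sqrt_pos.mpr hs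
  have hnum : |deriv g r * r - g r| ≤ 2 * M * r ^ 2 := by
    calc |deriv g r * r - g r| ≤ |deriv g r * r| + |g r| := abs_sub _ _
      _ = |deriv g r| * r + |g r| := by rw [abs_mul, abs_of_nonneg hr.le]
      _ ≤ (M * r) * r + M * r ^ 2 := by
          have := mul_le_mul_of_nonneg_right hgd hr.le
          linarith
      _ = 2 * M * r ^ 2 := by ring
  refine ⟨?_, ?_, ?_⟩
  · rw [φ, abs_div, abs_of_nonneg hr.le, div_le_iff₀ hr]
    calc |g r| ≤ M * r ^ 2 := hgb
      _ = M * r * r := by ring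
  · rw [φd, abs_div, abs_of_nonneg (by positivity : (0:ℝ) ≤ 2 * r ^ 3),
      div_le_div_iff₀ (by positivity) hr]
    calc |deriv g r * r - g r| * r ≤ (2 * M * r ^ 2) * r :=
        mul_le_mul_of_nonneg_right hnum hr.le
      _ = M * (2 * r ^ 3) := by ring
  · rw [φdd, abs_div, abs_of_nonneg (by positivity : (0:ℝ) ≤ 2 * r)]
    have h1 : |deriv (deriv g) r / (2 * r ^ 2)| ≤ M / (2 * r ^ 2) := by
      rw [abs_div, abs_of_nonneg (by positivity : (0:ℝ) ≤ 2 * r ^ 2)]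
      exact div_le_div_of_nonneg_right hgdd (by positivity) |>.trans_eq rfl
    have h2 : |3 * (deriv g r * r - g r) / (2 * r ^ 4)| ≤ 3 * M / r ^ 2 := by
      rw [abs_div, abs_of_nonneg (by positivity : (0:ℝ) ≤ 2 * r ^ 4), abs_mul]
      rw [div_le_div_iff₀ (by positivity) (by positivity)]
      calc |(3:ℝ)| * |deriv g r * r - g r| * r ^ 2 ≤ 3 * (2 * M * r ^ 2) * r ^ 2 := by
            rw [abs_of_nonneg (by norm_num : (0:ℝ) ≤ 3)]
            have := mul_le_mul_of_nonneg_right hnum (by positivity : (0:ℝ) ≤ r ^ 2)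
            nlinarith
        _ = 3 * M * (2 * r ^ 4) := by ring
    have h3 : |deriv (deriv g) r / (2 * r ^ 2) - 3 * (deriv g r * r - g r) / (2 * r ^ 4)|
        ≤ M / (2 * r ^ 2) + 3 * M / r ^ 2 := (abs_sub _ _).trans (by linarith)
    rw [div_le_div_iff₀ (by positivity) (by positivity : (0:ℝ) < r ^ 3)]
    calc |_| * r ^ 3 ≤ (M / (2 * r ^ 2) + 3 * M / r ^ 2) * r ^ 3 :=
        mul_le_mul_of_nonneg_right h3 (by positivity)
      _ = (7 / 2 * M) * r := by field_simp; ring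
      _ ≤ (2 * M) * (2 * r) := by nlinarith

/-! ### The derivative of `G` away from zero -/

noncomputable def Lmap (g : ℝ → ℝ) (w : ℂ) : ℂ →L[ℝ] ℂ :=
  φ g (‖w‖ ^ 2) • ContinuousLinearMap.id ℝ ℂ +
    (φd g (‖w‖ ^ 2) • (2 • (innerSL ℝ w))).smulRight w

lemma Lmap_apply (g : ℝ → ℝ) (w v : ℂ) :
    Lmap g w v = φ g (‖w‖ ^ 2) • v + (2 * φd g (‖w‖ ^ 2) * (inner ℝ w v : ℝ)) • w := by
  simp [Lmap, smul_smul, two_smul]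
  exact Or.inl (by ring)

lemma G_eq {g : ℝ → ℝ} {G : ℂ → ℂ}
    (hGdef : ∀ z : ℂ, z ≠ 0 → G z = (z / (‖z‖ : ℂ)) * (g (‖z‖) : ℂ))
    {z : ℂ} (hz : z ≠ 0) : G z = φ g (‖z‖ ^ 2) • z := by
  rw [hGdef z hz, φ, Real.sqrt_sq (norm_nonneg z)]
  have h0 : (‖z‖ : ℂ) ≠ 0 := by simpa using norm_ne_zero_iff.mpr hz
  rw [Complex.real_smul]
  push_cast
  field_simp

lemma hasFDerivAt_G {g : ℝ → ℝ} {G : ℂ → ℂ} (hg : ContDiff ℝ 2 g)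
    (hGdef : ∀ z : ℂ, z ≠ 0 → G z = (z / (‖z‖ : ℂ)) * (g (‖z‖) : ℂ))
    {w : ℂ} (hw : w ≠ 0) : HasFDerivAt G (Lmap g w) w := by
  have hq : HasFDerivAt (fun z : ℂ => ‖z‖ ^ 2) (2 • innerSL ℝ w) w :=
    (hasStrictFDerivAt_norm_sq w).hasFDerivAt
  have hw' : ‖w‖ ≠ 0 := norm_ne_zero_iff.mpr hw
  have hs : (0:ℝ) < ‖w‖ ^ 2 := by positivity
  have hφ : HasDerivAt (φ g) (φd g (‖w‖ ^ 2)) (‖w‖ ^ 2) := hasDerivAt_φ hg hs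
  have hc : HasFDerivAt (fun z : ℂ => φ g (‖z‖ ^ 2))
      (φd g (‖w‖ ^ 2) • (2 • innerSL ℝ w)) w := by have := hφ.comp_hasFDerivAt w hq; exact this
  have hF : HasFDerivAt (fun z : ℂ => φ g (‖z‖ ^ 2) • z) (Lmap g w) w := by
    have := hc.smul (hasFDerivAt_id w)
    exact this
  apply hF.congr_of_eventuallyEq
  filter_upwards [IsOpen.mem_nhds isOpen_compl_singleton hw] with z hz
  exact G_eq hGdef hz

/-! ### The function `u(t) = DG(a+tz)[z]` and its derivative -/

noncomputable def uu (g : ℝ → ℝ) (a z : ℂ) (t : ℝ) : ℂ :=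
  φ g (‖a + t • z‖ ^ 2) • z
    + (2 * φd g (‖a + t • z‖ ^ 2) * (inner ℝ (a + t • z) z : ℝ)) • (a + t • z)

noncomputable def uu' (g : ℝ → ℝ) (a z : ℂ) (t : ℝ) : ℂ :=
  (φd g (‖a + t • z‖ ^ 2) * (2 * (inner ℝ (a + t • z) z : ℝ))) • z
    + ((2 * φd g (‖a + t • z‖ ^ 2) * (inner ℝ (a + t • z) z : ℝ)) • z
      + (2 * (φdd g (‖a + t • z‖ ^ 2) * (2 * (inner ℝ (a + t • z) z : ℝ)))
            * (inner ℝ (a + t • z) z : ℝ)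
          + 2 * φd g (‖a + t • z‖ ^ 2) * ‖z‖ ^ 2) • (a + t • z))

lemma uu_eq_Lmap (g : ℝ → ℝ) (a z : ℂ) (t : ℝ) :
    uu g a z t = Lmap g (a + t • z) z := (Lmap_apply g (a + t • z) z).symm

lemma hasDerivAt_uu {g : ℝ → ℝ} (hg : ContDiff ℝ 2 g) (a z : ℂ) (t : ℝ)
    (hwt : a + t • z ≠ 0) : HasDerivAt (uu g a z) (uu' g a z t) t := by
  have hw : HasDerivAt (fun t : ℝ => a + t • z) z t := by
    simpa using ((hasDerivAt_id t).smul_const z).const_add a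
  have hq : HasDerivAt (fun t : ℝ => ‖a + t • z‖ ^ 2)
      (2 * (inner ℝ (a + t • z) z : ℝ)) t := hw.norm_sq
  have hqpos : 0 < ‖a + t • z‖ ^ 2 := by
    have : ‖a + t • z‖ ≠ 0 := norm_ne_zero_iff.mpr hwt
    positivity
  have hpfun : (fun t : ℝ => (inner ℝ (a + t • z) z : ℝ))
      = fun t : ℝ => (inner ℝ a z : ℝ) + t * ‖z‖ ^ 2 := by
    funext t
    rw [inner_add_left, real_inner_smul_left, real_inner_self_eq_norm_sq]
  have hp : HasDerivAt (fun t : ℝ => (inner ℝ (a + t • z) z : ℝ)) (‖z‖ ^ 2) t := by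
    rw [hpfun]
    simpa using ((hasDerivAt_id t).mul_const (‖z‖ ^ 2)).const_add (inner ℝ a z : ℝ)
  have hφq : HasDerivAt (fun t : ℝ => φ g (‖a + t • z‖ ^ 2))
      (φd g (‖a + t • z‖ ^ 2) * (2 * (inner ℝ (a + t • z) z : ℝ))) t :=
    by have := (hasDerivAt_φ hg hqpos).comp t hq; exact this
  have hφdq : HasDerivAt (fun t : ℝ => φd g (‖a + t • z‖ ^ 2))
      (φdd g (‖a + t • z‖ ^ 2) * (2 * (inner ℝ (a + t • z) z : ℝ))) t :=
    by have := (hasDerivAt_φd hg hqpos).comp t hq; exact this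
  have hcoef : HasDerivAt
      (fun t : ℝ => 2 * φd g (‖a + t • z‖ ^ 2) * (inner ℝ (a + t • z) z : ℝ))
      (2 * (φdd g (‖a + t • z‖ ^ 2) * (2 * (inner ℝ (a + t • z) z : ℝ)))
          * (inner ℝ (a + t • z) z : ℝ)
        + 2 * φd g (‖a + t • z‖ ^ 2) * ‖z‖ ^ 2) t := by
    have := (hφdq.const_mul 2).mul hp
    exact this
  have h1 : HasDerivAt (fun t : ℝ => φ g (‖a + t • z‖ ^ 2) • z)
      ((φd g (‖a + t • z‖ ^ 2) * (2 * (inner ℝ (a + t • z) z : ℝ))) • z) t :=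
    hφq.smul_const z
  have h2 := hcoef.smul hw
  exact h1.add h2

lemma arith_bound (A B P M r nz : ℝ) (hA : 0 ≤ A) (hB : 0 ≤ B) (hP : 0 ≤ P)
    (hr : 0 < r) (hnz : 0 ≤ nz) (hM : 0 ≤ M)
    (h1 : A * r ≤ M) (h2 : B * r ^ 3 ≤ 2 * M) (h3 : P ≤ r * nz) :
    A * (2 * P) * nz + (2 * A * P * nz + (2 * (B * (2 * P)) * P + 2 * A * nz ^ 2) * r)
      ≤ 14 * M * nz ^ 2 := by
  have hP2 : P ^ 2 ≤ r ^ 2 * nz ^ 2 := by nlinarith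
  have e1 : A * P * nz ≤ M * nz ^ 2 := by
    nlinarith [mul_le_mul_of_nonneg_right (mul_le_mul_of_nonneg_left h3 hA) hnz,
      mul_le_mul_of_nonneg_right h1 (mul_nonneg hnz hnz)]
  have e2 : B * P ^ 2 * r ≤ 2 * M * nz ^ 2 := by
    nlinarith [mul_le_mul_of_nonneg_left hP2 (mul_nonneg hB hr.le),
      mul_le_mul_of_nonneg_right h2 (sq_nonneg nz)]
  have e3 : A * nz ^ 2 * r ≤ M * nz ^ 2 := by
    nlinarith [mul_le_mul_of_nonneg_right h1 (mul_nonneg hnz hnz)]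
  nlinarith

end Stmt6Aux

set_option maxHeartbeats 1600000 in
open Stmt6Aux in
/-- With `g₂(a,z) = G(a+z) − G(a) − DG(a)[z]`, there is `C > 0` such that
`|g₂(a,z)| ≤ C(|a|^α₁ + |a|^α₂ + |z|^α₁ + |z|^α₂)·|z|²` for all `a, z ∈ ℂ`. -/
theorem stmt_6 (α₁ α₂ C₀ : ℝ) (hα₁ : 1/2 < α₁) (hα : α₁ ≤ α₂) (hC₀ : 0 < C₀)
    (g : ℝ → ℝ) (hg : ContDiff ℝ 2 g) (hodd : ∀ s : ℝ, g (-s) = -g s)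
    (hg0 : g 0 = 0) (hg'0 : deriv g 0 = 0)
    (hg'' : ∀ s : ℝ, |deriv (deriv g) s| ≤ C₀ * (|s| ^ α₁ + |s| ^ α₂))
    (G : ℂ → ℂ) (hG0 : G 0 = 0)
    (hGdef : ∀ z : ℂ, z ≠ 0 → G z = (z / (‖z‖ : ℂ)) * (g (‖z‖) : ℂ))
    (g₂ : ℂ → ℂ → ℂ)
    (hg₂ : ∀ a z : ℂ, g₂ a z = G (a + z) - G a - fderiv ℝ G a z) :
    ∃ C > 0, ∀ a z : ℂ,
      ‖g₂ a z‖
        ≤ C * (‖a‖ ^ α₁ + ‖a‖ ^ α₂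
            + ‖z‖ ^ α₁ + ‖z‖ ^ α₂) * ‖z‖ ^ (2 : ℝ) := by
  have hα₁0 : (0:ℝ) ≤ α₁ := by linarith
  have hα₂0 : (0:ℝ) ≤ α₂ := by linarith
  have hC₀' : (0:ℝ) ≤ C₀ := hC₀.le
  have h3pow : (1:ℝ) ≤ (3:ℝ) ^ α₂ := Real.one_le_rpow (by norm_num) hα₂0
  have h3pos : (0:ℝ) < (3:ℝ) ^ α₂ := by linarith
  -- pack of profile bounds at radius r > 0
  have hpack : ∀ r : ℝ, 0 < r →
      |φ g (r ^ 2)| ≤ Mb C₀ α₁ α₂ r * r ∧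
      |φd g (r ^ 2)| ≤ Mb C₀ α₁ α₂ r / r ∧
      |φdd g (r ^ 2)| ≤ 2 * Mb C₀ α₁ α₂ r / r ^ 3 := by
    intro r hr
    have hsq : Real.sqrt (r ^ 2) = r := Real.sqrt_sq hr.le
    have h := phi_bounds (C₀ := C₀) (α₁ := α₁) (α₂ := α₂) (g := g) (s := r ^ 2)
      (by rw [hsq]; exact Mb_nonneg hC₀' r hr.le)
      (by rw [hsq]; exact g_bound hC₀' hα₁0 hα₂0 hg hg0 hg'0 hg'' hr.le)
      (by rw [hsq]; exact deriv_g_bound hC₀' hα₁0 hα₂0 hg hg'0 hg'' hr.le)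
      (by rw [hsq]; simpa [Mb, abs_of_nonneg hr.le] using hg'' r)
      (by positivity)
    rwa [hsq] at h
  have hGb : ∀ y : ℂ, ‖G y‖ ≤ Mb C₀ α₁ α₂ ‖y‖ * ‖y‖ ^ 2 := by
    intro y
    rcases eq_or_ne y 0 with rfl | hy
    · simp [hG0]
    · have hr : 0 < ‖y‖ := norm_pos_iff.mpr hy
      rw [G_eq hGdef hy, norm_smul, Real.norm_eq_abs]
      calc |φ g (‖y‖ ^ 2)| * ‖y‖ ≤ (Mb C₀ α₁ α₂ ‖y‖ * ‖y‖) * ‖y‖ :=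
          mul_le_mul_of_nonneg_right (hpack ‖y‖ hr).1 hr.le
        _ = Mb C₀ α₁ α₂ ‖y‖ * ‖y‖ ^ 2 := by ring
  have hD0 : HasFDerivAt G (0 : ℂ →L[ℝ] ℂ) 0 := by
    rw [hasFDerivAt_iff_isLittleO_nhds_zero]
    have heq : (fun h : ℂ => G (0 + h) - G 0 - (0 : ℂ →L[ℝ] ℂ) h) = fun h : ℂ => G h := by
      funext h; simp [hG0]
    rw [heq, Asymptotics.isLittleO_iff]
    intro c hc
    have hδ : (0:ℝ) < min 1 (c / (2 * C₀)) := by positivity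
    filter_upwards [Metric.ball_mem_nhds (0:ℂ) hδ] with h hball
    rw [Metric.mem_ball, dist_zero_right] at hball
    have hh1 : ‖h‖ ≤ 1 := le_of_lt (lt_of_lt_of_le hball (min_le_left _ _))
    have hh2 : ‖h‖ < c / (2 * C₀) := lt_of_lt_of_le hball (min_le_right _ _)
    have hMbh : Mb C₀ α₁ α₂ ‖h‖ ≤ 2 * C₀ := by
      have e1 : ‖h‖ ^ α₁ ≤ 1 := Real.rpow_le_one (norm_nonneg h) hh1 hα₁0
      have e2 : ‖h‖ ^ α₂ ≤ 1 := Real.rpow_le_one (norm_nonneg h) hh1 hα₂0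
      simp only [Mb]; nlinarith
    have h2C : 2 * C₀ * ‖h‖ ≤ c := by
      have := (lt_div_iff₀ (by positivity : (0:ℝ) < 2 * C₀)).mp hh2
      nlinarith
    calc ‖G h‖ ≤ Mb C₀ α₁ α₂ ‖h‖ * ‖h‖ ^ 2 := hGb h
      _ ≤ (2 * C₀) * ‖h‖ ^ 2 := mul_le_mul_of_nonneg_right hMbh (by positivity)
      _ = (2 * C₀ * ‖h‖) * ‖h‖ := by ring
      _ ≤ c * ‖h‖ := mul_le_mul_of_nonneg_right h2C (norm_nonneg h)
  refine ⟨100 * C₀ * (3:ℝ) ^ α₂, by positivity, fun a z => ?_⟩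
  have hrw2 : ‖z‖ ^ (2:ℝ) = ‖z‖ ^ 2 := by
    rw [show ((2:ℝ)) = ((2:ℕ):ℝ) by norm_num, Real.rpow_natCast]
  rw [hrw2]
  show ‖g₂ a z‖ ≤ 100 * C₀ * (3:ℝ) ^ α₂ * (‖a‖ ^ α₁ + ‖a‖ ^ α₂ + ‖z‖ ^ α₁ + ‖z‖ ^ α₂) * ‖z‖ ^ 2
  have na1 := Real.rpow_nonneg (norm_nonneg a) α₁
  have na2 := Real.rpow_nonneg (norm_nonneg a) α₂
  have nz1 := Real.rpow_nonneg (norm_nonneg z) α₁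
  have nz2 := Real.rpow_nonneg (norm_nonneg z) α₂
  rcases eq_or_ne a 0 with rfl | ha
  · -- case a = 0
    have hf0 : fderiv ℝ G 0 = 0 := hD0.fderiv
    have hg2z : g₂ 0 z = G z := by rw [hg₂]; simp [hG0, hf0]
    rw [hg2z]
    have hC₀C : C₀ ≤ 100 * C₀ * (3:ℝ) ^ α₂ := by nlinarith
    calc ‖G z‖ ≤ Mb C₀ α₁ α₂ ‖z‖ * ‖z‖ ^ 2 := hGb z
      _ ≤ 100 * C₀ * (3:ℝ) ^ α₂ * (‖(0:ℂ)‖ ^ α₁ + ‖(0:ℂ)‖ ^ α₂ + ‖z‖ ^ α₁ + ‖z‖ ^ α₂) * ‖z‖ ^ 2 := by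
          apply mul_le_mul_of_nonneg_right _ (sq_nonneg ‖z‖)
          simp only [Mb]
          nlinarith [mul_le_mul_of_nonneg_right hC₀C (add_nonneg nz1 nz2)]
  · have ha' : 0 < ‖a‖ := norm_pos_iff.mpr ha
    have hfd : fderiv ℝ G a = Lmap g a := (hasFDerivAt_G hg hGdef ha).fderiv
    rcases le_or_gt (2 * ‖z‖) ‖a‖ with hmain | hcrude
    · -- main case : segment stays away from 0
      have hRnn : (0:ℝ) ≤ ‖a‖ + ‖z‖ := by positivity
      have hMRnn : 0 ≤ Mb C₀ α₁ α₂ (‖a‖ + ‖z‖) := Mb_nonneg hC₀' _ hRnn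
      have hseg : ∀ t ∈ Icc (0:ℝ) 1, ‖a‖ / 2 ≤ ‖a + t • z‖ ∧ ‖a + t • z‖ ≤ ‖a‖ + ‖z‖ := by
        intro t ht
        have htz : ‖t • z‖ ≤ ‖z‖ := by
          rw [norm_smul, Real.norm_eq_abs, abs_of_nonneg ht.1]
          nlinarith [norm_nonneg z, ht.2]
        constructor
        · have h := norm_sub_le (a + t • z) (t • z)
          rw [add_sub_cancel_right] at h
          linarith
        · have h := norm_add_le a (t • z)
          linarith
      have hwt0 : ∀ t ∈ Icc (0:ℝ) 1, a + t • z ≠ 0 := by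
        intro t ht h0
        have := (hseg t ht).1
        rw [h0, norm_zero] at this
        linarith
      have hub : ∀ t ∈ Icc (0:ℝ) 1,
          ‖uu' g a z t‖ ≤ 14 * Mb C₀ α₁ α₂ (‖a‖ + ‖z‖) * ‖z‖ ^ 2 := by
        intro t ht
        obtain ⟨hlo, hhi⟩ := hseg t ht
        have hr : 0 < ‖a + t • z‖ := lt_of_lt_of_le (by linarith) hlo
        obtain ⟨_, hφd1, hφdd1⟩ := hpack ‖a + t • z‖ hr
        have hMle : Mb C₀ α₁ α₂ ‖a + t • z‖ ≤ Mb C₀ α₁ α₂ (‖a‖ + ‖z‖) :=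
          Mb_mono hC₀' hα₁0 hα₂0 hr.le hhi
        have hA : |φd g (‖a + t • z‖ ^ 2)| * ‖a + t • z‖ ≤ Mb C₀ α₁ α₂ (‖a‖ + ‖z‖) := by
          rw [le_div_iff₀ hr] at hφd1; exact hφd1.trans hMle
        have hB : |φdd g (‖a + t • z‖ ^ 2)| * ‖a + t • z‖ ^ 3
            ≤ 2 * Mb C₀ α₁ α₂ (‖a‖ + ‖z‖) := by
          rw [le_div_iff₀ (by positivity : (0:ℝ) < ‖a + t • z‖ ^ 3)] at hφdd1
          exact hφdd1.trans (by linarith)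
        have hP : |(inner ℝ (a + t • z) z : ℝ)| ≤ ‖a + t • z‖ * ‖z‖ :=
          abs_real_inner_le_norm _ _
        have hexp : uu' g a z t =
            (φd g (‖a + t • z‖ ^ 2) * (2 * (inner ℝ (a + t • z) z : ℝ))) • z
              + ((2 * φd g (‖a + t • z‖ ^ 2) * (inner ℝ (a + t • z) z : ℝ)) • z
                + (2 * (φdd g (‖a + t • z‖ ^ 2) * (2 * (inner ℝ (a + t • z) z : ℝ)))
                      * (inner ℝ (a + t • z) z : ℝ)
                    + 2 * φd g (‖a + t • z‖ ^ 2) * ‖z‖ ^ 2) • (a + t • z)) := rfl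
        rw [hexp]
        refine (norm_add_le _ _).trans ?_
        refine (add_le_add_right (norm_add_le _ _) _).trans ?_
        rw [norm_smul, norm_smul, norm_smul, Real.norm_eq_abs, Real.norm_eq_abs,
          Real.norm_eq_abs]
        have e1 : |φd g (‖a + t • z‖ ^ 2) * (2 * (inner ℝ (a + t • z) z : ℝ))|
            = |φd g (‖a + t • z‖ ^ 2)| * (2 * |(inner ℝ (a + t • z) z : ℝ)|) := by
          rw [abs_mul, abs_mul, abs_two]
        have e2 : |2 * φd g (‖a + t • z‖ ^ 2) * (inner ℝ (a + t • z) z : ℝ)|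
            = 2 * |φd g (‖a + t • z‖ ^ 2)| * |(inner ℝ (a + t • z) z : ℝ)| := by
          rw [abs_mul, abs_mul, abs_two]
        have e3 : |2 * (φdd g (‖a + t • z‖ ^ 2) * (2 * (inner ℝ (a + t • z) z : ℝ)))
              * (inner ℝ (a + t • z) z : ℝ) + 2 * φd g (‖a + t • z‖ ^ 2) * ‖z‖ ^ 2|
            ≤ 2 * (|φdd g (‖a + t • z‖ ^ 2)| * (2 * |(inner ℝ (a + t • z) z : ℝ)|))
                * |(inner ℝ (a + t • z) z : ℝ)|
              + 2 * |φd g (‖a + t • z‖ ^ 2)| * ‖z‖ ^ 2 := by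
          refine (abs_add_le _ _).trans ?_
          apply add_le_add
          · rw [abs_mul, abs_mul, abs_mul, abs_mul, abs_two]
          · rw [abs_mul, abs_mul, abs_two, abs_of_nonneg (sq_nonneg ‖z‖)]
        calc |φd g (‖a + t • z‖ ^ 2) * (2 * (inner ℝ (a + t • z) z : ℝ))| * ‖z‖
              + (|2 * φd g (‖a + t • z‖ ^ 2) * (inner ℝ (a + t • z) z : ℝ)| * ‖z‖
                + |2 * (φdd g (‖a + t • z‖ ^ 2) * (2 * (inner ℝ (a + t • z) z : ℝ)))
                      * (inner ℝ (a + t • z) z : ℝ)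
                    + 2 * φd g (‖a + t • z‖ ^ 2) * ‖z‖ ^ 2| * ‖a + t • z‖)
            ≤ |φd g (‖a + t • z‖ ^ 2)| * (2 * |(inner ℝ (a + t • z) z : ℝ)|) * ‖z‖
              + (2 * |φd g (‖a + t • z‖ ^ 2)| * |(inner ℝ (a + t • z) z : ℝ)| * ‖z‖
                + (2 * (|φdd g (‖a + t • z‖ ^ 2)| * (2 * |(inner ℝ (a + t • z) z : ℝ)|))
                      * |(inner ℝ (a + t • z) z : ℝ)|
                    + 2 * |φd g (‖a + t • z‖ ^ 2)| * ‖z‖ ^ 2) * ‖a + t • z‖) := by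
              rw [e1, e2]
              exact add_le_add_right (add_le_add_right
                (mul_le_mul_of_nonneg_right e3 hr.le) _) _
          _ ≤ 14 * Mb C₀ α₁ α₂ (‖a‖ + ‖z‖) * ‖z‖ ^ 2 :=
              arith_bound _ _ _ _ _ _ (abs_nonneg _) (abs_nonneg _) (abs_nonneg _)
                hr (norm_nonneg z) hMRnn hA hB hP
      have hmvt1 := norm_image_sub_le_of_norm_deriv_le_segment'
        (f := uu g a z) (f' := uu' g a z) (a := 0) (b := 1)
        (C := 14 * Mb C₀ α₁ α₂ (‖a‖ + ‖z‖) * ‖z‖ ^ 2)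
        (fun t ht => (hasDerivAt_uu hg a z t (hwt0 t ht)).hasDerivWithinAt)
        (fun t ht => hub t (Ico_subset_Icc_self ht))
      have hFd : ∀ t ∈ Icc (0:ℝ) 1,
          HasDerivWithinAt (fun t : ℝ => G (a + t • z) - t • uu g a z 0)
            (uu g a z t - uu g a z 0) (Icc (0:ℝ) 1) t := by
        intro t ht
        have hwd : HasDerivAt (fun t : ℝ => a + t • z) z t := by
          simpa using ((hasDerivAt_id t).smul_const z).const_add a
        have h1 : HasDerivAt (fun t : ℝ => G (a + t • z)) (uu g a z t) t := by
          have := (hasFDerivAt_G hg hGdef (hwt0 t ht)).comp_hasDerivAt t hwd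
          rwa [← uu_eq_Lmap] at this
        have h2 : HasDerivAt (fun t : ℝ => t • uu g a z 0) (uu g a z 0) t := by
          simpa using (hasDerivAt_id t).smul_const (uu g a z 0)
        exact (h1.sub h2).hasDerivWithinAt
      have hmvt2 := norm_image_sub_le_of_norm_deriv_le_segment'
        (f := fun t : ℝ => G (a + t • z) - t • uu g a z 0)
        (f' := fun t => uu g a z t - uu g a z 0) (a := 0) (b := 1)
        (C := 14 * Mb C₀ α₁ α₂ (‖a‖ + ‖z‖) * ‖z‖ ^ 2) hFd
        (fun t ht => by
          have h := hmvt1 t (Ico_subset_Icc_self ht)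
          have hCnn : (0:ℝ) ≤ 14 * Mb C₀ α₁ α₂ (‖a‖ + ‖z‖) * ‖z‖ ^ 2 := by positivity
          nlinarith [ht.1, ht.2.le])
        1 (right_mem_Icc.mpr zero_le_one)
      have hg2eq : g₂ a z = (G (a + (1:ℝ) • z) - (1:ℝ) • uu g a z 0)
          - (G (a + (0:ℝ) • z) - (0:ℝ) • uu g a z 0) := by
        rw [hg₂, hfd]
        have h0 : a + (0:ℝ) • z = a := by simp
        have h1 : a + (1:ℝ) • z = a + z := by simp
        have hu0L : uu g a z 0 = Lmap g a z := by rw [uu_eq_Lmap, h0]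
        rw [h0, h1, hu0L, one_smul, zero_smul, sub_zero]
        abel
      rw [hg2eq]
      have hMRle := Mb_add_le hC₀' hα₁0 hα (norm_nonneg a) (norm_nonneg z)
      have h23 : (2:ℝ) ^ α₂ ≤ (3:ℝ) ^ α₂ :=
        Real.rpow_le_rpow (by norm_num) (by norm_num) hα₂0
      have hSig : (0:ℝ) ≤ ‖a‖ ^ α₁ + ‖a‖ ^ α₂ + ‖z‖ ^ α₁ + ‖z‖ ^ α₂ := by linarith
      calc ‖(G (a + (1:ℝ) • z) - (1:ℝ) • uu g a z 0)
            - (G (a + (0:ℝ) • z) - (0:ℝ) • uu g a z 0)‖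
          ≤ 14 * Mb C₀ α₁ α₂ (‖a‖ + ‖z‖) * ‖z‖ ^ 2 * (1 - 0) := hmvt2
        _ = 14 * Mb C₀ α₁ α₂ (‖a‖ + ‖z‖) * ‖z‖ ^ 2 := by ring
        _ ≤ 100 * C₀ * (3:ℝ) ^ α₂ * (‖a‖ ^ α₁ + ‖a‖ ^ α₂ + ‖z‖ ^ α₁ + ‖z‖ ^ α₂) * ‖z‖ ^ 2 := by
            have t1 := mul_le_mul_of_nonneg_right hMRle (sq_nonneg ‖z‖)
            have t2 : (2:ℝ) ^ α₂ * C₀ ≤ (3:ℝ) ^ α₂ * C₀ :=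
              mul_le_mul_of_nonneg_right h23 hC₀'
            have t3 := mul_le_mul_of_nonneg_right t2
              (mul_nonneg hSig (sq_nonneg ‖z‖))
            nlinarith [sq_nonneg ‖z‖, hMRnn]
    · -- crude case : ‖a‖ < 2 ‖z‖
      have hz' : 0 < ‖z‖ := by linarith
      obtain ⟨hφ1, hφd1, _⟩ := hpack ‖a‖ ha'
      have hMa : 0 ≤ Mb C₀ α₁ α₂ ‖a‖ := Mb_nonneg hC₀' _ (norm_nonneg a)
      have hL : ‖Lmap g a z‖ ≤ 6 * Mb C₀ α₁ α₂ ‖a‖ * ‖z‖ ^ 2 := by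
        rw [Lmap_apply]
        refine (norm_add_le _ _).trans ?_
        rw [norm_smul, norm_smul, Real.norm_eq_abs, Real.norm_eq_abs]
        have hφdA : |φd g (‖a‖ ^ 2)| * ‖a‖ ≤ Mb C₀ α₁ α₂ ‖a‖ := by
          rw [le_div_iff₀ ha'] at hφd1; exact hφd1
        have hinner : |(inner ℝ a z : ℝ)| ≤ ‖a‖ * ‖z‖ := abs_real_inner_le_norm a z
        have e2 : |2 * φd g (‖a‖ ^ 2) * (inner ℝ a z : ℝ)|
            = 2 * |φd g (‖a‖ ^ 2)| * |(inner ℝ a z : ℝ)| := by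
          rw [abs_mul, abs_mul, abs_two]
        rw [e2]
        nlinarith [mul_le_mul_of_nonneg_right hφ1 hz'.le,
          mul_le_mul hφdA hinner (abs_nonneg _) hMa,
          mul_le_mul_of_nonneg_right (mul_le_mul_of_nonneg_left hcrude.le hMa) hz'.le,
          abs_nonneg (φd g (‖a‖ ^ 2)), abs_nonneg ((inner ℝ a z : ℝ)), norm_nonneg a]
      have hGa : ‖G a‖ ≤ 4 * Mb C₀ α₁ α₂ ‖a‖ * ‖z‖ ^ 2 := by
        have h := hGb a
        nlinarith [mul_le_mul hcrude.le hcrude.le (norm_nonneg a)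
          (by positivity : (0:ℝ) ≤ 2 * ‖z‖), hMa, norm_nonneg a]
      have hGaz : ‖G (a + z)‖ ≤ 9 * (3:ℝ) ^ α₂ * Mb C₀ α₁ α₂ ‖z‖ * ‖z‖ ^ 2 := by
        have h1 := hGb (a + z)
        have hle : ‖a + z‖ ≤ 3 * ‖z‖ := (norm_add_le a z).trans (by linarith)
        have h2 : Mb C₀ α₁ α₂ ‖a + z‖ ≤ Mb C₀ α₁ α₂ (3 * ‖z‖) :=
          Mb_mono hC₀' hα₁0 hα₂0 (norm_nonneg _) hle
        have h3 := Mb_three hC₀' hα₁0 hα (norm_nonneg z)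
        have h4 : ‖a + z‖ ^ 2 ≤ 9 * ‖z‖ ^ 2 := by nlinarith [norm_nonneg (a + z)]
        have hMz : 0 ≤ Mb C₀ α₁ α₂ ‖z‖ := Mb_nonneg hC₀' _ (norm_nonneg z)
        have hM3 : 0 ≤ Mb C₀ α₁ α₂ (3 * ‖z‖) := Mb_nonneg hC₀' _ (by positivity)
        calc ‖G (a + z)‖ ≤ Mb C₀ α₁ α₂ ‖a + z‖ * ‖a + z‖ ^ 2 := h1
          _ ≤ Mb C₀ α₁ α₂ (3 * ‖z‖) * (9 * ‖z‖ ^ 2) :=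
              mul_le_mul h2 h4 (sq_nonneg _) hM3
          _ ≤ ((3:ℝ) ^ α₂ * Mb C₀ α₁ α₂ ‖z‖) * (9 * ‖z‖ ^ 2) :=
              mul_le_mul_of_nonneg_right h3 (by positivity)
          _ = 9 * (3:ℝ) ^ α₂ * Mb C₀ α₁ α₂ ‖z‖ * ‖z‖ ^ 2 := by ring
      have hsplit : ‖g₂ a z‖ ≤ ‖G (a + z)‖ + ‖G a‖ + ‖Lmap g a z‖ := by
        rw [hg₂, hfd]
        calc ‖G (a + z) - G a - Lmap g a z‖
            ≤ ‖G (a + z) - G a‖ + ‖Lmap g a z‖ := norm_sub_le _ _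
          _ ≤ ‖G (a + z)‖ + ‖G a‖ + ‖Lmap g a z‖ :=
              add_le_add_left (norm_sub_le _ _) _
      have hscal : 9 * (3:ℝ) ^ α₂ * Mb C₀ α₁ α₂ ‖z‖ + 10 * Mb C₀ α₁ α₂ ‖a‖
          ≤ 100 * C₀ * (3:ℝ) ^ α₂ * (‖a‖ ^ α₁ + ‖a‖ ^ α₂ + ‖z‖ ^ α₁ + ‖z‖ ^ α₂) := by
        simp only [Mb]
        have k1 : 9 * (3:ℝ) ^ α₂ * C₀ ≤ 100 * C₀ * (3:ℝ) ^ α₂ := by nlinarith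
        have k2 : 10 * C₀ ≤ 100 * C₀ * (3:ℝ) ^ α₂ := by nlinarith
        nlinarith [mul_le_mul_of_nonneg_right k1 (add_nonneg nz1 nz2),
          mul_le_mul_of_nonneg_right k2 (add_nonneg na1 na2)]
      calc ‖g₂ a z‖ ≤ ‖G (a + z)‖ + ‖G a‖ + ‖Lmap g a z‖ := hsplit
        _ ≤ (9 * (3:ℝ) ^ α₂ * Mb C₀ α₁ α₂ ‖z‖ + 10 * Mb C₀ α₁ α₂ ‖a‖) * ‖z‖ ^ 2 := by
            nlinarith [hGaz, hGa, hL]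
        _ ≤ (100 * C₀ * (3:ℝ) ^ α₂ * (‖a‖ ^ α₁ + ‖a‖ ^ α₂ + ‖z‖ ^ α₁ + ‖z‖ ^ α₂)) * ‖z‖ ^ 2 :=
            mul_le_mul_of_nonneg_right hscal (sq_nonneg _)
end

section
/- Define g₂(a, z) = G(a + z) − G(a) − DG(a)[z] for a, z ∈ ℂ. Then there exists a constant C > 0 (depending only on C₀, α₁, α₂) such that for all a, z₁, z₂ ∈ ℂ: |g₂(a, z₁) − g₂(a, z₂)| ≤ C·[(|a|^{α₁} + |a|^{α₂})(|z₁| + |z₂|) + |z₁|^{1+α₁} + |z₂|^{1+α₁} + |z₁|^{1+α₂} + |z₂|^{1+α₂}]·|z₁ − z₂|. -/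
open Complex Real Set

noncomputable abbrev Complex.abs (z : ℂ) : ℝ := ‖z‖

lemma Complex.abs.nonneg (z : ℂ) : 0 ≤ Complex.abs z := norm_nonneg z

lemma Complex.norm_eq_abs (z : ℂ) : ‖z‖ = Complex.abs z := rfl

lemma Complex.abs_ofReal (r : ℝ) : Complex.abs (r : ℂ) = |r| := Complex.norm_real r

lemma Complex.abs_conj (z : ℂ) : Complex.abs ((starRingEnd ℂ) z) = Complex.abs z := Complex.norm_conj z

lemma hasFDerivAt_cabs {z : ℂ} (hz : z ≠ 0) :
    HasFDerivAt (fun w : ℂ => Complex.abs w)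
      (((Complex.abs z)⁻¹ • (z.re • Complex.reCLM + z.im • Complex.imCLM)) : ℂ →L[ℝ] ℝ) z := by
  have h1 : HasFDerivAt (fun w : ℂ => Complex.normSq w)
      ((z.re • Complex.reCLM + z.re • Complex.reCLM)
        + (z.im • Complex.imCLM + z.im • Complex.imCLM)) z := by
    have hre := (Complex.reCLM.hasFDerivAt (x := z)).mul (Complex.reCLM.hasFDerivAt (x := z))
    have him := (Complex.imCLM.hasFDerivAt (x := z)).mul (Complex.imCLM.hasFDerivAt (x := z))
    have := hre.add him
    have heq : (fun w : ℂ => Complex.normSq w)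
        = fun w : ℂ => Complex.reCLM w * Complex.reCLM w + Complex.imCLM w * Complex.imCLM w := by
      funext w; simp [Complex.normSq_apply]
    rw [heq]
    exact this
  have hsq : Complex.normSq z ≠ 0 := by simpa [Complex.normSq_eq_zero] using hz
  have h2 := (Real.hasDerivAt_sqrt hsq).comp_hasFDerivAt z h1
  have habs : ∀ w : ℂ, Complex.abs w = Real.sqrt (Complex.normSq w) := fun w => rfl
  have h3 : HasFDerivAt (fun w : ℂ => Complex.abs w)
      ((1 / (2 * Real.sqrt (Complex.normSq z))) •
        ((z.re • Complex.reCLM + z.re • Complex.reCLM)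
        + (z.im • Complex.imCLM + z.im • Complex.imCLM))) z := h2
  convert h3 using 1
  ext w
  have hr : Real.sqrt (Complex.normSq z) = Complex.abs z := rfl
  have hrpos : (0:ℝ) < Complex.abs z := by simpa using hz
  simp only [ContinuousLinearMap.smul_apply, ContinuousLinearMap.add_apply,
    Complex.reCLM_apply, Complex.imCLM_apply, smul_eq_mul, hr]
  field_simp
  ring

lemma gderiv_bound {α₁ α₂ C₀ : ℝ} (hα₁ : 0 < α₁) (hα : α₁ ≤ α₂) {g : ℝ → ℝ}
    (hg : ContDiff ℝ 2 g) (hg'0 : deriv g 0 = 0)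
    (hg'' : ∀ s : ℝ, |deriv (deriv g) s| ≤ C₀ * (|s| ^ α₁ + |s| ^ α₂))
    (hC₀ : 0 < C₀) :
    ∀ s : ℝ, |deriv g s| ≤ C₀ * (|s| ^ α₁ + |s| ^ α₂) * |s| := by
  intro s
  have hdg : ContDiff ℝ 1 (deriv g) := by
    have := (contDiff_succ_iff_deriv (n := 1)).mp (by exact_mod_cast hg)
    exact this.2.2
  have hmono : ∀ t ∈ Set.uIcc (0:ℝ) s, ‖deriv (deriv g) t‖ ≤ C₀ * (|s| ^ α₁ + |s| ^ α₂) := by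
    intro t ht
    have hts : |t| ≤ |s| := by
      rcases Set.mem_uIcc.mp ht with ⟨h1, h2⟩ | ⟨h1, h2⟩ <;> rw [abs_le] <;>
        constructor <;> nlinarith [le_abs_self s, neg_abs_le s]
    refine (hg'' t).trans ?_
    have h1 : |t| ^ α₁ ≤ |s| ^ α₁ := Real.rpow_le_rpow (abs_nonneg t) hts hα₁.le
    have h2 : |t| ^ α₂ ≤ |s| ^ α₂ := Real.rpow_le_rpow (abs_nonneg t) hts (hα₁.trans_le hα).le
    nlinarith
  have := Convex.norm_image_sub_le_of_norm_deriv_le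
    (f := deriv g) (s := Set.uIcc (0:ℝ) s)
    (fun t _ => (hdg.differentiable one_ne_zero t))
    hmono (convex_uIcc _ _) (Set.left_mem_uIcc) (Set.right_mem_uIcc)
  simpa [hg'0, abs_sub_comm] using this

lemma g_bound {α₁ α₂ C₀ : ℝ} (hα₁ : 0 < α₁) (hα : α₁ ≤ α₂) {g : ℝ → ℝ}
    (hg : ContDiff ℝ 2 g) (hg0 : g 0 = 0) (hg'0 : deriv g 0 = 0)
    (hg'' : ∀ s : ℝ, |deriv (deriv g) s| ≤ C₀ * (|s| ^ α₁ + |s| ^ α₂))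
    (hC₀ : 0 < C₀) :
    ∀ s : ℝ, |g s| ≤ C₀ * (|s| ^ α₁ + |s| ^ α₂) * (|s| * |s|) := by
  intro s
  have key := gderiv_bound hα₁ hα hg hg'0 hg'' hC₀
  have hmono : ∀ t ∈ Set.uIcc (0:ℝ) s, ‖deriv g t‖ ≤ C₀ * (|s| ^ α₁ + |s| ^ α₂) * |s| := by
    intro t ht
    have hts : |t| ≤ |s| := by
      rcases Set.mem_uIcc.mp ht with ⟨h1, h2⟩ | ⟨h1, h2⟩ <;> rw [abs_le] <;>
        constructor <;> nlinarith [le_abs_self s, neg_abs_le s]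
    refine (key t).trans ?_
    have h1 : |t| ^ α₁ ≤ |s| ^ α₁ := Real.rpow_le_rpow (abs_nonneg t) hts hα₁.le
    have h2 : |t| ^ α₂ ≤ |s| ^ α₂ := Real.rpow_le_rpow (abs_nonneg t) hts (hα₁.trans_le hα).le
    have hp1 : (0:ℝ) ≤ |t| ^ α₁ := Real.rpow_nonneg (abs_nonneg t) _
    have hp2 : (0:ℝ) ≤ |t| ^ α₂ := Real.rpow_nonneg (abs_nonneg t) _
    have ht0 : (0:ℝ) ≤ |t| := abs_nonneg t
    have hs0 : (0:ℝ) ≤ |s| := abs_nonneg s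
    nlinarith [mul_le_mul (add_le_add h1 h2) hts ht0 (by positivity : (0:ℝ) ≤ |s| ^ α₁ + |s| ^ α₂)]
  have := Convex.norm_image_sub_le_of_norm_deriv_le
    (f := g) (s := Set.uIcc (0:ℝ) s)
    (fun t _ => (hg.differentiable (by norm_num) t))
    hmono (convex_uIcc _ _) (Set.left_mem_uIcc) (Set.right_mem_uIcc)
  simp only [hg0, sub_zero, Real.norm_eq_abs] at this
  calc |g s| ≤ C₀ * (|s| ^ α₁ + |s| ^ α₂) * |s| * |s| := this
    _ = C₀ * (|s| ^ α₁ + |s| ^ α₂) * (|s| * |s|) := by ring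

-- G as a scalar-smul function
lemma G_eq {g : ℝ → ℝ} (hg0 : g 0 = 0) {G : ℂ → ℂ} (hG0 : G 0 = 0)
    (hGdef : ∀ z : ℂ, z ≠ 0 → G z = (z / (Complex.abs z : ℂ)) * (g (Complex.abs z) : ℂ)) :
    G = fun z => (g (Complex.abs z) / Complex.abs z) • z := by
  funext z
  rcases eq_or_ne z 0 with rfl | hz
  · simp [hG0, hg0]
  · rw [hGdef z hz]
    have hr : (Complex.abs z : ℝ) ≠ 0 := by simpa using hz
    have hrc : ((Complex.abs z : ℝ) : ℂ) ≠ 0 := by exact_mod_cast hr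
    rw [Complex.real_smul]
    push_cast
    field_simp

lemma hasDerivAt_phi {g : ℝ → ℝ} (hg : ContDiff ℝ 2 g) {r : ℝ} (hr : r ≠ 0) :
    HasDerivAt (fun t => g t / t) (deriv g r / r - g r / r ^ 2) r := by
  have h := ((hg.differentiable (by norm_num) r).hasDerivAt).div (hasDerivAt_id r) hr
  have e : deriv g r / r - g r / r ^ 2 = (deriv g r * id r - g r * 1) / id r ^ 2 := by
    simp only [id]
    field_simp
  rw [e]
  exact h

lemma hasFDerivAt_G {g : ℝ → ℝ} (hg : ContDiff ℝ 2 g) (hg0 : g 0 = 0) {G : ℂ → ℂ} (hG0 : G 0 = 0)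
    (hGdef : ∀ z : ℂ, z ≠ 0 → G z = (z / (Complex.abs z : ℂ)) * (g (Complex.abs z) : ℂ))
    {z : ℂ} (hz : z ≠ 0) :
    HasFDerivAt G
      ((g (Complex.abs z) / Complex.abs z) • ContinuousLinearMap.id ℝ ℂ
        + (((deriv g (Complex.abs z) / Complex.abs z - g (Complex.abs z) / (Complex.abs z) ^ 2)
            • ((Complex.abs z)⁻¹ • (z.re • Complex.reCLM + z.im • Complex.imCLM))).smulRight z)) z := by
  rw [G_eq hg0 hG0 hGdef]
  have hA := hasFDerivAt_cabs hz
  have hφ := hasDerivAt_phi hg (by simpa using hz : Complex.abs z ≠ 0)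
  have hc := hφ.comp_hasFDerivAt z hA
  have hid : HasFDerivAt (fun w : ℂ => w) (ContinuousLinearMap.id ℝ ℂ) z := hasFDerivAt_id z
  exact hc.smul hid

lemma fderiv_G_apply {g : ℝ → ℝ} (hg : ContDiff ℝ 2 g) (hg0 : g 0 = 0) {G : ℂ → ℂ} (hG0 : G 0 = 0)
    (hGdef : ∀ z : ℂ, z ≠ 0 → G z = (z / (Complex.abs z : ℂ)) * (g (Complex.abs z) : ℂ))
    {z : ℂ} (hz : z ≠ 0) (w : ℂ) :
    fderiv ℝ G z w = (g (Complex.abs z) / Complex.abs z) • w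
      + ((deriv g (Complex.abs z) / (Complex.abs z) ^ 2
          - g (Complex.abs z) / (Complex.abs z) ^ 3)
          * (z.re * w.re + z.im * w.im)) • z := by
  rw [(hasFDerivAt_G hg hg0 hG0 hGdef hz).fderiv]
  have hr : (Complex.abs z : ℝ) ≠ 0 := by simpa using hz
  simp only [ContinuousLinearMap.add_apply, ContinuousLinearMap.smul_apply,
    ContinuousLinearMap.smulRight_apply, ContinuousLinearMap.id_apply,
    ContinuousLinearMap.coe_smul', Pi.smul_apply, Complex.reCLM_apply, Complex.imCLM_apply,
    smul_eq_mul]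
  congr 1
  congr 1
  field_simp



lemma hasFDerivAt_G_zero {α₁ α₂ C₀ : ℝ} (hα₁ : 0 < α₁) (hα : α₁ ≤ α₂) (hC₀ : 0 < C₀)
    {g : ℝ → ℝ} (hg : ContDiff ℝ 2 g) (hg0 : g 0 = 0) (hg'0 : deriv g 0 = 0)
    (hg'' : ∀ s : ℝ, |deriv (deriv g) s| ≤ C₀ * (|s| ^ α₁ + |s| ^ α₂))
    {G : ℂ → ℂ} (hG0 : G 0 = 0)
    (hGdef : ∀ z : ℂ, z ≠ 0 → G z = (z / (Complex.abs z : ℂ)) * (g (Complex.abs z) : ℂ)) :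
    HasFDerivAt G (0 : ℂ →L[ℝ] ℂ) 0 := by
  rw [hasFDerivAt_iff_isLittleO_nhds_zero]
  rw [Asymptotics.isLittleO_iff]
  intro c hc
  have key := g_bound hα₁ hα hg hg0 hg'0 hg'' hC₀
  rw [Metric.eventually_nhds_iff]
  refine ⟨min 1 (c / (2 * C₀)), by positivity, fun {z} hzd => ?_⟩
  simp only [dist_zero_right] at hzd
  have hz1 : ‖z‖ ≤ 1 := le_of_lt (lt_of_lt_of_le hzd (min_le_left _ _))
  have hz2 : ‖z‖ ≤ c / (2 * C₀) := le_of_lt (lt_of_lt_of_le hzd (min_le_right _ _))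
  simp only [zero_add, hG0, ContinuousLinearMap.zero_apply, sub_zero]
  have hGz : ‖G z‖ ≤ |g (Complex.abs z)| := by
    rcases eq_or_ne z 0 with rfl | hz
    · simp [hG0, hg0]
    · have hr : (0:ℝ) < Complex.abs z := by simpa using hz
      rw [hGdef z hz, norm_mul, norm_div]
      simp only [Complex.norm_eq_abs, Complex.abs_ofReal, abs_of_pos hr]
      rw [div_self hr.ne', one_mul]
  refine hGz.trans ?_
  have habs : |Complex.abs z| = ‖z‖ := by
    rw [Complex.norm_eq_abs, _root_.abs_of_nonneg (Complex.abs.nonneg z)]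
  have h1 : |Complex.abs z| ^ α₁ ≤ 1 := Real.rpow_le_one (abs_nonneg _) (by rw [habs]; exact hz1) hα₁.le
  have h2 : |Complex.abs z| ^ α₂ ≤ 1 := Real.rpow_le_one (abs_nonneg _) (by rw [habs]; exact hz1) (hα₁.trans_le hα).le
  have := key (Complex.abs z)
  rw [habs] at this h1 h2
  have hz0 : (0:ℝ) ≤ ‖z‖ := norm_nonneg z
  calc |g (Complex.abs z)| ≤ C₀ * (‖z‖ ^ α₁ + ‖z‖ ^ α₂) * (‖z‖ * ‖z‖) := this
    _ ≤ C₀ * 2 * (‖z‖ * ‖z‖) := by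
        nlinarith [mul_nonneg (mul_nonneg hC₀.le (mul_nonneg hz0 hz0))
          (sub_nonneg.mpr (show ‖z‖ ^ α₁ + ‖z‖ ^ α₂ ≤ 2 by linarith))]
    _ ≤ c * ‖z‖ := by
        have h2c : 2 * C₀ * ‖z‖ ≤ c := by
          rw [le_div_iff₀ (by positivity : (0:ℝ) < 2 * C₀)] at hz2; linarith
        nlinarith [mul_le_mul_of_nonneg_right h2c hz0]

lemma Sbound (z w : ℂ) : |z.re * w.re + z.im * w.im| ≤ Complex.abs z * Complex.abs w := by
  have h : z.re * w.re + z.im * w.im = ((starRingEnd ℂ) z * w).re := by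
    simp [Complex.mul_re]
  rw [h]
  calc |((starRingEnd ℂ) z * w).re| ≤ Complex.abs ((starRingEnd ℂ) z * w) :=
        Complex.abs_re_le_norm _
    _ = Complex.abs z * Complex.abs w := by simp only [Complex.abs, norm_mul, Complex.norm_conj]

lemma hasDerivAt_q {g : ℝ → ℝ} (hg : ContDiff ℝ 2 g) {r : ℝ} (hr : r ≠ 0) :
    HasDerivAt (fun t => deriv g t / t ^ 2 - g t / t ^ 3)
      (deriv (deriv g) r / r ^ 2 - 3 * deriv g r / r ^ 3 + 3 * g r / r ^ 4) r := by
  have hdg : ContDiff ℝ 1 (deriv g) := by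
    have := (contDiff_succ_iff_deriv (n := 1)).mp (by exact_mod_cast hg)
    exact this.2.2
  have h1 : HasDerivAt (deriv g) (deriv (deriv g) r) r :=
    ((hdg.differentiable one_ne_zero) r).hasDerivAt
  have h2 : HasDerivAt g (deriv g r) r := ((hg.differentiable (by norm_num)) r).hasDerivAt
  have hp2 : HasDerivAt (fun t : ℝ => t ^ 2) (2 * r ^ 1) r := by
    simpa using hasDerivAt_pow 2 r
  have hp3 : HasDerivAt (fun t : ℝ => t ^ 3) (3 * r ^ 2) r := by
    simpa using hasDerivAt_pow 3 r
  have hd1 := h1.div hp2 (pow_ne_zero 2 hr)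
  have hd2 := h2.div hp3 (pow_ne_zero 3 hr)
  have := hd1.sub hd2
  refine this.congr_deriv ?_
  field_simp
  ring

section main
variable {α₁ α₂ C₀ : ℝ} {g : ℝ → ℝ}



variable (hα₁ : 0 < α₁) (hα : α₁ ≤ α₂) (hC₀ : 0 < C₀)
    (hg : ContDiff ℝ 2 g) (hg0 : g 0 = 0) (hg'0 : deriv g 0 = 0)
    (hg'' : ∀ s : ℝ, |deriv (deriv g) s| ≤ C₀ * (|s| ^ α₁ + |s| ^ α₂))

include hα₁ hα hC₀ hg hg0 hg'0 hg'' in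
lemma phi_bound : ∀ r : ℝ, 0 < r → |g r / r| ≤ C₀ * (r ^ α₁ + r ^ α₂) * r := by
  intro r hr
  have h := g_bound hα₁ hα hg hg0 hg'0 hg'' hC₀ r
  rw [_root_.abs_of_pos hr] at h
  rw [abs_div, _root_.abs_of_pos hr, div_le_iff₀ hr]
  nlinarith

include hα₁ hα hC₀ hg hg0 hg'0 hg'' in
lemma dphi_bound : ∀ r : ℝ, 0 < r →
    |deriv g r / r - g r / r ^ 2| ≤ 2 * C₀ * (r ^ α₁ + r ^ α₂) := by
  intro r hr
  have h1 := gderiv_bound hα₁ hα hg hg'0 hg'' hC₀ r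
  have h2 := g_bound hα₁ hα hg hg0 hg'0 hg'' hC₀ r
  rw [_root_.abs_of_pos hr] at h1 h2
  have e1 : |deriv g r / r| ≤ C₀ * (r ^ α₁ + r ^ α₂) := by
    rw [abs_div, _root_.abs_of_pos hr, div_le_iff₀ hr]; nlinarith
  have e2 : |g r / r ^ 2| ≤ C₀ * (r ^ α₁ + r ^ α₂) := by
    rw [abs_div, _root_.abs_of_pos (pow_pos hr 2), div_le_iff₀ (pow_pos hr 2)]; nlinarith
  calc |deriv g r / r - g r / r ^ 2| ≤ |deriv g r / r| + |g r / r ^ 2| := abs_sub _ _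
    _ ≤ 2 * C₀ * (r ^ α₁ + r ^ α₂) := by linarith

include hα₁ hα hC₀ hg hg0 hg'0 hg'' in
lemma q_bound : ∀ r : ℝ, 0 < r →
    |deriv g r / r ^ 2 - g r / r ^ 3| ≤ 2 * C₀ * (r ^ α₁ + r ^ α₂) / r := by
  intro r hr
  have h1 := gderiv_bound hα₁ hα hg hg'0 hg'' hC₀ r
  have h2 := g_bound hα₁ hα hg hg0 hg'0 hg'' hC₀ r
  rw [_root_.abs_of_pos hr] at h1 h2
  have e1 : |deriv g r / r ^ 2| ≤ C₀ * (r ^ α₁ + r ^ α₂) / r := by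
    rw [abs_div, _root_.abs_of_pos (pow_pos hr 2),
      div_le_div_iff₀ (pow_pos hr 2) hr]; nlinarith
  have e2 : |g r / r ^ 3| ≤ C₀ * (r ^ α₁ + r ^ α₂) / r := by
    rw [abs_div, _root_.abs_of_pos (pow_pos hr 3),
      div_le_div_iff₀ (pow_pos hr 3) hr]; nlinarith
  calc |deriv g r / r ^ 2 - g r / r ^ 3| ≤ |deriv g r / r ^ 2| + |g r / r ^ 3| := abs_sub _ _
    _ ≤ 2 * C₀ * (r ^ α₁ + r ^ α₂) / r := by
        have : C₀ * (r ^ α₁ + r ^ α₂) / r + C₀ * (r ^ α₁ + r ^ α₂) / r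
            = 2 * C₀ * (r ^ α₁ + r ^ α₂) / r := by ring
        linarith
        
include hα₁ hα hC₀ hg hg0 hg'0 hg'' in
lemma dq_bound : ∀ r : ℝ, 0 < r →
    |deriv (deriv g) r / r ^ 2 - 3 * deriv g r / r ^ 3 + 3 * g r / r ^ 4|
      ≤ 7 * C₀ * (r ^ α₁ + r ^ α₂) / (r * r) := by
  intro r hr
  have h0 := hg'' r
  have h1 := gderiv_bound hα₁ hα hg hg'0 hg'' hC₀ r
  have h2 := g_bound hα₁ hα hg hg0 hg'0 hg'' hC₀ r
  rw [_root_.abs_of_pos hr] at h0 h1 h2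
  have e0 : |deriv (deriv g) r / r ^ 2| ≤ C₀ * (r ^ α₁ + r ^ α₂) / (r * r) := by
    rw [abs_div, _root_.abs_of_pos (pow_pos hr 2),
      div_le_div_iff₀ (pow_pos hr 2) (by positivity)]; nlinarith
  have e1 : |3 * deriv g r / r ^ 3| ≤ 3 * C₀ * (r ^ α₁ + r ^ α₂) / (r * r) := by
    rw [abs_div, _root_.abs_of_pos (pow_pos hr 3),
      div_le_div_iff₀ (pow_pos hr 3) (by positivity), abs_mul]
    have : |(3:ℝ)| = 3 := by norm_num
    rw [this]; nlinarith
  have e2 : |3 * g r / r ^ 4| ≤ 3 * C₀ * (r ^ α₁ + r ^ α₂) / (r * r) := by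
    rw [abs_div, _root_.abs_of_pos (pow_pos hr 4),
      div_le_div_iff₀ (pow_pos hr 4) (by positivity), abs_mul]
    have : |(3:ℝ)| = 3 := by norm_num
    rw [this]; nlinarith
  calc |deriv (deriv g) r / r ^ 2 - 3 * deriv g r / r ^ 3 + 3 * g r / r ^ 4|
      ≤ |deriv (deriv g) r / r ^ 2 - 3 * deriv g r / r ^ 3| + |3 * g r / r ^ 4| := abs_add_le _ _
    _ ≤ |deriv (deriv g) r / r ^ 2| + |3 * deriv g r / r ^ 3| + |3 * g r / r ^ 4| := by
        linarith [abs_sub (deriv (deriv g) r / r ^ 2) (3 * deriv g r / r ^ 3)]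
    _ ≤ 7 * C₀ * (r ^ α₁ + r ^ α₂) / (r * r) := by
        have : C₀ * (r ^ α₁ + r ^ α₂) / (r * r) + 3 * C₀ * (r ^ α₁ + r ^ α₂) / (r * r)
            + 3 * C₀ * (r ^ α₁ + r ^ α₂) / (r * r)
            = 7 * C₀ * (r ^ α₁ + r ^ α₂) / (r * r) := by ring
        linarith

end main

section S5
variable {α₁ α₂ C₀ : ℝ} {g : ℝ → ℝ} {G : ℂ → ℂ}






variable (hα₁ : 0 < α₁) (hα : α₁ ≤ α₂) (hC₀ : 0 < C₀)
    (hg : ContDiff ℝ 2 g) (hg0 : g 0 = 0) (hg'0 : deriv g 0 = 0)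
    (hg'' : ∀ s : ℝ, |deriv (deriv g) s| ≤ C₀ * (|s| ^ α₁ + |s| ^ α₂))
    (hG0 : G 0 = 0)
    (hGdef : ∀ z : ℂ, z ≠ 0 → G z = (z / (Complex.abs z : ℂ)) * (g (Complex.abs z) : ℂ))

include hα₁ hα hC₀ hg hg0 hg'0 hg'' hG0 hGdef in
lemma opnorm_bound :
    ∀ z : ℂ, ‖fderiv ℝ G z‖
      ≤ 3 * C₀ * ((Complex.abs z) ^ α₁ + (Complex.abs z) ^ α₂) * Complex.abs z := by
  intro z
  rcases eq_or_ne z 0 with rfl | hz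
  · rw [(hasFDerivAt_G_zero hα₁ hα hC₀ hg hg0 hg'0 hg'' hG0 hGdef).fderiv]
    simp
  · have hr : 0 < Complex.abs z := by simpa using hz
    refine ContinuousLinearMap.opNorm_le_bound _ (by positivity) (fun w => ?_)
    rw [fderiv_G_apply hg hg0 hG0 hGdef hz w]
    set r := Complex.abs z with hrdef
    have hnz : ‖z‖ = r := Complex.norm_eq_abs z
    have hS : |z.re * w.re + z.im * w.im| ≤ r * ‖w‖ := by
      have := Sbound z w
      rwa [← Complex.norm_eq_abs w] at this
    have h1 : ‖(g r / r) • w‖ ≤ C₀ * (r ^ α₁ + r ^ α₂) * r * ‖w‖ := by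
      rw [norm_smul, Real.norm_eq_abs]
      exact mul_le_mul_of_nonneg_right (phi_bound hα₁ hα hC₀ hg hg0 hg'0 hg'' r hr)
        (norm_nonneg w)
    have h2 : ‖((deriv g r / r ^ 2 - g r / r ^ 3) * (z.re * w.re + z.im * w.im)) • z‖
        ≤ 2 * C₀ * (r ^ α₁ + r ^ α₂) * r * ‖w‖ := by
      rw [norm_smul, Real.norm_eq_abs, abs_mul, hnz]
      calc |deriv g r / r ^ 2 - g r / r ^ 3| * |z.re * w.re + z.im * w.im| * r
          ≤ (2 * C₀ * (r ^ α₁ + r ^ α₂) / r) * (r * ‖w‖) * r := by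
            gcongr
            exact q_bound hα₁ hα hC₀ hg hg0 hg'0 hg'' r hr
        _ = 2 * C₀ * (r ^ α₁ + r ^ α₂) * r * ‖w‖ := by field_simp
    calc ‖(g r / r) • w + ((deriv g r / r ^ 2 - g r / r ^ 3)
            * (z.re * w.re + z.im * w.im)) • z‖
        ≤ ‖(g r / r) • w‖ + ‖((deriv g r / r ^ 2 - g r / r ^ 3)
            * (z.re * w.re + z.im * w.im)) • z‖ := norm_add_le _ _
      _ ≤ C₀ * (r ^ α₁ + r ^ α₂) * r * ‖w‖ + 2 * C₀ * (r ^ α₁ + r ^ α₂) * r * ‖w‖ := by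
          linarith
      _ = 3 * C₀ * (r ^ α₁ + r ^ α₂) * r * ‖w‖ := by ring
end S5

section S6
variable {α₁ α₂ C₀ : ℝ} {g : ℝ → ℝ} {G : ℂ → ℂ}









variable (hα₁ : 0 < α₁) (hα : α₁ ≤ α₂) (hC₀ : 0 < C₀)
    (hg : ContDiff ℝ 2 g) (hg0 : g 0 = 0) (hg'0 : deriv g 0 = 0)
    (hg'' : ∀ s : ℝ, |deriv (deriv g) s| ≤ C₀ * (|s| ^ α₁ + |s| ^ α₂))
    (hG0 : G 0 = 0)
    (hGdef : ∀ z : ℂ, z ≠ 0 → G z = (z / (Complex.abs z : ℂ)) * (g (Complex.abs z) : ℂ))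

include hα₁ hα hC₀ hg hg0 hg'0 hg'' hG0 hGdef in
set_option maxHeartbeats 1000000 in
lemma lip_aux {x y : ℂ} (hyx : Complex.abs y ≤ Complex.abs x) :
    ‖fderiv ℝ G x - fderiv ℝ G y‖
      ≤ 38 * C₀ * (((Complex.abs x) ^ α₁ + (Complex.abs x) ^ α₂)
          + ((Complex.abs y) ^ α₁ + (Complex.abs y) ^ α₂)) * ‖x - y‖ := by
  set rx := Complex.abs x with hrx
  set ry := Complex.abs y with hry
  have hrx0 : 0 ≤ rx := Complex.abs.nonneg x
  have hry0 : 0 ≤ ry := Complex.abs.nonneg y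
  set Px := rx ^ α₁ + rx ^ α₂ with hPx
  set Py := ry ^ α₁ + ry ^ α₂ with hPy
  have hPx0 : 0 ≤ Px := by positivity
  have hPy0 : 0 ≤ Py := by positivity
  have hPyx : Py ≤ Px := by
    have := Real.rpow_le_rpow hry0 hyx hα₁.le
    have := Real.rpow_le_rpow hry0 hyx (hα₁.trans_le hα).le
    rw [hPx, hPy]; linarith
  set d := ‖x - y‖ with hd
  have hd0 : 0 ≤ d := norm_nonneg _
  have habs : |rx - ry| ≤ d := by
    have := abs_norm_sub_norm_le x y
    rwa [Complex.norm_eq_abs, Complex.norm_eq_abs] at this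
  rcases le_or_gt rx (2 * d) with hcase | hcase
  · -- crude case
    have b1 := opnorm_bound hα₁ hα hC₀ hg hg0 hg'0 hg'' hG0 hGdef x
    have b2 := opnorm_bound hα₁ hα hC₀ hg hg0 hg'0 hg'' hG0 hGdef y
    calc ‖fderiv ℝ G x - fderiv ℝ G y‖ ≤ ‖fderiv ℝ G x‖ + ‖fderiv ℝ G y‖ := norm_sub_le _ _
      _ ≤ 3 * C₀ * Px * rx + 3 * C₀ * Py * ry := by rw [hPx, hPy]; exact add_le_add b1 b2
      _ ≤ 38 * C₀ * (Px + Py) * d := by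
          nlinarith [mul_nonneg (mul_nonneg hC₀.le hPx0) hd0,
            mul_nonneg (mul_nonneg hC₀.le hPy0) hd0,
            mul_le_mul_of_nonneg_left hcase (mul_nonneg (by positivity : (0:ℝ) ≤ 3 * C₀) hPx0),
            mul_le_mul_of_nonneg_left (hyx.trans hcase) (mul_nonneg (by positivity : (0:ℝ) ≤ 3 * C₀) hPy0)]
  · -- smooth case
    have hrxpos : 0 < rx := lt_of_le_of_lt (by positivity) hcase
    have hrypos : rx / 2 < ry := by
      have h1 : rx - ry ≤ |rx - ry| := le_abs_self _
      linarith
    have hry_pos : 0 < ry := by linarith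
    have hx0 : x ≠ 0 := by
      rintro rfl; rw [hrx] at hrxpos; simp at hrxpos
    have hy0 : y ≠ 0 := by
      rintro rfl; rw [hry] at hry_pos; simp at hry_pos
    -- MVT for phi
    have hIcc : ∀ t ∈ Icc ry rx, 0 < t ∧ t ≤ rx := fun t ht => ⟨lt_of_lt_of_le hry_pos ht.1, ht.2⟩
    have Pmono : ∀ t, 0 ≤ t → t ≤ rx → t ^ α₁ + t ^ α₂ ≤ Px := by
      intro t ht0 htx
      have := Real.rpow_le_rpow ht0 htx hα₁.le
      have := Real.rpow_le_rpow ht0 htx (hα₁.trans_le hα).le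
      rw [hPx]; linarith
    have hphiMVT : |g rx / rx - g ry / ry| ≤ 2 * C₀ * Px * d := by
      have := Convex.norm_image_sub_le_of_norm_hasDerivWithin_le
        (f := fun t => g t / t) (f' := fun t => deriv g t / t - g t / t ^ 2)
        (s := Icc ry rx) (C := 2 * C₀ * Px)
        (fun t ht => (hasDerivAt_phi hg (hIcc t ht).1.ne').hasDerivWithinAt)
        (fun t ht => by
          have hb := dphi_bound hα₁ hα hC₀ hg hg0 hg'0 hg'' t (hIcc t ht).1
          have hm := Pmono t (hIcc t ht).1.le (hIcc t ht).2
          rw [Real.norm_eq_abs]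
          calc |deriv g t / t - g t / t ^ 2| ≤ 2 * C₀ * (t ^ α₁ + t ^ α₂) := hb
            _ ≤ 2 * C₀ * Px := by nlinarith)
        (convex_Icc _ _) ⟨le_refl ry, hyx⟩ ⟨hyx, le_refl rx⟩
      rw [Real.norm_eq_abs, Real.norm_eq_abs] at this
      calc |g rx / rx - g ry / ry| ≤ 2 * C₀ * Px * |rx - ry| := this
        _ ≤ 2 * C₀ * Px * d := mul_le_mul_of_nonneg_left habs (by positivity)
    have hqMVT : |(deriv g rx / rx ^ 2 - g rx / rx ^ 3)
        - (deriv g ry / ry ^ 2 - g ry / ry ^ 3)| ≤ 28 * C₀ * Px / (rx * rx) * d := by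
      have := Convex.norm_image_sub_le_of_norm_hasDerivWithin_le
        (f := fun t => deriv g t / t ^ 2 - g t / t ^ 3)
        (f' := fun t => deriv (deriv g) t / t ^ 2 - 3 * deriv g t / t ^ 3 + 3 * g t / t ^ 4)
        (s := Icc ry rx) (C := 28 * C₀ * Px / (rx * rx))
        (fun t ht => (hasDerivAt_q hg (hIcc t ht).1.ne').hasDerivWithinAt)
        (fun t ht => by
          have htpos := (hIcc t ht).1
          have htx := (hIcc t ht).2
          have hb := dq_bound hα₁ hα hC₀ hg hg0 hg'0 hg'' t htpos
          have hm := Pmono t htpos.le htx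
          rw [Real.norm_eq_abs]
          refine hb.trans ?_
          rw [div_le_div_iff₀ (by positivity) (by positivity)]
          have hty : ry ≤ t := ht.1
          have h4 : rx < 2 * t := by linarith
          have ht2 : rx * rx < 4 * (t * t) := by
            nlinarith [mul_lt_mul_of_pos_right h4 hrxpos, mul_lt_mul_of_pos_left h4 htpos]
          have e1 : 7 * C₀ * (t ^ α₁ + t ^ α₂) * (rx * rx) ≤ 7 * C₀ * Px * (rx * rx) := by
            have := mul_le_mul_of_nonneg_left hm (by positivity : (0:ℝ) ≤ 7 * C₀)
            exact mul_le_mul_of_nonneg_right this (by positivity)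
          have e2 : 7 * C₀ * Px * (rx * rx) ≤ 7 * C₀ * Px * (4 * (t * t)) :=
            mul_le_mul_of_nonneg_left ht2.le (by positivity)
          linarith)
        (convex_Icc _ _) ⟨le_refl ry, hyx⟩ ⟨hyx, le_refl rx⟩
      rw [Real.norm_eq_abs, Real.norm_eq_abs] at this
      calc |(deriv g rx / rx ^ 2 - g rx / rx ^ 3) - (deriv g ry / ry ^ 2 - g ry / ry ^ 3)|
          ≤ 28 * C₀ * Px / (rx * rx) * |rx - ry| := this
        _ ≤ 28 * C₀ * Px / (rx * rx) * d :=
            mul_le_mul_of_nonneg_left habs (by positivity)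
    have hqy : |deriv g ry / ry ^ 2 - g ry / ry ^ 3| ≤ 4 * C₀ * Px / rx := by
      have hb := q_bound hα₁ hα hC₀ hg hg0 hg'0 hg'' ry hry_pos
      refine hb.trans ?_
      rw [div_le_div_iff₀ hry_pos hrxpos]
      have e1 : 2 * C₀ * Py ≤ 2 * C₀ * Px :=
        mul_le_mul_of_nonneg_left hPyx (by positivity)
      have e2 := mul_le_mul_of_nonneg_right e1 hrx0
      have e3 := mul_le_mul_of_nonneg_left (show rx / 2 ≤ ry by linarith)
          (by positivity : (0:ℝ) ≤ 4 * C₀ * Px)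
      have e4 : 2 * C₀ * Px * rx = 4 * C₀ * Px * (rx / 2) := by ring
      have e5 : 2 * C₀ * (ry ^ α₁ + ry ^ α₂) * rx = 2 * C₀ * Py * rx := by rw [hPy]
      exact le_trans (le_of_eq e5) (le_trans e2 (le_trans (le_of_eq e4) e3))
    -- now bound the operator norm
    refine ContinuousLinearMap.opNorm_le_bound _ (by positivity) (fun w => ?_)
    rw [ContinuousLinearMap.sub_apply, fderiv_G_apply hg hg0 hG0 hGdef hx0 w,
      fderiv_G_apply hg hg0 hG0 hGdef hy0 w]
    rw [← hrx, ← hry]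
    set φx := g rx / rx
    set φy := g ry / ry
    set qx := deriv g rx / rx ^ 2 - g rx / rx ^ 3 with hqxdef
    set qy := deriv g ry / ry ^ 2 - g ry / ry ^ 3 with hqydef
    set Sx := x.re * w.re + x.im * w.im with hSx
    set Sy := y.re * w.re + y.im * w.im with hSy
    have hdecomp : (φx • w + (qx * Sx) • x) - (φy • w + (qy * Sy) • y)
        = (φx - φy) • w + ((qx - qy) * Sx) • x + (qy * (Sx - Sy)) • x
          + (qy * Sy) • (x - y) := by
      simp only [Complex.real_smul]
      push_cast
      ring
    rw [hdecomp]
    have hSxb : |Sx| ≤ rx * ‖w‖ := by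
      have := Sbound x w; rwa [← Complex.norm_eq_abs w, ← hrx] at this
    have hSyb : |Sy| ≤ ry * ‖w‖ := by
      have := Sbound y w; rwa [← Complex.norm_eq_abs w, ← hry] at this
    have hSdiff : |Sx - Sy| ≤ d * ‖w‖ := by
      have h1 : Sx - Sy = (x - y).re * w.re + (x - y).im * w.im := by
        rw [hSx, hSy, Complex.sub_re, Complex.sub_im]; ring
      rw [h1]
      have := Sbound (x - y) w
      rwa [← Complex.norm_eq_abs w, ← Complex.norm_eq_abs (x - y), ← hd] at this
    have hw0 : 0 ≤ ‖w‖ := norm_nonneg w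
    have T1 : ‖(φx - φy) • w‖ ≤ 2 * C₀ * Px * d * ‖w‖ := by
      rw [norm_smul, Real.norm_eq_abs]
      exact mul_le_mul_of_nonneg_right hphiMVT hw0
    have T2 : ‖((qx - qy) * Sx) • x‖ ≤ 28 * C₀ * Px * d * ‖w‖ := by
      rw [norm_smul, Real.norm_eq_abs, abs_mul, Complex.norm_eq_abs, ← hrx]
      calc |qx - qy| * |Sx| * rx ≤ (28 * C₀ * Px / (rx * rx) * d) * (rx * ‖w‖) * rx := by
            gcongr <;> first | exact hqMVT | skip
        _ = 28 * C₀ * Px * d * ‖w‖ := by field_simp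
    have T3 : ‖(qy * (Sx - Sy)) • x‖ ≤ 4 * C₀ * Px * d * ‖w‖ := by
      rw [norm_smul, Real.norm_eq_abs, abs_mul, Complex.norm_eq_abs, ← hrx]
      calc |qy| * |Sx - Sy| * rx ≤ (4 * C₀ * Px / rx) * (d * ‖w‖) * rx := by
            gcongr
        _ = 4 * C₀ * Px * d * ‖w‖ := by field_simp
    have T4 : ‖(qy * Sy) • (x - y)‖ ≤ 4 * C₀ * Px * d * ‖w‖ := by
      rw [norm_smul, Real.norm_eq_abs, abs_mul, ← hd]
      calc |qy| * |Sy| * d ≤ (4 * C₀ * Px / rx) * (rx * ‖w‖) * d := by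
            gcongr
            calc |Sy| ≤ ry * ‖w‖ := hSyb
              _ ≤ rx * ‖w‖ := by nlinarith
        _ = 4 * C₀ * Px * d * ‖w‖ := by field_simp
    calc ‖(φx - φy) • w + ((qx - qy) * Sx) • x + (qy * (Sx - Sy)) • x + (qy * Sy) • (x - y)‖
        ≤ ‖(φx - φy) • w + ((qx - qy) * Sx) • x + (qy * (Sx - Sy)) • x‖
          + ‖(qy * Sy) • (x - y)‖ := norm_add_le _ _
      _ ≤ ‖(φx - φy) • w + ((qx - qy) * Sx) • x‖ + ‖(qy * (Sx - Sy)) • x‖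
          + ‖(qy * Sy) • (x - y)‖ := by linarith [norm_add_le ((φx - φy) • w + ((qx - qy) * Sx) • x) ((qy * (Sx - Sy)) • x)]
      _ ≤ ‖(φx - φy) • w‖ + ‖((qx - qy) * Sx) • x‖ + ‖(qy * (Sx - Sy)) • x‖
          + ‖(qy * Sy) • (x - y)‖ := by linarith [norm_add_le ((φx - φy) • w) (((qx - qy) * Sx) • x)]
      _ ≤ 38 * C₀ * Px * d * ‖w‖ := by linarith
      _ ≤ 38 * C₀ * (Px + Py) * d * ‖w‖ := by
          have e6 : 38 * C₀ * (Px + Py) * d * ‖w‖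
              = 38 * C₀ * Px * d * ‖w‖ + 38 * C₀ * Py * d * ‖w‖ := by ring
          have e7 : 0 ≤ 38 * C₀ * Py * d * ‖w‖ := by positivity
          linarith
end S6

lemma algF1 {α A B C : ℝ} (hα : 0 ≤ α) (hA : 0 ≤ A) (hB : 0 ≤ B) (hC : 0 ≤ C) :
    (A + B + C) ^ α ≤ 3 ^ α * (A ^ α + B ^ α + C ^ α) := by
  set m := max A (max B C) with hm
  have hA' : A ≤ m := le_max_left _ _
  have hB' : B ≤ m := le_trans (le_max_left B C) (le_max_right _ _)
  have hC' : C ≤ m := le_trans (le_max_right B C) (le_max_right _ _)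
  have hm0 : 0 ≤ m := le_trans hA hA'
  have h1 : A + B + C ≤ 3 * m := by linarith
  have hmle : m ^ α ≤ A ^ α + B ^ α + C ^ α := by
    have hcases : m = A ∨ m = B ∨ m = C := by
      rcases max_choice A (max B C) with h | h
      · exact Or.inl h
      · rcases max_choice B C with h' | h' <;> rw [hm, h, h']
        · exact Or.inr (Or.inl rfl)
        · exact Or.inr (Or.inr rfl)
    have nA : 0 ≤ A ^ α := Real.rpow_nonneg hA α
    have nB : 0 ≤ B ^ α := Real.rpow_nonneg hB α
    have nC : 0 ≤ C ^ α := Real.rpow_nonneg hC α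
    rcases hcases with h | h | h <;> rw [h] <;> linarith
  calc (A + B + C) ^ α ≤ (3 * m) ^ α := Real.rpow_le_rpow (by linarith) h1 hα
    _ = 3 ^ α * m ^ α := Real.mul_rpow (by norm_num) hm0
    _ ≤ 3 ^ α * (A ^ α + B ^ α + C ^ α) :=
        mul_le_mul_of_nonneg_left hmle (Real.rpow_nonneg (by norm_num) α)

lemma algF3 {α B : ℝ} (hα : 0 ≤ α) (hB : 0 ≤ B) : B ^ α * B = B ^ (1 + α) := by
  rcases eq_or_lt_of_le hB with h | h
  · rw [← h]
    rw [Real.zero_rpow (by positivity : (1:ℝ) + α ≠ 0), mul_zero]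
  · rw [add_comm, Real.rpow_add_one h.ne']

lemma algF2 {α B C : ℝ} (hα : 0 ≤ α) (hB : 0 ≤ B) (hC : 0 ≤ C) :
    B ^ α * C ≤ B ^ (1 + α) + C ^ (1 + α) := by
  have nB : 0 ≤ B ^ (1 + α) := Real.rpow_nonneg hB _
  have nC : 0 ≤ C ^ (1 + α) := Real.rpow_nonneg hC _
  rcases le_total B C with h | h
  · have : B ^ α * C ≤ C ^ α * C :=
      mul_le_mul_of_nonneg_right (Real.rpow_le_rpow hB h hα) hC
    rw [algF3 hα hC] at this
    linarith
  · have : B ^ α * C ≤ B ^ α * B :=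
      mul_le_mul_of_nonneg_left h (Real.rpow_nonneg hB α)
    rw [algF3 hα hB] at this
    linarith

set_option maxHeartbeats 1000000 in
lemma alg_main {α₁ α₂ : ℝ} (hα₁ : 0 < α₁) (hα : α₁ ≤ α₂) {A r1 r2 : ℝ}
    (hA : 0 ≤ A) (h1 : 0 ≤ r1) (h2 : 0 ≤ r2) :
    (((A + (r1 + r2)) ^ α₁ + (A + (r1 + r2)) ^ α₂) + (A ^ α₁ + A ^ α₂)) * (r1 + r2)
      ≤ 3 * (3 ^ α₂ + 1) * ((A ^ α₁ + A ^ α₂) * (r1 + r2)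
          + r1 ^ (1 + α₁) + r2 ^ (1 + α₁) + r1 ^ (1 + α₂) + r2 ^ (1 + α₂)) := by
  have hα₂ : 0 < α₂ := lt_of_lt_of_le hα₁ hα
  rw [show A + (r1 + r2) = A + r1 + r2 by ring]
  have hZ : 0 ≤ r1 + r2 := by linarith
  have hT : (3:ℝ) ^ α₁ ≤ 3 ^ α₂ :=
    Real.rpow_le_rpow_left_iff (by norm_num : (1:ℝ) < 3) |>.mpr hα
  have hT2 : (1:ℝ) ≤ 3 ^ α₂ := by
    rw [show (1:ℝ) = 3 ^ (0:ℝ) by simp]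
    exact Real.rpow_le_rpow_left_iff (by norm_num) |>.mpr hα₂.le
  have hF1a := mul_le_mul_of_nonneg_right
    (algF1 (α := α₁) hα₁.le hA h1 h2) hZ
  have hF1b := mul_le_mul_of_nonneg_right
    (algF1 (α := α₂) hα₂.le hA h1 h2) hZ
  have hTa := mul_le_mul_of_nonneg_right hT
    (mul_nonneg (Real.rpow_nonneg hA α₁) hZ)
  have hT11 := mul_le_mul_of_nonneg_right hT
    (mul_nonneg (Real.rpow_nonneg h1 α₁) hZ)
  have hT21 := mul_le_mul_of_nonneg_right hT
    (mul_nonneg (Real.rpow_nonneg h2 α₁) hZ)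
  have htail11 : r1 ^ α₁ * (r1 + r2) ≤ 2 * r1 ^ (1 + α₁) + r2 ^ (1 + α₁) := by
    have := algF2 hα₁.le h1 h2
    have := algF3 hα₁.le h1
    nlinarith
  have htail21 : r2 ^ α₁ * (r1 + r2) ≤ r1 ^ (1 + α₁) + 2 * r2 ^ (1 + α₁) := by
    have := algF2 hα₁.le h2 h1
    have := algF3 hα₁.le h2
    nlinarith
  have htail12 : r1 ^ α₂ * (r1 + r2) ≤ 2 * r1 ^ (1 + α₂) + r2 ^ (1 + α₂) := by
    have := algF2 hα₂.le h1 h2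
    have := algF3 hα₂.le h1
    nlinarith
  have htail22 : r2 ^ α₂ * (r1 + r2) ≤ r1 ^ (1 + α₂) + 2 * r2 ^ (1 + α₂) := by
    have := algF2 hα₂.le h2 h1
    have := algF3 hα₂.le h2
    nlinarith
  have hq11 := mul_le_mul_of_nonneg_left htail11 (by positivity : (0:ℝ) ≤ 3 ^ α₂)
  have hq21 := mul_le_mul_of_nonneg_left htail21 (by positivity : (0:ℝ) ≤ 3 ^ α₂)
  have hq12 := mul_le_mul_of_nonneg_left htail12 (by positivity : (0:ℝ) ≤ 3 ^ α₂)
  have hq22 := mul_le_mul_of_nonneg_left htail22 (by positivity : (0:ℝ) ≤ 3 ^ α₂)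
  have hq11' := mul_le_mul_of_nonneg_left htail11 (by norm_num : (0:ℝ) ≤ 1)
  have npa1Z : 0 ≤ A ^ α₁ * (r1 + r2) := mul_nonneg (Real.rpow_nonneg hA α₁) hZ
  have npa2Z : 0 ≤ A ^ α₂ * (r1 + r2) := mul_nonneg (Real.rpow_nonneg hA α₂) hZ
  have nq11 : 0 ≤ r1 ^ (1 + α₁) := Real.rpow_nonneg h1 _
  have nq21 : 0 ≤ r2 ^ (1 + α₁) := Real.rpow_nonneg h2 _
  have nq12 : 0 ≤ r1 ^ (1 + α₂) := Real.rpow_nonneg h1 _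
  have nq22 : 0 ≤ r2 ^ (1 + α₂) := Real.rpow_nonneg h2 _
  have hTa2 := mul_le_mul_of_nonneg_right hT2
    (add_nonneg (add_nonneg (add_nonneg nq11 nq21) nq12) nq22)
  have n3 : (0:ℝ) ≤ (3:ℝ) ^ α₂ := Real.rpow_nonneg (by norm_num) α₂
  have nTpa1 := mul_nonneg n3 npa1Z
  have nTpa2 := mul_nonneg n3 npa2Z
  have nTq11 := mul_nonneg n3 nq11
  have nTq21 := mul_nonneg n3 nq21
  have nTq12 := mul_nonneg n3 nq12
  have nTq22 := mul_nonneg n3 nq22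
  have hx1 := mul_le_mul_of_nonneg_right hT2 npa1Z
  have hx2 := mul_le_mul_of_nonneg_right hT2 npa2Z
  linarith

section S8
variable {α₁ α₂ C₀ : ℝ} {g : ℝ → ℝ} {G : ℂ → ℂ}




variable (hα₁ : 0 < α₁) (hα : α₁ ≤ α₂) (hC₀ : 0 < C₀)
    (hg : ContDiff ℝ 2 g) (hg0 : g 0 = 0) (hg'0 : deriv g 0 = 0)
    (hg'' : ∀ s : ℝ, |deriv (deriv g) s| ≤ C₀ * (|s| ^ α₁ + |s| ^ α₂))
    (hG0 : G 0 = 0)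
    (hGdef : ∀ z : ℂ, z ≠ 0 → G z = (z / (Complex.abs z : ℂ)) * (g (Complex.abs z) : ℂ))

include hα₁ hα hC₀ hg hg0 hg'0 hg'' hG0 hGdef in
lemma lip : ∀ x y : ℂ, ‖fderiv ℝ G x - fderiv ℝ G y‖
      ≤ 38 * C₀ * (((Complex.abs x) ^ α₁ + (Complex.abs x) ^ α₂)
          + ((Complex.abs y) ^ α₁ + (Complex.abs y) ^ α₂)) * ‖x - y‖ := by
  intro x y
  rcases le_total (Complex.abs y) (Complex.abs x) with h | h
  · exact lip_aux hα₁ hα hC₀ hg hg0 hg'0 hg'' hG0 hGdef h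
  · have := lip_aux hα₁ hα hC₀ hg hg0 hg'0 hg'' hG0 hGdef h
    rw [norm_sub_rev, norm_sub_rev x y]
    refine this.trans (le_of_eq ?_)
    ring

include hα₁ hα hC₀ hg hg0 hg'0 hg'' hG0 hGdef in
lemma final : ∀ a z₁ z₂ : ℂ,
    Complex.abs ((G (a + z₁) - G a - fderiv ℝ G a z₁) - (G (a + z₂) - G a - fderiv ℝ G a z₂))
      ≤ (114 * C₀ * (3 ^ α₂ + 1))
          * ((Complex.abs a ^ α₁ + Complex.abs a ^ α₂) * (Complex.abs z₁ + Complex.abs z₂)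
            + Complex.abs z₁ ^ (1 + α₁) + Complex.abs z₂ ^ (1 + α₁)
            + Complex.abs z₁ ^ (1 + α₂) + Complex.abs z₂ ^ (1 + α₂))
          * Complex.abs (z₁ - z₂) := by
  intro a z₁ z₂
  set A := Complex.abs a with hA
  set r1 := Complex.abs z₁ with hr1
  set r2 := Complex.abs z₂ with hr2
  have hA0 : 0 ≤ A := Complex.abs.nonneg a
  have h10 : 0 ≤ r1 := Complex.abs.nonneg z₁
  have h20 : 0 ≤ r2 := Complex.abs.nonneg z₂
  set B := 38 * C₀ * (((A + (r1 + r2)) ^ α₁ + (A + (r1 + r2)) ^ α₂) + (A ^ α₁ + A ^ α₂))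
      * (r1 + r2) with hB
  have hdiffAll : ∀ p : ℂ, DifferentiableAt ℝ G p := by
    intro p
    rcases eq_or_ne p 0 with rfl | hp
    · exact (hasFDerivAt_G_zero hα₁ hα hC₀ hg hg0 hg'0 hg'' hG0 hGdef).differentiableAt
    · exact (hasFDerivAt_G hg hg0 hG0 hGdef hp).differentiableAt
  have hsub : segment ℝ (a + z₂) (a + z₁) ⊆ Metric.closedBall a (r1 + r2) := by
    apply (convex_closedBall a (r1 + r2)).segment_subset
    · rw [Metric.mem_closedBall, dist_eq_norm]
      have : a + z₂ - a = z₂ := by ring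
      rw [this, Complex.norm_eq_abs, ← hr2]; linarith
    · rw [Metric.mem_closedBall, dist_eq_norm]
      have : a + z₁ - a = z₁ := by ring
      rw [this, Complex.norm_eq_abs, ← hr1]; linarith
  have hbound : ∀ x ∈ segment ℝ (a + z₂) (a + z₁),
      ‖fderiv ℝ G x - fderiv ℝ G a‖ ≤ B := by
    intro x hx
    have hxa : ‖x - a‖ ≤ r1 + r2 := by
      have := hsub hx
      rwa [Metric.mem_closedBall, dist_eq_norm] at this
    have habsx : Complex.abs x ≤ A + (r1 + r2) := by
      have h1 : Complex.abs x = ‖x‖ := (Complex.norm_eq_abs x).symm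
      have h2 : ‖x‖ ≤ ‖a‖ + ‖x - a‖ := by
        have : x = a + (x - a) := by ring
        calc ‖x‖ = ‖a + (x - a)‖ := by rw [← this]
          _ ≤ ‖a‖ + ‖x - a‖ := norm_add_le _ _
      rw [h1, hA]
      rw [Complex.norm_eq_abs a] at h2
      linarith
    have hl := lip hα₁ hα hC₀ hg hg0 hg'0 hg'' hG0 hGdef x a
    refine hl.trans ?_
    rw [hB]
    have hmono : ((Complex.abs x) ^ α₁ + (Complex.abs x) ^ α₂) + (A ^ α₁ + A ^ α₂)
        ≤ ((A + (r1 + r2)) ^ α₁ + (A + (r1 + r2)) ^ α₂) + (A ^ α₁ + A ^ α₂) := by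
      have e1 := Real.rpow_le_rpow (Complex.abs.nonneg x) habsx hα₁.le
      have e2 := Real.rpow_le_rpow (Complex.abs.nonneg x) habsx (hα₁.trans_le hα).le
      linarith
    have hn1 : 0 ≤ ((Complex.abs x) ^ α₁ + (Complex.abs x) ^ α₂) + (A ^ α₁ + A ^ α₂) := by
      have := Real.rpow_nonneg (Complex.abs.nonneg x) α₁
      have := Real.rpow_nonneg (Complex.abs.nonneg x) α₂
      have := Real.rpow_nonneg hA0 α₁
      have := Real.rpow_nonneg hA0 α₂
      linarith
    exact le_trans (mul_le_mul_of_nonneg_left hxa (by positivity))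
      (mul_le_mul_of_nonneg_right (mul_le_mul_of_nonneg_left hmono (by positivity))
        (by linarith))
  have key := Convex.norm_image_sub_le_of_norm_fderiv_le'
    (f := G) (φ := fderiv ℝ G a) (s := segment ℝ (a + z₂) (a + z₁)) (C := B)
    (x := a + z₂) (y := a + z₁)
    (fun x _ => hdiffAll x) hbound (convex_segment _ _)
    (left_mem_segment ℝ _ _) (right_mem_segment ℝ _ _)
  have heq : (G (a + z₁) - G a - fderiv ℝ G a z₁) - (G (a + z₂) - G a - fderiv ℝ G a z₂)
      = G (a + z₁) - G (a + z₂) - (fderiv ℝ G a) ((a + z₁) - (a + z₂)) := by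
    have h1 : (a + z₁) - (a + z₂) = z₁ - z₂ := by ring
    rw [h1, map_sub]
    ring
  have hnorm : ‖(a + z₁) - (a + z₂)‖ = Complex.abs (z₁ - z₂) := by
    have h1 : (a + z₁) - (a + z₂) = z₁ - z₂ := by ring
    rw [h1, Complex.norm_eq_abs]
  rw [← Complex.norm_eq_abs, heq]
  refine (key.trans_eq (by rw [hnorm])).trans ?_
  apply mul_le_mul_of_nonneg_right _ (Complex.abs.nonneg _)
  have halg := alg_main hα₁ hα hA0 h10 h20
  calc B ≤ 38 * C₀ * (3 * (3 ^ α₂ + 1) * ((A ^ α₁ + A ^ α₂) * (r1 + r2)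
        + r1 ^ (1 + α₁) + r2 ^ (1 + α₁) + r1 ^ (1 + α₂) + r2 ^ (1 + α₂))) := by
        rw [hB, mul_assoc (38 * C₀)]
        exact mul_le_mul_of_nonneg_left halg (by positivity)
    _ = (114 * C₀ * (3 ^ α₂ + 1)) * ((A ^ α₁ + A ^ α₂) * (r1 + r2)
        + r1 ^ (1 + α₁) + r2 ^ (1 + α₁) + r1 ^ (1 + α₂) + r2 ^ (1 + α₂)) := by ring
end S8

/-- With `g₂(a,z) = G(a+z) − G(a) − DG(a)[z]`, there is `C > 0` such that for all
`a, z₁, z₂ ∈ ℂ`: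
`|g₂(a,z₁) − g₂(a,z₂)| ≤ C·[(|a|^α₁+|a|^α₂)(|z₁|+|z₂|) + |z₁|^{1+α₁}+|z₂|^{1+α₁}+|z₁|^{1+α₂}+|z₂|^{1+α₂}]·|z₁−z₂|`. -/
theorem stmt_8 (α₁ α₂ C₀ : ℝ) (hα₁ : 1/2 < α₁) (hα : α₁ ≤ α₂) (hC₀ : 0 < C₀)
    (g : ℝ → ℝ) (hg : ContDiff ℝ 2 g) (hodd : ∀ s : ℝ, g (-s) = -g s)
    (hg0 : g 0 = 0) (hg'0 : deriv g 0 = 0)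
    (hg'' : ∀ s : ℝ, |deriv (deriv g) s| ≤ C₀ * (|s| ^ α₁ + |s| ^ α₂))
    (G : ℂ → ℂ) (hG0 : G 0 = 0)
    (hGdef : ∀ z : ℂ, z ≠ 0 → G z = (z / ((‖z‖ : ℝ) : ℂ)) * (g ‖z‖ : ℂ))
    (g₂ : ℂ → ℂ → ℂ)
    (hg₂ : ∀ a z : ℂ, g₂ a z = G (a + z) - G a - fderiv ℝ G a z) :
    ∃ C > 0, ∀ a z₁ z₂ : ℂ,
      ‖g₂ a z₁ - g₂ a z₂‖
        ≤ C * ((‖a‖ ^ α₁ + ‖a‖ ^ α₂) * (‖z₁‖ + ‖z₂‖)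
            + ‖z₁‖ ^ (1 + α₁) + ‖z₂‖ ^ (1 + α₁)
            + ‖z₁‖ ^ (1 + α₂) + ‖z₂‖ ^ (1 + α₂))
          * ‖z₁ - z₂‖ := by
  have hα₁0 : 0 < α₁ := by linarith
  refine ⟨114 * C₀ * (3 ^ α₂ + 1), by positivity, fun a z₁ z₂ => ?_⟩
  have := final hα₁0 hα hC₀ hg hg0 hg'0 hg'' hG0 hGdef a z₁ z₂
  rw [hg₂, hg₂]
  exact this
end

section
/- Let a, c ≥ 0, 0 ≤ b < 1 and d > 1. Then there exists a constant C = C(a, b, c, d) > 0 such that for all t ≥ 0: ∫₀ᵗ (log(2 + (t − s)))^a · (t − s)^{−b} · (log(2 + s))^c · (1 + s)^{−d} ds ≤ C · (log(2 + t))^a · (1 + t)^{−b}. -/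
open intervalIntegral MeasureTheory Set

lemma aux_mul4_le {a1 b1 c1 d1 a2 b2 c2 d2 : ℝ} (h1 : a1 ≤ a2) (h2 : b1 ≤ b2) (h3 : c1 ≤ c2)
    (h4 : d1 ≤ d2) (hb : 0 ≤ b1) (hc : 0 ≤ c1) (hd : 0 ≤ d1)
    (ha2 : 0 ≤ a2) (hb2 : 0 ≤ b2) (hc2 : 0 ≤ c2) :
    a1 * b1 * c1 * d1 ≤ a2 * b2 * c2 * d2 :=
  mul_le_mul (mul_le_mul (mul_le_mul h1 h2 hb ha2) h3 hc (by positivity)) h4 hd (by positivity)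

lemma aux_mul3_le {a1 b1 c1 a2 b2 c2 : ℝ} (h1 : a1 ≤ a2) (h2 : b1 ≤ b2) (h3 : c1 ≤ c2)
    (hb : 0 ≤ b1) (hc : 0 ≤ c1) (ha2 : 0 ≤ a2) (hb2 : 0 ≤ b2) :
    a1 * b1 * c1 ≤ a2 * b2 * c2 :=
  mul_le_mul (mul_le_mul h1 h2 hb ha2) h3 hc (by positivity)

lemma aux_logpow (c δ : ℝ) (hc : 0 ≤ c) (hδ : 0 < δ) {s : ℝ} (hs : 0 ≤ s) :
    Real.log (2 + s) ^ c ≤ (2 ^ δ / δ) ^ c * (1 + s) ^ (δ * c) := by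
  have h1 : Real.log (2 + s) ≤ (2 ^ δ / δ) * (1 + s) ^ δ := by
    have h2 : Real.log (2 + s) ≤ (2 + s) ^ δ / δ := Real.log_le_rpow_div (by linarith) hδ
    have h3 : (2 + s) ^ δ ≤ (2 * (1 + s)) ^ δ :=
      Real.rpow_le_rpow (by linarith) (by linarith) hδ.le
    have h4 : (2 * (1 + s)) ^ δ = 2 ^ δ * (1 + s) ^ δ :=
      Real.mul_rpow (by norm_num) (by linarith)
    rw [h4] at h3
    calc Real.log (2 + s) ≤ (2 + s) ^ δ / δ := h2
      _ ≤ (2 ^ δ * (1 + s) ^ δ) / δ := by gcongr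
      _ = (2 ^ δ / δ) * (1 + s) ^ δ := by ring
  have hlognn : 0 ≤ Real.log (2 + s) := Real.log_nonneg (by linarith)
  calc Real.log (2 + s) ^ c ≤ ((2 ^ δ / δ) * (1 + s) ^ δ) ^ c :=
        Real.rpow_le_rpow hlognn h1 hc
    _ = (2 ^ δ / δ) ^ c * ((1 + s) ^ δ) ^ c :=
        Real.mul_rpow (by positivity) (Real.rpow_nonneg (by linarith) _)
    _ = (2 ^ δ / δ) ^ c * (1 + s) ^ (δ * c) := by
        rw [← Real.rpow_mul (by linarith)]

lemma aux_K (c ε : ℝ) (hc : 0 ≤ c) (hε : 0 < ε) :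
    ∃ K : ℝ, 0 < K ∧ ∀ s : ℝ, 0 ≤ s → Real.log (2 + s) ^ c ≤ K * (1 + s) ^ ε := by
  have hδ : 0 < ε / (c + 1) := by positivity
  refine ⟨(2 ^ (ε / (c + 1)) / (ε / (c + 1))) ^ c,
    Real.rpow_pos_of_pos (div_pos (Real.rpow_pos_of_pos two_pos _) hδ) c, fun s hs => ?_⟩
  have hδc : ε / (c + 1) * c ≤ ε := by
    rw [div_mul_eq_mul_div, div_le_iff₀ (by linarith)]
    nlinarith
  calc Real.log (2 + s) ^ c
      ≤ (2 ^ (ε / (c + 1)) / (ε / (c + 1))) ^ c * (1 + s) ^ (ε / (c + 1) * c) :=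
        aux_logpow c _ hc hδ hs
    _ ≤ (2 ^ (ε / (c + 1)) / (ε / (c + 1))) ^ c * (1 + s) ^ ε :=
        mul_le_mul_of_nonneg_left
          (Real.rpow_le_rpow_of_exponent_le (by linarith) hδc)
          (Real.rpow_nonneg (by positivity) c)

lemma aux_one_add_intble (q x y : ℝ) (hx : 0 ≤ x) (hy : 0 ≤ y) :
    IntervalIntegrable (fun s : ℝ => (1 + s) ^ (-q)) MeasureTheory.volume x y := by
  apply ContinuousOn.intervalIntegrable
  apply ContinuousOn.rpow_const (by fun_prop)
  intro s hs
  left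
  have h1 : min x y ≤ s := hs.1
  have h2 : 0 ≤ s := le_trans (le_min hx hy) h1
  positivity

lemma aux_tail_int {q : ℝ} (hq : 1 < q) {T : ℝ} (hT : 0 ≤ T) :
    (∫ s in (0:ℝ)..T, (1 + s) ^ (-q)) ≤ 1 / (q - 1) := by
  have h1 : (∫ s in (0:ℝ)..T, (1 + s) ^ (-q)) = ∫ x in (1:ℝ)..(1 + T), x ^ (-q) := by
    simpa using intervalIntegral.integral_comp_add_left (a := (0:ℝ)) (b := T)
      (fun x : ℝ => x ^ (-q)) 1
  have h0 : (0:ℝ) ∉ Set.uIcc 1 (1 + T) := by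
    rw [Set.uIcc_of_le (by linarith)]
    intro h
    exact absurd h.1 (by norm_num)
  rw [h1, integral_rpow (Or.inr ⟨by intro h; linarith, h0⟩)]
  have h2 : (0:ℝ) ≤ (1 + T) ^ (-q + 1) := Real.rpow_nonneg (by linarith) _
  have hX : (1 + T) ^ (-q + 1) ≤ 1 :=
    Real.rpow_le_one_of_one_le_of_nonpos (by linarith) (by linarith)
  have heq : ((1 + T) ^ (-q + 1) - 1 ^ (-q + 1)) / (-q + 1)
      = (1 - (1 + T) ^ (-q + 1)) / (q - 1) := by
    rw [Real.one_rpow,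
      div_eq_div_iff (by intro h; linarith : -q + 1 ≠ 0) (by intro h; linarith : q - 1 ≠ 0)]
    ring
  rw [heq]
  exact div_le_div_of_nonneg_right (by linarith) (by linarith)

lemma aux_sing_int {b : ℝ} (hb1 : b < 1) {m : ℝ} :
    (∫ x in (0:ℝ)..m, x ^ (-b)) = m ^ (1 - b) / (1 - b) := by
  rw [integral_rpow (Or.inl (by linarith)),
    Real.zero_rpow (by intro h; linarith : -b + 1 ≠ 0),
    show -b + 1 = 1 - b by ring, sub_zero]

lemma aux_sub_intble {b : ℝ} (hb : -1 < -b) (t x y : ℝ) :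
    IntervalIntegrable (fun s : ℝ => (t - s) ^ (-b)) MeasureTheory.volume x y := by
  have h := (intervalIntegral.intervalIntegrable_rpow'
    (a := t - x) (b := t - y) hb).comp_sub_left t
  simpa using h

lemma aux_div_rpow (x k e : ℝ) (hx : 0 ≤ x) (hk : 0 < k) :
    (x / k) ^ (-e) = k ^ e * x ^ (-e) := by
  rw [Real.div_rpow hx hk.le, Real.rpow_neg hk.le, div_inv_eq_mul, mul_comm]

/-- Convolution estimate: for `a, c ≥ 0`, `0 ≤ b < 1`, `d > 1` there is
`C > 0` with `∫₀ᵗ log^a(2+(t−s))·(t−s)^{−b}·log^c(2+s)·(1+s)^{−d} ds ≤ C·log^a(2+t)·(1+t)^{−b}`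
for all `t ≥ 0`. -/
theorem stmt_9 (a b c d : ℝ) (ha : 0 ≤ a) (hc : 0 ≤ c) (hb0 : 0 ≤ b) (hb1 : b < 1)
    (hd : 1 < d) :
    ∃ C > 0, ∀ t : ℝ, 0 ≤ t →
      (∫ s in (0:ℝ)..t,
          Real.log (2 + (t - s)) ^ a * (t - s) ^ (-b)
            * Real.log (2 + s) ^ c * (1 + s) ^ (-d))
        ≤ C * Real.log (2 + t) ^ a * (1 + t) ^ (-b) := by
  obtain ⟨K, hK, hlogK⟩ := aux_K c ((d - 1) / 2) hc (by linarith)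
  have hl4 : 0 < Real.log 4 := Real.log_pos (by norm_num)
  set C1 : ℝ := 4 ^ b * K * (2 / (d - 1)) with hC1def
  set C2 : ℝ := 2 ^ d * K / (1 - b) with hC2def
  set C3 : ℝ := 3 ^ b * Real.log 4 ^ c * (2 / (1 - b)) with hC3def
  have p1 : 0 < C1 := by
    rw [hC1def]
    exact mul_pos (mul_pos (Real.rpow_pos_of_pos (by norm_num) b) hK)
      (by apply div_pos <;> linarith)
  have p2 : 0 < C2 := by
    rw [hC2def]
    exact div_pos (mul_pos (Real.rpow_pos_of_pos (by norm_num) d) hK) (by linarith)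
  have p3 : 0 < C3 := by
    rw [hC3def]
    exact mul_pos (mul_pos (Real.rpow_pos_of_pos (by norm_num) b)
      (Real.rpow_pos_of_pos hl4 c)) (by apply div_pos <;> linarith)
  refine ⟨C1 + C2 + C3, by linarith, ?_⟩
  intro t ht
  set F : ℝ → ℝ := fun s =>
    Real.log (2 + (t - s)) ^ a * (t - s) ^ (-b) * Real.log (2 + s) ^ c * (1 + s) ^ (-d)
    with hFdef
  set L : ℝ := Real.log (2 + t) with hLdef
  have hL : 0 < L := Real.log_pos (by linarith)
  have ht1 : (0:ℝ) < 1 + t := by linarith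
  have hLa : 0 ≤ L ^ a := Real.rpow_nonneg hL.le a
  have hLc : 0 ≤ L ^ c := Real.rpow_nonneg hL.le c
  have htb : 0 ≤ (1 + t) ^ (-b) := Real.rpow_nonneg ht1.le _
  have hbneg : -b ≤ 0 := by linarith
  have hfm : Measurable F := by
    have h1 : Measurable fun s : ℝ => Real.log (2 + (t - s)) :=
      Real.measurable_log.comp ((measurable_const.sub measurable_id).const_add 2)
    have h2 : Measurable fun s : ℝ => Real.log (2 + s) :=
      Real.measurable_log.comp (measurable_id.const_add 2)
    rw [hFdef]; fun_prop
  have hlog1 : ∀ s : ℝ, 0 ≤ s → s ≤ t → Real.log (2 + (t - s)) ^ a ≤ L ^ a := by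
    intro s hs0 hst
    exact Real.rpow_le_rpow (Real.log_nonneg (by linarith))
      (Real.log_le_log (by linarith) (by linarith)) ha
  have hlog2 : ∀ s : ℝ, 0 ≤ s → s ≤ t → Real.log (2 + s) ^ c ≤ L ^ c := by
    intro s hs0 hst
    exact Real.rpow_le_rpow (Real.log_nonneg (by linarith))
      (Real.log_le_log (by linarith) (by linarith)) hc
  have hFnn : ∀ s : ℝ, 0 ≤ s → s ≤ t → 0 ≤ F s := by
    intro s hs0 hst
    exact mul_nonneg (mul_nonneg (mul_nonneg
      (Real.rpow_nonneg (Real.log_nonneg (by linarith)) a)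
      (Real.rpow_nonneg (by linarith) _))
      (Real.rpow_nonneg (Real.log_nonneg (by linarith)) c))
      (Real.rpow_nonneg (by linarith) _)
  rcases lt_or_ge t 2 with h2 | h2
  · -- small case : t < 2
    have hbound : ∀ s ∈ Icc (0:ℝ) t, F s ≤ L ^ a * L ^ c * (t - s) ^ (-b) := by
      intro s hs
      obtain ⟨hs0, hst⟩ := hs
      have e2 : (0:ℝ) ≤ (t - s) ^ (-b) := Real.rpow_nonneg (by linarith) _
      have e4 : (1 + s) ^ (-d) ≤ 1 :=
        Real.rpow_le_one_of_one_le_of_nonpos (by linarith) (by linarith)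
      calc F s ≤ L ^ a * (t - s) ^ (-b) * L ^ c * 1 :=
            aux_mul4_le (hlog1 s hs0 hst) le_rfl (hlog2 s hs0 hst) e4 e2
              (Real.rpow_nonneg (Real.log_nonneg (by linarith)) c)
              (Real.rpow_nonneg (by linarith) _) hLa e2 hLc
        _ = L ^ a * L ^ c * (t - s) ^ (-b) := by ring
    have hgint : IntervalIntegrable (fun s : ℝ => L ^ a * L ^ c * (t - s) ^ (-b))
        MeasureTheory.volume 0 t :=
      (aux_sub_intble (by linarith) t 0 t).const_mul _
    have hFint : IntervalIntegrable F MeasureTheory.volume 0 t := by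
      apply hgint.mono_fun hfm.aestronglyMeasurable
      filter_upwards [ae_restrict_mem measurableSet_uIoc] with s hs
      rw [Set.uIoc_of_le ht] at hs
      rw [Real.norm_of_nonneg (hFnn s hs.1.le hs.2), Real.norm_of_nonneg
        (mul_nonneg (mul_nonneg hLa hLc) (Real.rpow_nonneg (by linarith [hs.2]) _))]
      exact hbound s ⟨hs.1.le, hs.2⟩
    have hint_eq : (∫ s in (0:ℝ)..t, (t - s) ^ (-b)) = t ^ (1 - b) / (1 - b) := by
      rw [show (∫ s in (0:ℝ)..t, (t - s) ^ (-b)) = ∫ x in (0:ℝ)..t, x ^ (-b) from by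
        simpa using intervalIntegral.integral_comp_sub_left (a := (0:ℝ)) (b := t)
          (fun x : ℝ => x ^ (-b)) t]
      exact aux_sing_int hb1
    have hL4 : L ^ c ≤ Real.log 4 ^ c :=
      Real.rpow_le_rpow hL.le (Real.log_le_log (by linarith) (by linarith)) hc
    have htpow : t ^ (1 - b) ≤ 2 := by
      calc t ^ (1 - b) ≤ 2 ^ (1 - b) :=
            Real.rpow_le_rpow ht (by linarith) (by linarith)
        _ ≤ 2 ^ (1:ℝ) := Real.rpow_le_rpow_of_exponent_le (by norm_num) (by linarith)
        _ = 2 := Real.rpow_one 2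
    have hstep : L ^ c * (t ^ (1 - b) / (1 - b)) ≤ Real.log 4 ^ c * (2 / (1 - b)) := by
      apply mul_le_mul hL4 _ _ (Real.rpow_nonneg hl4.le c)
      · exact div_le_div_of_nonneg_right htpow (by linarith)
      · exact div_nonneg (Real.rpow_nonneg ht _) (by linarith)
    have h3pow : (3:ℝ) ^ b * 3 ^ (-b) = 1 := by
      rw [← Real.rpow_add (by norm_num)]
      simp
    have hstep2 : Real.log 4 ^ c * (2 / (1 - b)) ≤ (C1 + C2 + C3) * (1 + t) ^ (-b) := by
      have h3t : (3:ℝ) ^ (-b) ≤ (1 + t) ^ (-b) :=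
        Real.rpow_le_rpow_of_nonpos ht1 (by linarith) hbneg
      have hBnn : (0:ℝ) ≤ 3 ^ b * (Real.log 4 ^ c * (2 / (1 - b))) :=
        mul_nonneg (Real.rpow_nonneg (by norm_num) b)
          (mul_nonneg (Real.rpow_nonneg hl4.le c)
            (div_nonneg (by norm_num) (by linarith)))
      calc Real.log 4 ^ c * (2 / (1 - b))
          = (3 ^ b * (Real.log 4 ^ c * (2 / (1 - b)))) * 3 ^ (-b) := by
            rw [show (3:ℝ) ^ b * (Real.log 4 ^ c * (2 / (1 - b))) * 3 ^ (-b)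
              = (3:ℝ) ^ b * 3 ^ (-b) * (Real.log 4 ^ c * (2 / (1 - b))) by ring, h3pow,
              one_mul]
        _ ≤ (3 ^ b * (Real.log 4 ^ c * (2 / (1 - b)))) * (1 + t) ^ (-b) :=
            mul_le_mul_of_nonneg_left h3t hBnn
        _ ≤ (C1 + C2 + C3) * (1 + t) ^ (-b) := by
            apply mul_le_mul_of_nonneg_right _ htb
            have heq3 : (3:ℝ) ^ b * (Real.log 4 ^ c * (2 / (1 - b))) = C3 := by
              rw [hC3def]; ring
            linarith
    calc (∫ s in (0:ℝ)..t, F s)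
        ≤ ∫ s in (0:ℝ)..t, L ^ a * L ^ c * (t - s) ^ (-b) :=
          intervalIntegral.integral_mono_on ht hFint hgint hbound
      _ = L ^ a * L ^ c * ∫ s in (0:ℝ)..t, (t - s) ^ (-b) := by
          rw [← intervalIntegral.integral_const_mul]
      _ = L ^ a * (L ^ c * (t ^ (1 - b) / (1 - b))) := by rw [hint_eq]; ring
      _ ≤ L ^ a * (Real.log 4 ^ c * (2 / (1 - b))) := mul_le_mul_of_nonneg_left hstep hLa
      _ ≤ L ^ a * ((C1 + C2 + C3) * (1 + t) ^ (-b)) := mul_le_mul_of_nonneg_left hstep2 hLa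
      _ = (C1 + C2 + C3) * L ^ a * (1 + t) ^ (-b) := by ring
  · -- big case : 2 ≤ t
    have hm0 : (0:ℝ) < t / 2 := by linarith
    have hmt : t / 2 ≤ t := by linarith
    have hq : (1:ℝ) < (d + 1) / 2 := by linarith
    -- pointwise bound on [0, t/2]
    have hpt1 : ∀ s ∈ Icc (0:ℝ) (t / 2),
        F s ≤ (L ^ a * (t / 2) ^ (-b) * K) * (1 + s) ^ (-((d + 1) / 2)) := by
      intro s hs
      obtain ⟨hs0, hsm⟩ := hs
      have e1 := hlog1 s hs0 (by linarith)
      have e2 : (t - s) ^ (-b) ≤ (t / 2) ^ (-b) :=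
        Real.rpow_le_rpow_of_nonpos hm0 (by linarith) hbneg
      have key : Real.log (2 + s) ^ c * (1 + s) ^ (-d) ≤ K * (1 + s) ^ (-((d + 1) / 2)) := by
        have h1 := hlogK s hs0
        have h2' : (0:ℝ) ≤ (1 + s) ^ (-d) := Real.rpow_nonneg (by linarith) _
        calc Real.log (2 + s) ^ c * (1 + s) ^ (-d)
            ≤ (K * (1 + s) ^ ((d - 1) / 2)) * (1 + s) ^ (-d) :=
              mul_le_mul_of_nonneg_right h1 h2'
          _ = K * ((1 + s) ^ ((d - 1) / 2) * (1 + s) ^ (-d)) := by ring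
          _ = K * (1 + s) ^ ((d - 1) / 2 + -d) := by rw [← Real.rpow_add (by linarith)]
          _ = K * (1 + s) ^ (-((d + 1) / 2)) := by
              rw [show (d - 1) / 2 + -d = -((d + 1) / 2) by ring]
      calc F s
          = (Real.log (2 + (t - s)) ^ a * (t - s) ^ (-b))
            * (Real.log (2 + s) ^ c * (1 + s) ^ (-d)) := by simp only [hFdef]; ring
        _ ≤ (L ^ a * (t / 2) ^ (-b)) * (K * (1 + s) ^ (-((d + 1) / 2))) := by
            apply mul_le_mul (mul_le_mul e1 e2 (Real.rpow_nonneg (by linarith) _) hLa) key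
              (mul_nonneg (Real.rpow_nonneg (Real.log_nonneg (by linarith)) c)
                (Real.rpow_nonneg (by linarith) _))
              (mul_nonneg hLa (Real.rpow_nonneg (by linarith) _))
        _ = (L ^ a * (t / 2) ^ (-b) * K) * (1 + s) ^ (-((d + 1) / 2)) := by ring
    -- pointwise bound on [t/2, t]
    have hpt2 : ∀ s ∈ Icc (t / 2) t,
        F s ≤ (L ^ a * L ^ c * (2 ^ d * (1 + t) ^ (-d))) * (t - s) ^ (-b) := by
      intro s hs
      obtain ⟨hsm, hst⟩ := hs
      have hs0 : 0 ≤ s := le_trans hm0.le hsm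
      have e1 := hlog1 s hs0 hst
      have e3 := hlog2 s hs0 hst
      have e4 : (1 + s) ^ (-d) ≤ 2 ^ d * (1 + t) ^ (-d) := by
        have h5 : (1 + s) ^ (-d) ≤ ((1 + t) / 2) ^ (-d) :=
          Real.rpow_le_rpow_of_nonpos (by linarith) (by linarith) (by linarith)
        rwa [aux_div_rpow (1 + t) 2 d ht1.le (by norm_num)] at h5
      have e2 : (0:ℝ) ≤ (t - s) ^ (-b) := Real.rpow_nonneg (by linarith) _
      calc F s ≤ L ^ a * (t - s) ^ (-b) * L ^ c * (2 ^ d * (1 + t) ^ (-d)) :=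
            aux_mul4_le e1 le_rfl e3 e4 e2
              (Real.rpow_nonneg (Real.log_nonneg (by linarith)) c)
              (Real.rpow_nonneg (by linarith) _) hLa e2 hLc
        _ = (L ^ a * L ^ c * (2 ^ d * (1 + t) ^ (-d))) * (t - s) ^ (-b) := by ring
    -- integrabilities
    have hg1int : IntervalIntegrable
        (fun s : ℝ => (L ^ a * (t / 2) ^ (-b) * K) * (1 + s) ^ (-((d + 1) / 2)))
        MeasureTheory.volume 0 (t / 2) :=
      (aux_one_add_intble _ 0 (t / 2) le_rfl hm0.le).const_mul _
    have hg2int : IntervalIntegrable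
        (fun s : ℝ => (L ^ a * L ^ c * (2 ^ d * (1 + t) ^ (-d))) * (t - s) ^ (-b))
        MeasureTheory.volume (t / 2) t :=
      (aux_sub_intble (by linarith) t (t / 2) t).const_mul _
    have hF1int : IntervalIntegrable F MeasureTheory.volume 0 (t / 2) := by
      apply hg1int.mono_fun hfm.aestronglyMeasurable
      filter_upwards [ae_restrict_mem measurableSet_uIoc] with s hs
      rw [Set.uIoc_of_le hm0.le] at hs
      rw [Real.norm_of_nonneg (hFnn s hs.1.le (by linarith [hs.2])), Real.norm_of_nonneg
        (mul_nonneg (mul_nonneg (mul_nonneg hLa (Real.rpow_nonneg hm0.le _)) hK.le)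
          (Real.rpow_nonneg (by linarith [hs.1.le]) _))]
      exact hpt1 s ⟨hs.1.le, hs.2⟩
    have hF2int : IntervalIntegrable F MeasureTheory.volume (t / 2) t := by
      apply hg2int.mono_fun hfm.aestronglyMeasurable
      filter_upwards [ae_restrict_mem measurableSet_uIoc] with s hs
      rw [Set.uIoc_of_le hmt] at hs
      have hs0 : 0 ≤ s := le_trans hm0.le hs.1.le
      rw [Real.norm_of_nonneg (hFnn s hs0 hs.2), Real.norm_of_nonneg
        (mul_nonneg (mul_nonneg (mul_nonneg hLa hLc)
          (mul_nonneg (Real.rpow_nonneg (by norm_num) d) (Real.rpow_nonneg ht1.le _)))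
          (Real.rpow_nonneg (by linarith [hs.2]) _))]
      exact hpt2 s ⟨hs.1.le, hs.2⟩
    -- model integrals
    have hA1nn : (0:ℝ) ≤ L ^ a * (t / 2) ^ (-b) * K :=
      mul_nonneg (mul_nonneg hLa (Real.rpow_nonneg hm0.le _)) hK.le
    have hI1 : (∫ s in (0:ℝ)..(t / 2),
        (L ^ a * (t / 2) ^ (-b) * K) * (1 + s) ^ (-((d + 1) / 2)))
        ≤ (L ^ a * (t / 2) ^ (-b) * K) * (2 / (d - 1)) := by
      rw [intervalIntegral.integral_const_mul]
      have htail := aux_tail_int hq hm0.le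
      have heq : 1 / ((d + 1) / 2 - 1) = 2 / (d - 1) := by
        rw [show (d + 1) / 2 - 1 = (d - 1) / 2 by ring, one_div_div]
      rw [heq] at htail
      exact mul_le_mul_of_nonneg_left htail hA1nn
    have hsubint : (∫ s in (t / 2)..t, (t - s) ^ (-b)) = (t / 2) ^ (1 - b) / (1 - b) := by
      rw [show (∫ s in (t / 2)..t, (t - s) ^ (-b)) = ∫ x in (0:ℝ)..(t / 2), x ^ (-b) from by
        have h := intervalIntegral.integral_comp_sub_left (a := t / 2) (b := t)
          (fun x : ℝ => x ^ (-b)) t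
        simpa [show t - t / 2 = t / 2 by ring] using h]
      exact aux_sing_int hb1
    have hI2 : (∫ s in (t / 2)..t,
        (L ^ a * L ^ c * (2 ^ d * (1 + t) ^ (-d))) * (t - s) ^ (-b))
        = (L ^ a * L ^ c * (2 ^ d * (1 + t) ^ (-d))) * ((t / 2) ^ (1 - b) / (1 - b)) := by
      rw [intervalIntegral.integral_const_mul, hsubint]
    -- scalar estimates
    have hmb : (t / 2) ^ (-b) ≤ 4 ^ b * (1 + t) ^ (-b) := by
      have h5 : (t / 2) ^ (-b) ≤ ((1 + t) / 4) ^ (-b) :=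
        Real.rpow_le_rpow_of_nonpos (by linarith) (by linarith) hbneg
      rwa [aux_div_rpow (1 + t) 4 b ht1.le (by norm_num)] at h5
    have hterm1 : L ^ a * (t / 2) ^ (-b) * K * (2 / (d - 1))
        ≤ C1 * (L ^ a * (1 + t) ^ (-b)) := by
      have hnn : (0:ℝ) ≤ L ^ a * (K * (2 / (d - 1))) :=
        mul_nonneg hLa (mul_nonneg hK.le (div_nonneg (by norm_num) (by linarith)))
      calc L ^ a * (t / 2) ^ (-b) * K * (2 / (d - 1))
          = (L ^ a * (K * (2 / (d - 1)))) * (t / 2) ^ (-b) := by ring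
        _ ≤ (L ^ a * (K * (2 / (d - 1)))) * (4 ^ b * (1 + t) ^ (-b)) :=
            mul_le_mul_of_nonneg_left hmb hnn
        _ = C1 * (L ^ a * (1 + t) ^ (-b)) := by rw [hC1def]; ring
    have hterm2 : L ^ a * L ^ c * (2 ^ d * (1 + t) ^ (-d)) * ((t / 2) ^ (1 - b) / (1 - b))
        ≤ C2 * (L ^ a * (1 + t) ^ (-b)) := by
      have h_s1 : L ^ c ≤ K * (1 + t) ^ ((d - 1) / 2) := hlogK t ht
      have h_s2 : (t / 2) ^ (1 - b) ≤ (1 + t) ^ (1 - b) :=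
        Real.rpow_le_rpow hm0.le (by linarith) (by linarith)
      have hscalar : L ^ c * (2 ^ d * (1 + t) ^ (-d)) * ((t / 2) ^ (1 - b) / (1 - b))
          ≤ (2 ^ d * K / (1 - b)) * (1 + t) ^ (-b) := by
        calc L ^ c * (2 ^ d * (1 + t) ^ (-d)) * ((t / 2) ^ (1 - b) / (1 - b))
            ≤ (K * (1 + t) ^ ((d - 1) / 2)) * (2 ^ d * (1 + t) ^ (-d))
              * ((1 + t) ^ (1 - b) / (1 - b)) :=
              aux_mul3_le h_s1 le_rfl (div_le_div_of_nonneg_right h_s2 (by linarith))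
                (mul_nonneg (Real.rpow_nonneg (by norm_num) d) (Real.rpow_nonneg ht1.le _))
                (div_nonneg (Real.rpow_nonneg hm0.le _) (by linarith))
                (mul_nonneg hK.le (Real.rpow_nonneg ht1.le _))
                (mul_nonneg (Real.rpow_nonneg (by norm_num) d) (Real.rpow_nonneg ht1.le _))
          _ = (2 ^ d * K / (1 - b))
              * ((1 + t) ^ ((d - 1) / 2) * (1 + t) ^ (-d) * (1 + t) ^ (1 - b)) := by ring
          _ = (2 ^ d * K / (1 - b)) * (1 + t) ^ ((d - 1) / 2 + -d + (1 - b)) := by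
              rw [← Real.rpow_add ht1, ← Real.rpow_add ht1]
          _ ≤ (2 ^ d * K / (1 - b)) * (1 + t) ^ (-b) := by
              apply mul_le_mul_of_nonneg_left
                (Real.rpow_le_rpow_of_exponent_le (by linarith) (by linarith))
                (div_nonneg (mul_nonneg (Real.rpow_nonneg (by norm_num) d) hK.le)
                  (by linarith))
      calc L ^ a * L ^ c * (2 ^ d * (1 + t) ^ (-d)) * ((t / 2) ^ (1 - b) / (1 - b))
          = L ^ a * (L ^ c * (2 ^ d * (1 + t) ^ (-d)) * ((t / 2) ^ (1 - b) / (1 - b))) := by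
            ring
        _ ≤ L ^ a * ((2 ^ d * K / (1 - b)) * (1 + t) ^ (-b)) :=
            mul_le_mul_of_nonneg_left hscalar hLa
        _ = C2 * (L ^ a * (1 + t) ^ (-b)) := by rw [hC2def]; ring
    -- combine
    have hsplit : (∫ s in (0:ℝ)..(t / 2), F s) + (∫ s in (t / 2)..t, F s)
        = ∫ s in (0:ℝ)..t, F s :=
      intervalIntegral.integral_add_adjacent_intervals hF1int hF2int
    have hI1' : (∫ s in (0:ℝ)..(t / 2), F s) ≤ C1 * (L ^ a * (1 + t) ^ (-b)) := by
      calc (∫ s in (0:ℝ)..(t / 2), F s)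
          ≤ ∫ s in (0:ℝ)..(t / 2),
              (L ^ a * (t / 2) ^ (-b) * K) * (1 + s) ^ (-((d + 1) / 2)) :=
            intervalIntegral.integral_mono_on hm0.le hF1int hg1int hpt1
        _ ≤ (L ^ a * (t / 2) ^ (-b) * K) * (2 / (d - 1)) := hI1
        _ ≤ C1 * (L ^ a * (1 + t) ^ (-b)) := hterm1
    have hI2' : (∫ s in (t / 2)..t, F s) ≤ C2 * (L ^ a * (1 + t) ^ (-b)) := by
      calc (∫ s in (t / 2)..t, F s)
          ≤ ∫ s in (t / 2)..t,
              (L ^ a * L ^ c * (2 ^ d * (1 + t) ^ (-d))) * (t - s) ^ (-b) :=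
            intervalIntegral.integral_mono_on hmt hF2int hg2int hpt2
        _ = (L ^ a * L ^ c * (2 ^ d * (1 + t) ^ (-d))) * ((t / 2) ^ (1 - b) / (1 - b)) := hI2
        _ ≤ C2 * (L ^ a * (1 + t) ^ (-b)) := hterm2
    have hXnn : 0 ≤ L ^ a * (1 + t) ^ (-b) := mul_nonneg hLa htb
    calc (∫ s in (0:ℝ)..t, F s)
        = (∫ s in (0:ℝ)..(t / 2), F s) + (∫ s in (t / 2)..t, F s) := hsplit.symm
      _ ≤ C1 * (L ^ a * (1 + t) ^ (-b)) + C2 * (L ^ a * (1 + t) ^ (-b)) :=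
          add_le_add hI1' hI2'
      _ ≤ (C1 + C2 + C3) * L ^ a * (1 + t) ^ (-b) := by
          have hrw : (C1 + C2 + C3) * L ^ a * (1 + t) ^ (-b)
              = C1 * (L ^ a * (1 + t) ^ (-b)) + C2 * (L ^ a * (1 + t) ^ (-b))
                + C3 * (L ^ a * (1 + t) ^ (-b)) := by ring
          rw [hrw]
          linarith [mul_nonneg p3.le hXnn]
end

section
/- Let a, c ≥ 0, 0 ≤ b < 1, 0 ≤ d < 1 and b + d > 1. Then there exists a constant C = C(a, b, c, d) > 0 such that for all t ≥ 0: ∫₀ᵗ (log(2 + (t − s)))^a · (t − s)^{−b} · (log(2 + s))^c · (1 + s)^{−d} ds ≤ C · (log(2 + t))^{a + c} · (1 + t)^{1 − b − d}. -/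
open MeasureTheory intervalIntegral Real Set

/-- integrability of `(t - s)^(-b)` on any interval. -/
lemma stmt10_intInt_sub_rpow {b : ℝ} (hb : b < 1) (t u v : ℝ) :
    IntervalIntegrable (fun s : ℝ => (t - s) ^ (-b)) volume u v := by
  have h : IntervalIntegrable (fun x : ℝ => x ^ (-b)) volume (t - u) (t - v) :=
    intervalIntegral.intervalIntegrable_rpow' (by linarith)
  simpa using h.comp_sub_left t

lemma stmt10_quarter {b t : ℝ} (hb0 : 0 ≤ b) (h1 : 1 < t) :
    (t / 2) ^ (-b) ≤ 4 ^ b * (1 + t) ^ (-b) := by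
  have h14 : (0:ℝ) < (1 + t) / 4 := by linarith
  have hle : ((1 + t) / 4 : ℝ) ≤ t / 2 := by linarith
  calc (t / 2) ^ (-b) ≤ ((1 + t) / 4) ^ (-b) :=
        Real.rpow_le_rpow_of_nonpos h14 hle (by linarith)
    _ = 4 ^ b * (1 + t) ^ (-b) := by
        rw [Real.div_rpow (by linarith) (by norm_num),
          Real.rpow_neg (by norm_num : (0:ℝ) ≤ 4), div_eq_mul_inv, inv_inv]
        ring

lemma stmt10_half {d t : ℝ} (hd0 : 0 ≤ d) (ht : 0 ≤ t) :
    (1 + t / 2) ^ (-d) ≤ 2 ^ d * (1 + t) ^ (-d) := by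
  have h12 : (0:ℝ) < (1 + t) / 2 := by linarith
  have hle : ((1 + t) / 2 : ℝ) ≤ 1 + t / 2 := by linarith
  calc (1 + t / 2) ^ (-d) ≤ ((1 + t) / 2) ^ (-d) :=
        Real.rpow_le_rpow_of_nonpos h12 hle (by linarith)
    _ = 2 ^ d * (1 + t) ^ (-d) := by
        rw [Real.div_rpow (by linarith) (by norm_num),
          Real.rpow_neg (by norm_num : (0:ℝ) ≤ 2), div_eq_mul_inv, inv_inv]
        ring

/-- The pure power convolution estimate. -/
lemma stmt10_power_conv {b d : ℝ} (hb0 : 0 ≤ b) (hb1 : b < 1) (hd0 : 0 ≤ d) (hd1 : d < 1)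
    (hbd : 1 < b + d) (t : ℝ) (ht : 0 ≤ t) :
    (∫ s in (0:ℝ)..t, (t - s) ^ (-b) * (1 + s) ^ (-d))
      ≤ (4 ^ b / (1 - d) + 2 ^ d / (1 - b) + 2 ^ (b + d) / (1 - b)) * (1 + t) ^ (1 - b - d) := by
  set C₀ : ℝ := 4 ^ b / (1 - d) + 2 ^ d / (1 - b) + 2 ^ (b + d) / (1 - b) with hC₀
  set g : ℝ → ℝ := fun s => (t - s) ^ (-b) * (1 + s) ^ (-d) with hgdef
  have hX : (0:ℝ) < (1 + t) ^ (1 - b - d) := Real.rpow_pos_of_pos (by linarith) _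
  have hA : (0:ℝ) < 4 ^ b / (1 - d) :=
    div_pos (Real.rpow_pos_of_pos (by norm_num) _) (by linarith)
  have hB : (0:ℝ) < 2 ^ d / (1 - b) :=
    div_pos (Real.rpow_pos_of_pos (by norm_num) _) (by linarith)
  have hE : (0:ℝ) < 2 ^ (b + d) / (1 - b) :=
    div_pos (Real.rpow_pos_of_pos (by norm_num) _) (by linarith)
  have hgmeas : Measurable g := by fun_prop
  have hg : IntervalIntegrable g volume 0 t := by
    apply (stmt10_intInt_sub_rpow hb1 t 0 t).mono_fun hgmeas.aestronglyMeasurable.restrict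
    filter_upwards [ae_restrict_mem measurableSet_uIoc] with x hx
    rw [Set.uIoc_of_le ht] at hx
    have h1 : (0:ℝ) ≤ t - x := by linarith [hx.2]
    have h2 : (0:ℝ) ≤ (t - x) ^ (-b) := Real.rpow_nonneg h1 _
    have h3 : (0:ℝ) ≤ (1 + x) ^ (-d) := Real.rpow_nonneg (by linarith [hx.1]) _
    have h4 : (1 + x) ^ (-d) ≤ 1 :=
      Real.rpow_le_one_of_one_le_of_nonpos (by linarith [hx.1]) (by linarith)
    rw [Real.norm_of_nonneg (by positivity), Real.norm_of_nonneg h2]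
    exact mul_le_of_le_one_right h2 h4
  rcases le_or_gt t 1 with h1 | h1
  · -- small t
    have hle : (∫ s in (0:ℝ)..t, g s) ≤ ∫ s in (0:ℝ)..t, (t - s) ^ (-b) := by
      apply intervalIntegral.integral_mono_on ht hg (stmt10_intInt_sub_rpow hb1 t 0 t)
      intro x hx
      have h2 : (0:ℝ) ≤ (t - x) ^ (-b) := Real.rpow_nonneg (by linarith [hx.2]) _
      have h4 : (1 + x) ^ (-d) ≤ 1 :=
        Real.rpow_le_one_of_one_le_of_nonpos (by linarith [hx.1]) (by linarith)
      exact mul_le_of_le_one_right h2 h4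
    have hval : (∫ s in (0:ℝ)..t, (t - s) ^ (-b)) = t ^ (-b + 1) / (-b + 1) := by
      rw [intervalIntegral.integral_comp_sub_left (fun x => x ^ (-b)) t]
      simp only [sub_zero, sub_self]
      rw [integral_rpow (Or.inl (by linarith))]
      rw [Real.zero_rpow (by intro h; linarith)]
      ring
    have htb : t ^ (-b + 1) ≤ 1 := Real.rpow_le_one ht h1 (by linarith)
    have hint_le : (∫ s in (0:ℝ)..t, g s) ≤ 1 / (1 - b) := by
      rw [hval] at hle
      have : t ^ (-b + 1) / (-b + 1) ≤ 1 / (1 - b) := by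
        rw [show -b + 1 = 1 - b by ring]
        gcongr
        · exact Real.rpow_le_one ht h1 (by linarith)
      linarith
    have h2X : (2:ℝ) ^ (1 - b - d) ≤ (1 + t) ^ (1 - b - d) :=
      Real.rpow_le_rpow_of_nonpos (by linarith) (by linarith) (by linarith)
    have hkey : (2:ℝ) ^ (b + d) * 2 ^ (1 - b - d) = 2 := by
      rw [← Real.rpow_add (by norm_num : (0:ℝ) < 2), show b + d + (1 - b - d) = 1 by ring,
        Real.rpow_one]
    have h2b : (0:ℝ) < 2 ^ (b + d) := Real.rpow_pos_of_pos (by norm_num) _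
    calc (∫ s in (0:ℝ)..t, g s) ≤ 1 / (1 - b) := hint_le
      _ ≤ 2 ^ (b + d) / (1 - b) * (2:ℝ) ^ (1 - b - d) := by
          rw [div_mul_eq_mul_div, hkey]
          gcongr
          · linarith
      _ ≤ 2 ^ (b + d) / (1 - b) * (1 + t) ^ (1 - b - d) := by
          exact mul_le_mul_of_nonneg_left h2X hE.le
      _ ≤ C₀ * (1 + t) ^ (1 - b - d) := by nlinarith
  · -- large t
    have ht2 : (0:ℝ) ≤ t / 2 := by linarith
    have hg1 : IntervalIntegrable g volume 0 (t / 2) := by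
      apply hg.mono_set
      rw [Set.uIcc_of_le ht2, Set.uIcc_of_le ht]
      exact Set.Icc_subset_Icc le_rfl (by linarith)
    have hg2 : IntervalIntegrable g volume (t / 2) t := by
      apply hg.mono_set
      rw [Set.uIcc_of_le (by linarith), Set.uIcc_of_le ht]
      exact Set.Icc_subset_Icc (by linarith) le_rfl
    have hsplit : (∫ s in (0:ℝ)..t, g s)
        = (∫ s in (0:ℝ)..(t / 2), g s) + ∫ s in (t / 2)..t, g s :=
      (intervalIntegral.integral_add_adjacent_intervals hg1 hg2).symm
    -- piece 1
    have hh1 : IntervalIntegrable (fun s : ℝ => (t / 2) ^ (-b) * (1 + s) ^ (-d))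
        volume 0 (t / 2) := by
      apply ContinuousOn.intervalIntegrable
      apply continuousOn_const.mul
      apply ContinuousOn.rpow_const (by fun_prop)
      intro x hx
      rw [Set.uIcc_of_le ht2] at hx
      left
      exact ne_of_gt (by linarith [hx.1])
    have hp1 : (∫ s in (0:ℝ)..(t / 2), g s)
        ≤ (t / 2) ^ (-b) * ∫ s in (0:ℝ)..(t / 2), (1 + s) ^ (-d) := by
      rw [← intervalIntegral.integral_const_mul]
      apply intervalIntegral.integral_mono_on ht2 hg1 hh1
      intro x hx
      have hb' : (t - x) ^ (-b) ≤ (t / 2) ^ (-b) :=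
        Real.rpow_le_rpow_of_nonpos (by linarith) (by linarith [hx.2]) (by linarith)
      exact mul_le_mul_of_nonneg_right hb' (Real.rpow_nonneg (by linarith [hx.1]) _)
    have hval1 : (∫ s in (0:ℝ)..(t / 2), (1 + s) ^ (-d))
        = ((1 + t / 2) ^ (-d + 1) - 1) / (-d + 1) := by
      rw [intervalIntegral.integral_comp_add_left (fun x => x ^ (-d)) 1]
      rw [add_zero]
      rw [integral_rpow (Or.inl (by linarith))]
      rw [Real.one_rpow]
    have h1le : (∫ s in (0:ℝ)..(t / 2), (1 + s) ^ (-d)) ≤ (1 + t) ^ (1 - d) / (1 - d) := by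
      rw [hval1, show -d + 1 = 1 - d by ring]
      have hnum : (1 + t / 2) ^ (1 - d) ≤ (1 + t) ^ (1 - d) :=
        Real.rpow_le_rpow (by linarith) (by linarith) (by linarith)
      gcongr
      · linarith
    have hpiece1 : (∫ s in (0:ℝ)..(t / 2), g s)
        ≤ 4 ^ b / (1 - d) * (1 + t) ^ (1 - b - d) := by
      have hnn : (0:ℝ) ≤ (t / 2) ^ (-b) := Real.rpow_nonneg ht2 _
      have hint_nn : (0:ℝ) ≤ ∫ s in (0:ℝ)..(t / 2), (1 + s) ^ (-d) := by
        rw [hval1]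
        have : (1:ℝ) ≤ (1 + t / 2) ^ (-d + 1) :=
          Real.one_le_rpow (by linarith) (by linarith)
        have hd' : (0:ℝ) < -d + 1 := by linarith
        apply div_nonneg (by linarith) hd'.le
      have hq1 := stmt10_quarter hb0 h1 (b := b) (t := t)
      calc (∫ s in (0:ℝ)..(t / 2), g s)
          ≤ (t / 2) ^ (-b) * ∫ s in (0:ℝ)..(t / 2), (1 + s) ^ (-d) := hp1
        _ ≤ (4 ^ b * (1 + t) ^ (-b)) * ((1 + t) ^ (1 - d) / (1 - d)) := by
            apply mul_le_mul hq1 h1le hint_nn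
            positivity
        _ = 4 ^ b / (1 - d) * (1 + t) ^ (1 - b - d) := by
            rw [show (1:ℝ) - b - d = -b + (1 - d) by ring,
              Real.rpow_add (by linarith : (0:ℝ) < 1 + t)]
            ring
    -- piece 2
    have hh2 : IntervalIntegrable (fun s : ℝ => (1 + t / 2) ^ (-d) * (t - s) ^ (-b))
        volume (t / 2) t := (stmt10_intInt_sub_rpow hb1 t (t / 2) t).const_mul _
    have hp2 : (∫ s in (t / 2)..t, g s)
        ≤ (1 + t / 2) ^ (-d) * ∫ s in (t / 2)..t, (t - s) ^ (-b) := by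
      rw [← intervalIntegral.integral_const_mul]
      apply intervalIntegral.integral_mono_on (by linarith) hg2 hh2
      intro x hx
      have hd' : (1 + x) ^ (-d) ≤ (1 + t / 2) ^ (-d) :=
        Real.rpow_le_rpow_of_nonpos (by linarith) (by linarith [hx.1]) (by linarith)
      have hn : (0:ℝ) ≤ (t - x) ^ (-b) := Real.rpow_nonneg (by linarith [hx.2]) _
      calc (t - x) ^ (-b) * (1 + x) ^ (-d) ≤ (t - x) ^ (-b) * (1 + t / 2) ^ (-d) :=
            mul_le_mul_of_nonneg_left hd' hn
        _ = (1 + t / 2) ^ (-d) * (t - x) ^ (-b) := by ring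
    have hval2 : (∫ s in (t / 2)..t, (t - s) ^ (-b)) = (t / 2) ^ (1 - b) / (1 - b) := by
      rw [intervalIntegral.integral_comp_sub_left (fun x => x ^ (-b)) t]
      rw [sub_self, show t - t / 2 = t / 2 by ring]
      rw [integral_rpow (Or.inl (by linarith))]
      rw [Real.zero_rpow (by intro h; linarith), show -b + 1 = 1 - b by ring]
      ring
    have hpiece2 : (∫ s in (t / 2)..t, g s)
        ≤ 2 ^ d / (1 - b) * (1 + t) ^ (1 - b - d) := by
      have hq2a := stmt10_half hd0 ht (d := d) (t := t)
      have hq2b : (t / 2) ^ (1 - b) ≤ (1 + t) ^ (1 - b) :=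
        Real.rpow_le_rpow ht2 (by linarith) (by linarith)
      have hn1 : (0:ℝ) ≤ (1 + t / 2) ^ (-d) := Real.rpow_nonneg (by linarith) _
      calc (∫ s in (t / 2)..t, g s)
          ≤ (1 + t / 2) ^ (-d) * ((t / 2) ^ (1 - b) / (1 - b)) := by
            rw [← hval2]; exact hp2
        _ ≤ (2 ^ d * (1 + t) ^ (-d)) * ((1 + t) ^ (1 - b) / (1 - b)) := by
            apply mul_le_mul hq2a _ _ _
            · gcongr
            · apply div_nonneg (Real.rpow_nonneg ht2 _) (by linarith)
            · positivity
        _ = 2 ^ d / (1 - b) * (1 + t) ^ (1 - b - d) := by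
            rw [show (1:ℝ) - b - d = -d + (1 - b) by ring,
              Real.rpow_add (by linarith : (0:ℝ) < 1 + t)]
            ring
    rw [hsplit]
    nlinarith [mul_pos hE hX]

/-- Convolution estimate: for `a, c ≥ 0`, `0 ≤ b < 1`, `0 ≤ d < 1`, `b + d > 1`
there is `C > 0` with
`∫₀ᵗ log^a(2+(t−s))·(t−s)^{−b}·log^c(2+s)·(1+s)^{−d} ds ≤ C·log^{a+c}(2+t)·(1+t)^{1−b−d}`
for all `t ≥ 0`. -/
theorem stmt_10 (a b c d : ℝ) (ha : 0 ≤ a) (hc : 0 ≤ c) (hb0 : 0 ≤ b) (hb1 : b < 1)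
    (hd0 : 0 ≤ d) (hd1 : d < 1) (hbd : 1 < b + d) :
    ∃ C > 0, ∀ t : ℝ, 0 ≤ t →
      (∫ s in (0:ℝ)..t,
          Real.log (2 + (t - s)) ^ a * (t - s) ^ (-b)
            * Real.log (2 + s) ^ c * (1 + s) ^ (-d))
        ≤ C * Real.log (2 + t) ^ (a + c) * (1 + t) ^ (1 - b - d) := by
  refine ⟨4 ^ b / (1 - d) + 2 ^ d / (1 - b) + 2 ^ (b + d) / (1 - b),
    add_pos (add_pos (div_pos (Real.rpow_pos_of_pos (by norm_num) _) (by linarith))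
      (div_pos (Real.rpow_pos_of_pos (by norm_num) _) (by linarith)))
      (div_pos (Real.rpow_pos_of_pos (by norm_num) _) (by linarith)), ?_⟩
  intro t ht
  set C₀ : ℝ := 4 ^ b / (1 - d) + 2 ^ d / (1 - b) + 2 ^ (b + d) / (1 - b) with hC₀
  set g : ℝ → ℝ := fun s => (t - s) ^ (-b) * (1 + s) ^ (-d) with hgdef
  set f : ℝ → ℝ := fun s => Real.log (2 + (t - s)) ^ a * (t - s) ^ (-b)
    * Real.log (2 + s) ^ c * (1 + s) ^ (-d) with hfdef
  have hLpos : 0 < Real.log (2 + t) := Real.log_pos (by linarith)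
  set K : ℝ := Real.log (2 + t) ^ (a + c) with hK
  have hKpos : 0 < K := Real.rpow_pos_of_pos hLpos _
  -- pointwise bound on [0, t]
  have hpoint : ∀ x ∈ Set.Icc (0:ℝ) t, f x ≤ K * g x := by
    intro x hx
    have hx1 : 0 ≤ x := hx.1
    have hx2 : x ≤ t := hx.2
    have hL1 : Real.log (2 + (t - x)) ^ a ≤ Real.log (2 + t) ^ a := by
      apply Real.rpow_le_rpow (Real.log_nonneg (by linarith)) _ ha
      apply Real.log_le_log (by linarith)
      linarith
    have hL2 : Real.log (2 + x) ^ c ≤ Real.log (2 + t) ^ c := by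
      apply Real.rpow_le_rpow (Real.log_nonneg (by linarith)) _ hc
      apply Real.log_le_log (by linarith)
      linarith
    have hn1 : (0:ℝ) ≤ (t - x) ^ (-b) := Real.rpow_nonneg (by linarith) _
    have hn2 : (0:ℝ) ≤ (1 + x) ^ (-d) := Real.rpow_nonneg (by linarith) _
    have hLn1 : (0:ℝ) ≤ Real.log (2 + (t - x)) ^ a :=
      Real.rpow_nonneg (Real.log_nonneg (by linarith)) _
    have hLn2 : (0:ℝ) ≤ Real.log (2 + x) ^ c :=
      Real.rpow_nonneg (Real.log_nonneg (by linarith)) _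
    have hLt1 : (0:ℝ) ≤ Real.log (2 + t) ^ a := Real.rpow_nonneg hLpos.le _
    calc f x = (Real.log (2 + (t - x)) ^ a * Real.log (2 + x) ^ c)
          * ((t - x) ^ (-b) * (1 + x) ^ (-d)) := by rw [hfdef]; ring
      _ ≤ (Real.log (2 + t) ^ a * Real.log (2 + t) ^ c)
          * ((t - x) ^ (-b) * (1 + x) ^ (-d)) := by
          apply mul_le_mul_of_nonneg_right _ (by positivity)
          exact mul_le_mul hL1 hL2 hLn2 hLt1
      _ = K * g x := by
          rw [hK, Real.rpow_add hLpos]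
  -- integrability
  have hm1 : Measurable fun s : ℝ => Real.log (2 + (t - s)) :=
    Real.measurable_log.comp (by fun_prop)
  have hm2 : Measurable fun s : ℝ => Real.log (2 + s) :=
    Real.measurable_log.comp (by fun_prop)
  have hfmeas : Measurable f := by rw [hfdef]; fun_prop
  have hgmeas : Measurable g := by fun_prop
  have hg : IntervalIntegrable g volume 0 t := by
    apply (stmt10_intInt_sub_rpow hb1 t 0 t).mono_fun hgmeas.aestronglyMeasurable.restrict
    filter_upwards [ae_restrict_mem measurableSet_uIoc] with x hx
    rw [Set.uIoc_of_le ht] at hx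
    have h1 : (0:ℝ) ≤ t - x := by linarith [hx.2]
    have h2 : (0:ℝ) ≤ (t - x) ^ (-b) := Real.rpow_nonneg h1 _
    have h3 : (0:ℝ) ≤ (1 + x) ^ (-d) := Real.rpow_nonneg (by linarith [hx.1]) _
    have h4 : (1 + x) ^ (-d) ≤ 1 :=
      Real.rpow_le_one_of_one_le_of_nonpos (by linarith [hx.1]) (by linarith)
    rw [Real.norm_of_nonneg (by positivity), Real.norm_of_nonneg h2]
    exact mul_le_of_le_one_right h2 h4
  have hKg : IntervalIntegrable (fun s => K * g s) volume 0 t := hg.const_mul K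
  have hf : IntervalIntegrable f volume 0 t := by
    apply hKg.mono_fun hfmeas.aestronglyMeasurable.restrict
    filter_upwards [ae_restrict_mem measurableSet_uIoc] with x hx
    rw [Set.uIoc_of_le ht] at hx
    have hx' : x ∈ Set.Icc (0:ℝ) t := ⟨hx.1.le, hx.2⟩
    have h1 : (0:ℝ) ≤ t - x := by linarith [hx.2]
    have hfn : (0:ℝ) ≤ f x := by
      rw [hfdef]
      have := Real.rpow_nonneg (Real.log_nonneg (show (1:ℝ) ≤ 2 + (t - x) by linarith)) a
      have := Real.rpow_nonneg h1 (-b)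
      have := Real.rpow_nonneg (Real.log_nonneg (show (1:ℝ) ≤ 2 + x by linarith [hx.1.le])) c
      have := Real.rpow_nonneg (show (0:ℝ) ≤ 1 + x by linarith [hx.1.le]) (-d)
      positivity
    have hgn : (0:ℝ) ≤ g x := by
      rw [hgdef]
      have := Real.rpow_nonneg h1 (-b)
      have := Real.rpow_nonneg (show (0:ℝ) ≤ 1 + x by linarith [hx.1.le]) (-d)
      positivity
    rw [Real.norm_of_nonneg hfn, Real.norm_of_nonneg (by positivity)]
    exact hpoint x hx'
  have hmono : (∫ s in (0:ℝ)..t, f s) ≤ ∫ s in (0:ℝ)..t, K * g s :=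
    intervalIntegral.integral_mono_on ht hf hKg hpoint
  rw [intervalIntegral.integral_const_mul] at hmono
  have hconv := stmt10_power_conv hb0 hb1 hd0 hd1 hbd t ht
  calc (∫ s in (0:ℝ)..t, f s) ≤ K * ∫ s in (0:ℝ)..t, g s := hmono
    _ ≤ K * (C₀ * (1 + t) ^ (1 - b - d)) := by
        exact mul_le_mul_of_nonneg_left hconv hKpos.le
    _ = C₀ * K * (1 + t) ^ (1 - b - d) := by ring
end

section
/- Let 𝓗 be a complex Hilbert space and let U : ℝ → B(𝓗) be a family of bounded linear operators satisfying U(r + r') = U(r) ∘ U(r') and (U(r))* = U(−r) for all r, r' ∈ ℝ. Let s ≤ t be reals, F : [s, t] → 𝓗 continuous, m : ℝ → [0, ∞) integrable on ℝ, and φ : [s, t] → [0, ∞) square-integrable, such that |⟨F(τ), U(τ − τ')F(τ')⟩| ≤ m(τ − τ')·φ(τ)·φ(τ') for all τ, τ' ∈ [s, t]. Then ‖∫_s^t U(t − τ) F(τ) dτ‖² ≤ ‖m‖_{L¹(ℝ)} · ∫_s^t φ(τ)² dτ. -/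
open MeasureTheory
open scoped ENNReal ComplexConjugate

private lemma lint_sub_left_aux (f : ℝ → ℝ≥0∞) (g : ℝ) : ∫⁻ x, f (g - x) = ∫⁻ x, f x :=
  (Measure.measurePreserving_sub_left volume g).lintegral_comp_emb
    (MeasurableEquiv.subLeft g).measurableEmbedding f

/-- For a family `U : ℝ → B(𝓗)` with `U(r+r') = U(r)U(r')` and `U(r)* = U(−r)`,
and `F`, `m`, `φ` as described with `|⟨F(τ), U(τ−τ')F(τ')⟩| ≤ m(τ−τ')φ(τ)φ(τ')`, one has
`‖∫ₛᵗ U(t−τ)F(τ) dτ‖² ≤ ‖m‖_{L¹} ∫ₛᵗ φ(τ)² dτ`. -/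
theorem stmt_12 {𝓗 : Type*} [NormedAddCommGroup 𝓗] [InnerProductSpace ℂ 𝓗] [CompleteSpace 𝓗]
    (U : ℝ → 𝓗 →L[ℂ] 𝓗)
    (hUgroup : ∀ r r' : ℝ, U (r + r') = (U r).comp (U r'))
    (hUadj : ∀ r : ℝ, ContinuousLinearMap.adjoint (U r) = U (-r))
    (s t : ℝ) (hst : s ≤ t)
    (F : ℝ → 𝓗) (hF : ContinuousOn F (Set.Icc s t))
    (m : ℝ → ℝ) (hm0 : ∀ r, 0 ≤ m r) (hm : Integrable m (volume : Measure ℝ))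
    (φ : ℝ → ℝ) (hφ0 : ∀ τ, 0 ≤ φ τ)
    (hφ2 : IntegrableOn (fun τ => φ τ ^ 2) (Set.Icc s t) volume)
    (hbound : ∀ τ ∈ Set.Icc s t, ∀ τ' ∈ Set.Icc s t,
      ‖(inner ℂ (F τ) (U (τ - τ') (F τ')) : ℂ)‖ ≤ m (τ - τ') * φ τ * φ τ') :
    ‖∫ τ in s..t, U (t - τ) (F τ)‖ ^ 2 ≤ (∫ r, m r) * ∫ τ in s..t, φ τ ^ 2 := by
  set I : Set ℝ := Set.Ioc s t with hI
  set g : ℝ → 𝓗 := fun τ => U (t - τ) (F τ) with hg_def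
  have hRHS1 : 0 ≤ ∫ r, m r := integral_nonneg hm0
  have hφInt : IntegrableOn (fun τ => φ τ ^ 2) I volume :=
    hφ2.mono_set Set.Ioc_subset_Icc_self
  have hφint_eq : (∫ τ in s..t, φ τ ^ 2) = ∫ τ in I, φ τ ^ 2 :=
    intervalIntegral.integral_of_le hst
  have hRHS2 : 0 ≤ ∫ τ in s..t, φ τ ^ 2 := by
    rw [hφint_eq]
    exact setIntegral_nonneg measurableSet_Ioc fun τ _ => sq_nonneg _
  by_cases hgi : IntegrableOn g I volume
  swap
  · rw [intervalIntegral.integral_undef]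
    · simpa using mul_nonneg hRHS1 hRHS2
    · rw [intervalIntegrable_iff_integrableOn_Ioc_of_le hst]; exact hgi
  -- the integrable case
  have hgg : ∀ τ τ', (inner ℂ (g τ) (g τ') : ℂ) = inner ℂ (F τ) (U (τ - τ') (F τ')) := by
    intro τ τ'
    have h1 : U (τ - τ') = (U (-(t - τ))).comp (U (t - τ')) := by
      rw [← hUgroup]; ring_nf
    calc (inner ℂ (g τ) (g τ') : ℂ)
        = inner ℂ (F τ) ((ContinuousLinearMap.adjoint (U (t - τ))) (U (t - τ') (F τ'))) :=
          (ContinuousLinearMap.adjoint_inner_right _ _ _).symm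
      _ = inner ℂ (F τ) (U (τ - τ') (F τ')) := by
          rw [hUadj, h1]; rfl
  rw [intervalIntegral.integral_of_le hst]
  set v : 𝓗 := ∫ τ in I, g τ with hv_def
  -- Step 1: from the norm of v to a double lintegral
  have h2 : (inner ℂ v v : ℂ) = ∫ τ in I, (inner ℂ (g τ) v : ℂ) := by
    calc (inner ℂ v v : ℂ) = conj (inner ℂ v v : ℂ) := (inner_conj_symm v v).symm
      _ = conj (∫ τ in I, (inner ℂ v (g τ) : ℂ)) := by rw [integral_inner hgi v]
      _ = ∫ τ in I, conj (inner ℂ v (g τ) : ℂ) := integral_conj.symm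
      _ = ∫ τ in I, (inner ℂ (g τ) v : ℂ) := by
          refine integral_congr_ae (Filter.Eventually.of_forall fun τ => ?_)
          exact inner_conj_symm _ _
  have h3 : ∀ τ, (‖(inner ℂ (g τ) v : ℂ)‖₊ : ℝ≥0∞) ≤ ∫⁻ τ' in I, ‖(inner ℂ (g τ) (g τ') : ℂ)‖₊ := by
    intro τ
    rw [show (inner ℂ (g τ) v : ℂ) = ∫ τ' in I, (inner ℂ (g τ) (g τ') : ℂ) from
      (integral_inner hgi (g τ)).symm]
    exact enorm_integral_le_lintegral_enorm _
  have step1 : (‖(inner ℂ v v : ℂ)‖₊ : ℝ≥0∞) ≤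
      ∫⁻ τ in I, ∫⁻ τ' in I, ‖(inner ℂ (g τ) (g τ') : ℂ)‖₊ := by
    rw [h2]
    exact le_trans (enorm_integral_le_lintegral_enorm _) (lintegral_mono h3)
  -- Step 2: bound the inner products
  have hb : ∀ τ ∈ I, ∀ τ' ∈ I, (‖(inner ℂ (g τ) (g τ') : ℂ)‖₊ : ℝ≥0∞) ≤
      ENNReal.ofReal (m (τ - τ') * φ τ * φ τ') := by
    intro τ hτ τ' hτ'
    rw [hgg, ← enorm_eq_nnnorm, ← ofReal_norm]
    exact ENNReal.ofReal_le_ofReal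
      (hbound τ (Set.Ioc_subset_Icc_self hτ) τ' (Set.Ioc_subset_Icc_self hτ'))
  have step2 : (∫⁻ τ in I, ∫⁻ τ' in I, ‖(inner ℂ (g τ) (g τ') : ℂ)‖₊) ≤
      ∫⁻ τ in I, ∫⁻ τ' in I, ENNReal.ofReal (m (τ - τ') * φ τ * φ τ') := by
    refine lintegral_mono_ae ((ae_restrict_iff' measurableSet_Ioc).2
      (Filter.Eventually.of_forall fun τ hτ => ?_))
    refine lintegral_mono_ae ((ae_restrict_iff' measurableSet_Ioc).2
      (Filter.Eventually.of_forall fun τ' hτ' => hb τ hτ τ' hτ'))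
  -- measurability preliminaries
  set μ : Measure ℝ := volume.restrict I with hμ
  have hμle : μ ≤ (volume : Measure ℝ) := Measure.restrict_le_self
  have hmae : AEMeasurable m (volume : Measure ℝ) := hm.aestronglyMeasurable.aemeasurable
  have hφae : AEMeasurable φ μ := by
    have h1 : AEMeasurable (fun τ => φ τ ^ 2) μ :=
      (hφ2.aestronglyMeasurable.aemeasurable).mono_measure
        (Measure.restrict_mono Set.Ioc_subset_Icc_self le_rfl)
    have h2 : AEMeasurable (fun τ => Real.sqrt (φ τ ^ 2)) μ :=
      Real.continuous_sqrt.measurable.comp_aemeasurable h1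
    exact h2.congr (Filter.Eventually.of_forall fun τ => Real.sqrt_sq (hφ0 τ))
  have hple : μ.prod μ ≤ (volume : Measure ℝ).prod volume := by
    rw [hμ, Measure.prod_restrict]; exact Measure.restrict_le_self
  have hmsub : AEMeasurable (fun p : ℝ × ℝ => m (p.1 - p.2)) (μ.prod μ) :=
    (hmae.comp_quasiMeasurePreserving
      (quasiMeasurePreserving_sub volume volume)).mono_measure hple
  have hφ1 : AEMeasurable (fun p : ℝ × ℝ => φ p.1) (μ.prod μ) :=
    hφae.comp_quasiMeasurePreserving Measure.quasiMeasurePreserving_fst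
  have hφsnd : AEMeasurable (fun p : ℝ × ℝ => φ p.2) (μ.prod μ) :=
    hφae.comp_quasiMeasurePreserving Measure.quasiMeasurePreserving_snd
  have hHae : AEMeasurable (fun p : ℝ × ℝ => ENNReal.ofReal (m (p.1 - p.2) * φ p.1 * φ p.2))
      (μ.prod μ) :=
    ENNReal.measurable_ofReal.comp_aemeasurable ((hmsub.mul hφ1).mul hφsnd)
  have hf1ae : AEMeasurable (fun p : ℝ × ℝ => ENNReal.ofReal (m (p.1 - p.2) * φ p.1 ^ 2))
      (μ.prod μ) :=
    ENNReal.measurable_ofReal.comp_aemeasurable (hmsub.mul (hφ1.pow aemeasurable_const))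
  have hf2ae : AEMeasurable (fun p : ℝ × ℝ => ENNReal.ofReal (m (p.1 - p.2) * φ p.2 ^ 2))
      (μ.prod μ) :=
    ENNReal.measurable_ofReal.comp_aemeasurable (hmsub.mul (hφsnd.pow aemeasurable_const))
  -- the key Young-type bound
  set M : ℝ≥0∞ := ∫⁻ r, ENNReal.ofReal (m r) with hM
  set Φ : ℝ≥0∞ := ∫⁻ τ in I, ENNReal.ofReal (φ τ ^ 2) with hΦ
  have hMeq : ENNReal.ofReal (∫ r, m r) = M :=
    ofReal_integral_eq_lintegral_ofReal hm (Filter.Eventually.of_forall hm0)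
  have hΦeq : ENNReal.ofReal (∫ τ in I, φ τ ^ 2) = Φ :=
    ofReal_integral_eq_lintegral_ofReal hφInt (Filter.Eventually.of_forall fun τ => sq_nonneg _)
  have hMne : M ≠ ⊤ := by rw [← hMeq]; exact ENNReal.ofReal_ne_top
  have hmIb : ∀ τ : ℝ, (∫⁻ τ' in I, ENNReal.ofReal (m (τ - τ'))) ≤ M := by
    intro τ
    refine le_trans (setLIntegral_le_lintegral _ _) ?_
    rw [hM, lint_sub_left_aux (fun r => ENNReal.ofReal (m r)) τ]
  have hmIb' : ∀ τ' : ℝ, (∫⁻ τ in I, ENNReal.ofReal (m (τ - τ'))) ≤ M := by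
    intro τ'
    refine le_trans (setLIntegral_le_lintegral _ _) ?_
    rw [hM, lintegral_sub_right_eq_self (fun r => ENNReal.ofReal (m r)) τ']
  have hpiece1 : (∫⁻ p, ENNReal.ofReal (m (p.1 - p.2) * φ p.1 ^ 2) ∂μ.prod μ) ≤ M * Φ := by
    rw [lintegral_prod _ hf1ae]
    calc (∫⁻ τ, ∫⁻ τ', ENNReal.ofReal (m (τ - τ') * φ τ ^ 2) ∂μ ∂μ)
        ≤ ∫⁻ τ, M * ENNReal.ofReal (φ τ ^ 2) ∂μ := by
          refine lintegral_mono fun τ => ?_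
          calc (∫⁻ τ', ENNReal.ofReal (m (τ - τ') * φ τ ^ 2) ∂μ)
              = ∫⁻ τ', ENNReal.ofReal (m (τ - τ')) * ENNReal.ofReal (φ τ ^ 2) ∂μ := by
                simp_rw [ENNReal.ofReal_mul (hm0 _)]
            _ = (∫⁻ τ', ENNReal.ofReal (m (τ - τ')) ∂μ) * ENNReal.ofReal (φ τ ^ 2) :=
                lintegral_mul_const' _ _ ENNReal.ofReal_ne_top
            _ ≤ M * ENNReal.ofReal (φ τ ^ 2) :=
                mul_le_mul_left (hmIb τ) _
      _ = M * Φ := lintegral_const_mul' _ _ hMne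
  have hpiece2 : (∫⁻ p, ENNReal.ofReal (m (p.1 - p.2) * φ p.2 ^ 2) ∂μ.prod μ) ≤ M * Φ := by
    rw [lintegral_prod_symm _ hf2ae]
    calc (∫⁻ τ', ∫⁻ τ, ENNReal.ofReal (m (τ - τ') * φ τ' ^ 2) ∂μ ∂μ)
        ≤ ∫⁻ τ', M * ENNReal.ofReal (φ τ' ^ 2) ∂μ := by
          refine lintegral_mono fun τ' => ?_
          calc (∫⁻ τ, ENNReal.ofReal (m (τ - τ') * φ τ' ^ 2) ∂μ)
              = ∫⁻ τ, ENNReal.ofReal (m (τ - τ')) * ENNReal.ofReal (φ τ' ^ 2) ∂μ := by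
                simp_rw [ENNReal.ofReal_mul (hm0 _)]
            _ = (∫⁻ τ, ENNReal.ofReal (m (τ - τ')) ∂μ) * ENNReal.ofReal (φ τ' ^ 2) :=
                lintegral_mul_const' _ _ ENNReal.ofReal_ne_top
            _ ≤ M * ENNReal.ofReal (φ τ' ^ 2) :=
                mul_le_mul_left (hmIb' τ') _
      _ = M * Φ := lintegral_const_mul' _ _ hMne
  have hdouble : (∫⁻ τ in I, ∫⁻ τ' in I, ENNReal.ofReal (m (τ - τ') * φ τ * φ τ')) ≤ M * Φ := by
    rw [← lintegral_prod _ hHae]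
    have h2le : (2 : ℝ≥0∞) * (∫⁻ p, ENNReal.ofReal (m (p.1 - p.2) * φ p.1 * φ p.2) ∂μ.prod μ)
        ≤ 2 * (M * Φ) := by
      rw [← lintegral_const_mul' _ _ (by norm_num : (2 : ℝ≥0∞) ≠ ⊤)]
      calc (∫⁻ p, 2 * ENNReal.ofReal (m (p.1 - p.2) * φ p.1 * φ p.2) ∂μ.prod μ)
          ≤ ∫⁻ p, (ENNReal.ofReal (m (p.1 - p.2) * φ p.1 ^ 2)
              + ENNReal.ofReal (m (p.1 - p.2) * φ p.2 ^ 2)) ∂μ.prod μ := by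
            refine lintegral_mono fun p => ?_
            have hre : 2 * (m (p.1 - p.2) * φ p.1 * φ p.2)
                ≤ m (p.1 - p.2) * φ p.1 ^ 2 + m (p.1 - p.2) * φ p.2 ^ 2 := by
              nlinarith [mul_le_mul_of_nonneg_left (two_mul_le_add_sq (φ p.1) (φ p.2))
                (hm0 (p.1 - p.2))]
            calc (2 : ℝ≥0∞) * ENNReal.ofReal (m (p.1 - p.2) * φ p.1 * φ p.2)
                = ENNReal.ofReal (2 * (m (p.1 - p.2) * φ p.1 * φ p.2)) := by
                  rw [ENNReal.ofReal_mul (by norm_num : (0:ℝ) ≤ 2)]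
                  norm_num
              _ ≤ ENNReal.ofReal (m (p.1 - p.2) * φ p.1 ^ 2 + m (p.1 - p.2) * φ p.2 ^ 2) :=
                  ENNReal.ofReal_le_ofReal hre
              _ = ENNReal.ofReal (m (p.1 - p.2) * φ p.1 ^ 2)
                  + ENNReal.ofReal (m (p.1 - p.2) * φ p.2 ^ 2) :=
                  ENNReal.ofReal_add (mul_nonneg (hm0 _) (sq_nonneg _))
                    (mul_nonneg (hm0 _) (sq_nonneg _))
        _ = (∫⁻ p, ENNReal.ofReal (m (p.1 - p.2) * φ p.1 ^ 2) ∂μ.prod μ)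
            + ∫⁻ p, ENNReal.ofReal (m (p.1 - p.2) * φ p.2 ^ 2) ∂μ.prod μ :=
            lintegral_add_left' hf1ae _
        _ ≤ M * Φ + M * Φ := add_le_add hpiece1 hpiece2
        _ = 2 * (M * Φ) := (two_mul _).symm
    exact (ENNReal.mul_le_mul_iff_right (by norm_num) (by norm_num)).mp h2le
  -- assemble
  have hfinal : (‖(inner ℂ v v : ℂ)‖₊ : ℝ≥0∞) ≤
      ENNReal.ofReal ((∫ r, m r) * ∫ τ in I, φ τ ^ 2) := by
    rw [ENNReal.ofReal_mul hRHS1, hMeq, hΦeq]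
    exact le_trans step1 (le_trans step2 hdouble)
  have hnormsq : ‖v‖ ^ 2 ≤ ‖(inner ℂ v v : ℂ)‖ := by
    rw [← inner_self_eq_norm_sq (𝕜 := ℂ) v]
    exact RCLike.re_le_norm _
  calc ‖v‖ ^ 2 ≤ ‖(inner ℂ v v : ℂ)‖ := hnormsq
    _ = ((‖(inner ℂ v v : ℂ)‖₊ : ℝ≥0∞)).toReal := by simp
    _ ≤ (ENNReal.ofReal ((∫ r, m r) * ∫ τ in I, φ τ ^ 2)).toReal :=
        ENNReal.toReal_mono ENNReal.ofReal_ne_top hfinal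
    _ = (∫ r, m r) * ∫ τ in I, φ τ ^ 2 :=
        ENNReal.toReal_ofReal (mul_nonneg hRHS1 (hφint_eq ▸ hRHS2))
    _ = (∫ r, m r) * ∫ τ in s..t, φ τ ^ 2 := by rw [hφint_eq]
end
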